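/- arXiv:2308.05442 — 3 statements merged into one kernel-verified Lean document; each statement's English description precedes it below -/
import Mathlib

section
/- Let G be a (P3 ∪ P2, house)-free graph such that every proper induced subgraph G' of G satisfies χ(G') ≤ 2ω(G'), while χ(G) > 2ω(G), and suppose v1, v2, v3, v4 induce a 2K2 in G with edges v1v2 and v3v4. Let S ⊆ {1,2,3,4} with |S| = 3. If G[N_S] contains an induced subgraph isomorphic to P2 ∪ P1 (an edge plus an isolated vertex), then G[N_S] is a good subgraph of G. -/
open SimpleGraph

/-- The disjoint union of a path on 3 vertices and a path on 2 vertices,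
with edges `01`, `12` and `34`. -/
def P3uP2 : SimpleGraph (Fin 5) :=
  SimpleGraph.fromEdgeSet {s(0, 1), s(1, 2), s(3, 4)}

/-- The house graph: the complement of the path on 5 vertices. -/
def house : SimpleGraph (Fin 5) := (SimpleGraph.pathGraph 5)ᶜ

/-- `G` has no induced subgraph isomorphic to `H`. -/
def IsInducedFree {V : Type*} {W : Type*} (G : SimpleGraph V) (H : SimpleGraph W) : Prop :=
  IsEmpty (H ↪g G)

/-- The four distinct vertices `v 0, v 1, v 2, v 3` induce a `2K₂` in `G`,
with edges `v 0 — v 1` and `v 2 — v 3` (here `v 0, v 1, v 2, v 3` play the roles of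
`v₁, v₂, v₃, v₄`). -/
def Induces2K2 {V : Type*} (G : SimpleGraph V) (v : Fin 4 → V) : Prop :=
  Function.Injective v ∧ G.Adj (v 0) (v 1) ∧ G.Adj (v 2) (v 3) ∧
  ¬ G.Adj (v 0) (v 2) ∧ ¬ G.Adj (v 0) (v 3) ∧ ¬ G.Adj (v 1) (v 2) ∧ ¬ G.Adj (v 1) (v 3)

/-- `NS G v S` is the set of vertices outside `{v 0, v 1, v 2, v 3}` that are adjacent
to `v i` exactly for the indices `i ∈ S`. -/
def NS {V : Type*} (G : SimpleGraph V) (v : Fin 4 → V) (S : Finset (Fin 4)) : Set V :=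
  {u | (∀ i, u ≠ v i) ∧ ∀ i, G.Adj u (v i) ↔ i ∈ S}

/-- `X` is anticomplete to `Y`: there is no edge between `X` and `Y`. -/
def Anticomplete {V : Type*} (G : SimpleGraph V) (X Y : Set V) : Prop :=
  ∀ x ∈ X, ∀ y ∈ Y, ¬ G.Adj x y

/-- `X` is complete to `Y`: every vertex of `X` is adjacent to every vertex of `Y`. -/
def CompleteTo {V : Type*} (G : SimpleGraph V) (X Y : Set V) : Prop :=
  ∀ x ∈ X, ∀ y ∈ Y, G.Adj x y

/-- The vertex set `H` induces a *good subgraph* of `G`: the induced subgraph `G[H]`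
satisfies `χ(G[H]) ≤ ω(G[H])`, and with `I` the set of vertices outside `H` with no
neighbor in `H` and `T` the set of vertices outside `H` having both a neighbor and a
non-neighbor in `H`, we have `χ(G[I]) ≤ χ(G[H])` and `χ(G[T]) ≤ χ(G[H])`. -/
def IsGoodSubgraph {V : Type*} (G : SimpleGraph V) (H : Set V) : Prop :=
  (G.induce H).chromaticNumber ≤ ((G.induce H).cliqueNum : ℕ∞) ∧
  (G.induce {u | u ∉ H ∧ ∀ h ∈ H, ¬ G.Adj u h}).chromaticNumber ≤
    (G.induce H).chromaticNumber ∧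
  (G.induce {u | u ∉ H ∧ (∃ h ∈ H, G.Adj u h) ∧ ∃ h ∈ H, ¬ G.Adj u h}).chromaticNumber ≤
    (G.induce H).chromaticNumber

/-- The disjoint union of an edge and a single vertex. -/
def P2uP1 : SimpleGraph (Fin 3) := SimpleGraph.fromEdgeSet {s(0, 1)}


section Abs
variable {V : Type*} {G : SimpleGraph V}

lemma absP32 (h1 : IsInducedFree G P3uP2)
    {a b c d e : V}
    (hab : G.Adj a b) (hbc : G.Adj b c) (hde : G.Adj d e)
    (hac : ¬ G.Adj a c) (had : ¬ G.Adj a d) (hae : ¬ G.Adj a e)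
    (hbd : ¬ G.Adj b d) (hbe : ¬ G.Adj b e) (hcd : ¬ G.Adj c d) (hce : ¬ G.Adj c e)
    (nac : a ≠ c) (nad : a ≠ d) (nae : a ≠ e)
    (nbd : b ≠ d) (nbe : b ≠ e) (ncd : c ≠ d) (nce : c ≠ e) : False := by
  have nab := hab.ne; have nbc := hbc.ne; have nde := hde.ne
  refine h1.false (⟨⟨![a,b,c,d,e], ?_⟩, ?_⟩ : P3uP2 ↪g G)
  · intro i j hij
    fin_cases i <;> fin_cases j <;> simp_all
  · intro i j
    show G.Adj (![a,b,c,d,e] i) (![a,b,c,d,e] j) ↔ _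
    fin_cases i <;> fin_cases j <;>
      simp [P3uP2, G.adj_comm, hab, hbc, hde, hac, had, hae, hbd, hbe, hcd, hce]

lemma absHouse (h2 : IsInducedFree G house)
    {a b c d e : V}
    (hac : G.Adj a c) (had : G.Adj a d) (hae : G.Adj a e)
    (hbd : G.Adj b d) (hbe : G.Adj b e) (hce : G.Adj c e)
    (nab : ¬ G.Adj a b) (nbc : ¬ G.Adj b c) (ncd : ¬ G.Adj c d) (nde : ¬ G.Adj d e)
    (dab : a ≠ b) (dbc : b ≠ c) (dcd : c ≠ d) (dde : d ≠ e) : False := by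
  have e1 := hac.ne; have e2 := had.ne; have e3 := hae.ne
  have e4 := hbd.ne; have e5 := hbe.ne; have e6 := hce.ne
  refine h2.false (⟨⟨![a,b,c,d,e], ?_⟩, ?_⟩ : house ↪g G)
  · intro i j hij
    fin_cases i <;> fin_cases j <;> simp_all
  · intro i j
    show G.Adj (![a,b,c,d,e] i) (![a,b,c,d,e] j) ↔ _
    fin_cases i <;> fin_cases j <;>
      simp_all [house, pathGraph_adj, G.adj_comm] <;> decide

end Abs

section Infra
variable {W : Type*} [Fintype W] (F : SimpleGraph W)

lemma cluster_chrom
    (hP3 : ∀ a b c : W, F.Adj a b → F.Adj b c → a ≠ c → F.Adj a c) :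
    F.chromaticNumber ≤ (F.cliqueNum : ℕ∞) := by
  classical
  set ι := Fintype.equivFin W with hι
  set N : W → Finset W := fun w => insert w (Finset.univ.filter (fun u => F.Adj w u)) with hN
  have hmemN : ∀ w u, u ∈ N w ↔ (u = w ∨ F.Adj w u) := by
    intro w u; simp [hN]
  have hNcl : ∀ w : W, F.IsClique (N w : Finset W) := by
    intro w a ha b hb hne
    rw [Finset.mem_coe, hmemN] at ha hb
    rcases ha with rfl|ha
    · rcases hb with rfl|hb
      · exact absurd rfl hne
      · exact hb
    · rcases hb with rfl|hb
      · exact ha.symm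
      · exact hP3 a w b ha.symm hb hne
  have hcard : ∀ w, (N w).card ≤ F.cliqueNum := fun w =>
    IsClique.card_le_cliqueNum (tc := hNcl w)
  set col : W → ℕ := fun w => ((N w).filter (fun u => ι u < ι w)).card with hcol
  have hlt : ∀ w, col w < F.cliqueNum := by
    intro w
    have h1 : (N w).filter (fun u => ι u < ι w) ⊆ (N w).erase w := by
      intro u hu
      rw [Finset.mem_filter] at hu
      exact Finset.mem_erase.mpr ⟨fun e => by simp [e] at hu, hu.1⟩
    calc col w ≤ ((N w).erase w).card := Finset.card_le_card h1
      _ < (N w).card := Finset.card_erase_lt_of_mem (by rw [hmemN]; exact Or.inl rfl)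
      _ ≤ F.cliqueNum := hcard w
  have hNeq : ∀ a b, F.Adj a b → N a = N b := by
    intro a b hab
    ext u
    rw [hmemN, hmemN]
    constructor
    · rintro (rfl|h)
      · exact Or.inr hab.symm
      · by_cases e : u = b
        · exact Or.inl e
        · exact Or.inr (hP3 b a u hab.symm h (Ne.symm e))
    · rintro (rfl|h)
      · exact Or.inr hab
      · by_cases e : u = a
        · exact Or.inl e
        · exact Or.inr (hP3 a b u hab h (Ne.symm e))
  have key : ∀ a b, F.Adj a b → ι a < ι b → col a < col b := by
    intro a b hab hlt'
    have hsub : (N a).filter (fun u => ι u < ι a) ⊆ (N b).filter (fun u => ι u < ι b) := by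
      rw [← hNeq a b hab]
      exact Finset.monotone_filter_right _ (fun u _ hu => hu.trans hlt')
    have hamem : a ∈ (N b).filter (fun u => ι u < ι b) := by
      rw [Finset.mem_filter, hmemN]; exact ⟨Or.inr hab.symm, hlt'⟩
    have hanot : a ∉ (N a).filter (fun u => ι u < ι a) := by
      rw [Finset.mem_filter]; rintro ⟨-, h⟩; exact lt_irrefl _ h
    exact Finset.card_lt_card ⟨hsub, fun hsub' => hanot (hsub' hamem)⟩
  have proper : ∀ a b, F.Adj a b → col a ≠ col b := by
    intro a b hab
    rcases lt_trichotomy (ι a) (ι b) with h|h|h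
    · exact Nat.ne_of_lt (key a b hab h)
    · exact absurd (ι.injective h) hab.ne
    · exact Nat.ne_of_gt (key b a hab.symm h)
  exact Colorable.chromaticNumber_le ⟨Coloring.mk (fun w => (⟨col w, hlt w⟩ : Fin F.cliqueNum))
    (fun {v w} hvw => by simpa [Fin.ext_iff] using proper v w hvw)⟩

lemma matching_colorable
    (hdeg : ∀ a b c : W, F.Adj a b → F.Adj a c → b = c) : F.Colorable 2 := by
  classical
  set ι := Fintype.equivFin W with hι
  refine ⟨Coloring.mk (fun w => if ∃ u, F.Adj w u ∧ ι u < ι w then (1 : Fin 2) else 0) ?_⟩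
  intro a b hab hcc
  rcases lt_trichotomy (ι a) (ι b) with hlt|heq|hgt
  · have h0 : ¬ ∃ u, F.Adj a u ∧ ι u < ι a := by
      rintro ⟨u, hau, hu⟩
      rw [hdeg a u b hau hab] at hu
      exact absurd hu (not_lt.mpr hlt.le)
    rw [if_neg h0, if_pos ⟨a, hab.symm, hlt⟩] at hcc
    exact absurd hcc (by decide)
  · exact hab.ne (ι.injective heq)
  · have h0 : ¬ ∃ u, F.Adj b u ∧ ι u < ι b := by
      rintro ⟨u, hbu, hu⟩
      rw [hdeg b u a hbu hab.symm] at hu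
      exact absurd hu (not_lt.mpr hgt.le)
    rw [if_pos ⟨b, hab, hgt⟩, if_neg h0] at hcc
    exact absurd hcc (by decide)

end Infra

lemma two_le_chrom {W : Type*} (F : SimpleGraph W) {a b : W} (hab : F.Adj a b) :
    2 ≤ F.chromaticNumber := by
  by_contra hcon
  rw [not_le] at hcon
  have h2 : F.chromaticNumber ≠ ⊤ := fun e => by rw [e] at hcon; exact (not_top_lt hcon)
  have hcol : F.Colorable 1 := by
    rw [← chromaticNumber_le_iff_colorable]
    lift F.chromaticNumber to ℕ using h2 with n hn
    have : n < 2 := by exact_mod_cast hcon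
    exact_mod_cast Nat.le_of_lt_succ this
  obtain ⟨c⟩ := hcol
  exact c.valid hab (Subsingleton.elim _ _)

lemma cliqueNum_induce_le {V : Type*} [Fintype V] (G : SimpleGraph V) (s : Set V) :
    (G.induce s).cliqueNum ≤ G.cliqueNum := by
  classical
  haveI : Fintype ↥s := Fintype.ofFinite _
  obtain ⟨F, hF⟩ := (G.induce s).exists_isNClique_cliqueNum
  have himg : G.IsClique (F.image (Subtype.val) : Finset V) := by
    intro a ha b hb hne
    rw [Finset.coe_image] at ha hb
    obtain ⟨a', ha', rfl⟩ := ha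
    obtain ⟨b', hb', rfl⟩ := hb
    have hne' : a' ≠ b' := fun e => hne (by rw [e])
    exact hF.1 ha' hb' hne'
  have hcard : (F.image Subtype.val).card = (G.induce s).cliqueNum := by
    rw [Finset.card_image_of_injective _ Subtype.val_injective, hF.2]
  calc (G.induce s).cliqueNum = (F.image Subtype.val).card := hcard.symm
    _ ≤ G.cliqueNum := IsClique.card_le_cliqueNum (tc := himg)

lemma dom_false {V : Type*} [Fintype V] (G : SimpleGraph V)
    (hmin : ∀ s : Set V, s ≠ Set.univ →
      (G.induce s).chromaticNumber ≤ 2 * ((G.induce s).cliqueNum : ℕ∞))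
    (hG : 2 * (G.cliqueNum : ℕ∞) < G.chromaticNumber)
    (z j : V) (hzj : z ≠ j)
    (hdom : ∀ w, G.Adj j w → G.Adj z w) : False := by
  classical
  set s : Set V := {w | w ≠ j} with hs
  have hsne : s ≠ Set.univ := by
    intro h
    have : j ∈ s := h ▸ Set.mem_univ j
    exact this rfl
  have hω := cliqueNum_induce_le G s
  have hcol1 : (G.induce s).Colorable (2 * G.cliqueNum) := by
    rw [← chromaticNumber_le_iff_colorable]
    calc (G.induce s).chromaticNumber ≤ 2 * ((G.induce s).cliqueNum : ℕ∞) := hmin s hsne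
      _ ≤ ((2 * G.cliqueNum : ℕ) : ℕ∞) := by
          push_cast
          exact mul_le_mul_right (by exact_mod_cast hω) 2
  obtain ⟨c⟩ := hcol1
  have hzs : z ∈ s := hzj
  have hGcol : G.Colorable (2 * G.cliqueNum) := by
    refine ⟨Coloring.mk (fun w => if h : w = j then c ⟨z, hzs⟩ else c ⟨w, h⟩) ?_⟩
    intro a b hab hcc
    by_cases haj : a = j
    · have hbj : b ≠ j := by
        intro e
        rw [haj, e] at hab
        exact G.loopless.irrefl _ hab
      rw [dif_pos haj, dif_neg hbj] at hcc
      have hzb : G.Adj z b := hdom b (by rwa [haj] at hab)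
      exact c.valid (show (G.induce s).Adj ⟨z, hzs⟩ ⟨b, hbj⟩ from hzb) hcc
    · by_cases hbj : b = j
      · rw [dif_neg haj, dif_pos hbj] at hcc
        have hza : G.Adj z a := hdom a (by rw [hbj] at hab; exact hab.symm)
        exact c.valid (show (G.induce s).Adj ⟨z, hzs⟩ ⟨a, haj⟩ from hza) hcc.symm
      · rw [dif_neg haj, dif_neg hbj] at hcc
        exact c.valid (show (G.induce s).Adj ⟨a, haj⟩ ⟨b, hbj⟩ from hab) hcc
  have hle := hGcol.chromaticNumber_le
  have hfin : G.chromaticNumber ≤ 2 * (G.cliqueNum : ℕ∞) := by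
    calc G.chromaticNumber ≤ ((2 * G.cliqueNum : ℕ) : ℕ∞) := hle
      _ = 2 * (G.cliqueNum : ℕ∞) := by push_cast; ring
  exact absurd hfin (not_le.mpr hG)

lemma NS_mem_char {V : Type*} (G : SimpleGraph V) (v : Fin 4 → V) (S : Finset (Fin 4))
    (i0 : Fin 4) (hmem : ∀ m : Fin 4, m ∈ S ↔ m ≠ i0)
    (a b c : Fin 4) (ha : a ≠ i0) (hb : b ≠ i0) (hc : c ≠ i0)
    (hall : ∀ i : Fin 4, i = a ∨ i = b ∨ i = c ∨ i = i0) :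
    ∀ u, u ∈ NS G v S ↔ ((u ≠ v a ∧ u ≠ v b ∧ u ≠ v c ∧ u ≠ v i0) ∧
      (G.Adj u (v a) ∧ G.Adj u (v b) ∧ G.Adj u (v c) ∧ ¬G.Adj u (v i0))) := by
  intro u
  constructor
  · rintro ⟨hne, hadj⟩
    exact ⟨⟨hne a, hne b, hne c, hne i0⟩, (hadj a).mpr ((hmem a).mpr ha),
      (hadj b).mpr ((hmem b).mpr hb), (hadj c).mpr ((hmem c).mpr hc),
      fun h => ((hmem i0).mp ((hadj i0).mp h)) rfl⟩
  · rintro ⟨⟨n1, n2, n3, n4⟩, a1, a2, a3, a4⟩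
    refine ⟨?_, ?_⟩
    · intro i
      rcases hall i with h|h|h|h <;> rw [h]
      exacts [n1, n2, n3, n4]
    · intro i
      rcases hall i with h|h|h|h <;> rw [h]
      · exact iff_of_true a1 ((hmem a).mpr ha)
      · exact iff_of_true a2 ((hmem b).mpr hb)
      · exact iff_of_true a3 ((hmem c).mpr hc)
      · exact iff_of_false a4 (fun hs => ((hmem i0).mp hs) rfl)


lemma master {V : Type*} [Fintype V] (G : SimpleGraph V)
    (h1 : IsInducedFree G P3uP2) (h2 : IsInducedFree G house)
    (hmin : ∀ s : Set V, s ≠ Set.univ →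
      (G.induce s).chromaticNumber ≤ 2 * ((G.induce s).cliqueNum : ℕ∞))
    (hG : 2 * (G.cliqueNum : ℕ∞) < G.chromaticNumber)
    (p q k j : V)
    (apq : G.Adj p q) (akj : G.Adj k j)
    (npk : ¬G.Adj p k) (npj : ¬G.Adj p j) (nqk : ¬G.Adj q k) (nqj : ¬G.Adj q j)
    (dpk : p ≠ k) (dpj : p ≠ j) (dqk : q ≠ k) (dqj : q ≠ j)
    (H : Set V)
    (HH : ∀ u : V, u ∈ H ↔ ((u ≠ p ∧ u ≠ q ∧ u ≠ k ∧ u ≠ j) ∧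
      (G.Adj u p ∧ G.Adj u q ∧ G.Adj u k ∧ ¬G.Adj u j)))
    (x y z : V)
    (hxH : x ∈ H) (hyH : y ∈ H) (hzH : z ∈ H)
    (axy : G.Adj x y) (nxz : ¬G.Adj x z) (nyz : ¬G.Adj y z)
    (dxz : x ≠ z) (dyz : y ≠ z) :
    IsGoodSubgraph G H := by
  classical
  obtain ⟨⟨dxp, dxq, dxk, dxj⟩, axp, axq, axk, nxj⟩ := (HH x).mp hxH
  obtain ⟨⟨dyp, dyq, dyk, dyj⟩, ayp, ayq, ayk, nyj⟩ := (HH y).mp hyH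
  obtain ⟨⟨dzp, dzq, dzk, dzj⟩, azp, azq, azk, nzj⟩ := (HH z).mp hzH
  by_cases hT : ∃ tv, G.Adj j tv ∧ ¬ G.Adj z tv
  case neg =>
    exact (dom_false G hmin hG z j dzj
      (fun w hw => Classical.byContradiction (fun hzw => hT ⟨w, hw, hzw⟩))).elim
  case pos =>
  obtain ⟨t, hjt, hzt⟩ := hT
  have atj : G.Adj t j := hjt.symm
  have ntz : ¬G.Adj t z := fun h => hzt h.symm
  have dtp : t ≠ p := fun e => npj (by rw [← e]; exact atj)
  have dtq : t ≠ q := fun e => nqj (by rw [← e]; exact atj)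
  have dtk : t ≠ k := fun e => ntz (by rw [e]; exact azk.symm)
  have dtx : t ≠ x := fun e => nxj (by rw [← e]; exact atj)
  have dty : t ≠ y := fun e => nyj (by rw [← e]; exact atj)
  have dtz : t ≠ z := fun e => nzj (by rw [← e]; exact atj)
  have ntx : ¬G.Adj t x := by
    intro Hc
    by_cases B1 : G.Adj t p
    · by_cases B2 : G.Adj t q
      · by_cases B3 : G.Adj t k
        · exact absHouse h2 akj (azk.symm) (B3.symm) (azp.symm) (B1.symm) (atj.symm) (fun hsy => npk hsy.symm) npj (fun hsy => nzj hsy.symm) (fun hsy => ntz hsy.symm) (dpk.symm) dpj (dzj.symm) (dtz.symm)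
        · exact absHouse h2 axp axk (Hc.symm) (akj.symm) (atj.symm) (B1.symm) nxj (fun hsy => npj hsy.symm) npk (fun hsy => B3 hsy.symm) dxj (dpj.symm) dpk (dtk.symm)
      · by_cases B4 : G.Adj t k
        · exact absHouse h2 apq (B1.symm) (azp.symm) (B4.symm) (azk.symm) (azq.symm) npk (fun hsy => nqk hsy.symm) (fun hsy => B2 hsy.symm) ntz dpk (dqk.symm) (dtq.symm) dtz
        · exact absHouse h2 axp axk (Hc.symm) (akj.symm) (atj.symm) (B1.symm) nxj (fun hsy => npj hsy.symm) npk (fun hsy => B4 hsy.symm) dxj (dpj.symm) dpk (dtk.symm)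
    · by_cases B5 : G.Adj t q
      · by_cases B6 : G.Adj t k
        · exact absHouse h2 (apq.symm) (B5.symm) (azq.symm) (B6.symm) (azk.symm) (azp.symm) nqk (fun hsy => npk hsy.symm) (fun hsy => B1 hsy.symm) ntz dqk (dpk.symm) (dtp.symm) dtz
        · exact absHouse h2 axq axk (Hc.symm) (akj.symm) (atj.symm) (B5.symm) nxj (fun hsy => nqj hsy.symm) nqk (fun hsy => B6 hsy.symm) dxj (dqj.symm) dqk (dtk.symm)
      · by_cases B7 : G.Adj t k
        · exact absHouse h2 (B7.symm) (azk.symm) (axk.symm) (azp.symm) (axp.symm) Hc (fun hsy => npk hsy.symm) (fun hsy => B1 hsy.symm) ntz (fun hsy => nxz hsy.symm) (dpk.symm) (dtp.symm) dtz (dxz.symm)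
        · exact absP32 h1 akj (atj.symm) apq (fun hsy => B7 hsy.symm) (fun hsy => npk hsy.symm) (fun hsy => nqk hsy.symm) (fun hsy => npj hsy.symm) (fun hsy => nqj hsy.symm) B1 B5 (dtk.symm) (dpk.symm) (dqk.symm) (dpj.symm) (dqj.symm) dtp dtq
  have nty : ¬G.Adj t y := by
    intro Hc
    by_cases B8 : G.Adj t p
    · by_cases B9 : G.Adj t q
      · by_cases B10 : G.Adj t k
        · exact absHouse h2 akj (axk.symm) (B10.symm) (axp.symm) (B8.symm) (atj.symm) (fun hsy => npk hsy.symm) npj (fun hsy => nxj hsy.symm) (fun hsy => ntx hsy.symm) (dpk.symm) dpj (dxj.symm) (dtx.symm)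
        · exact absHouse h2 ayp ayk (Hc.symm) (akj.symm) (atj.symm) (B8.symm) nyj (fun hsy => npj hsy.symm) npk (fun hsy => B10 hsy.symm) dyj (dpj.symm) dpk (dtk.symm)
      · exact absP32 h1 axq (azq.symm) (atj.symm) nxz nxj (fun hsy => ntx hsy.symm) nqj (fun hsy => B9 hsy.symm) nzj (fun hsy => ntz hsy.symm) dxz dxj (dtx.symm) dqj (dtq.symm) dzj (dtz.symm)
    · exact absP32 h1 axp (azp.symm) (atj.symm) nxz nxj (fun hsy => ntx hsy.symm) npj (fun hsy => B8 hsy.symm) nzj (fun hsy => ntz hsy.symm) dxz dxj (dtx.symm) dpj (dtp.symm) dzj (dtz.symm)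
  have ntk : ¬G.Adj t k := by
    intro Hc
    by_cases B11 : G.Adj t p
    · exact absHouse h2 akj (axk.symm) (Hc.symm) (axp.symm) (B11.symm) (atj.symm) (fun hsy => npk hsy.symm) npj (fun hsy => nxj hsy.symm) (fun hsy => ntx hsy.symm) (dpk.symm) dpj (dxj.symm) (dtx.symm)
    · exact absP32 h1 axp (azp.symm) (atj.symm) nxz nxj (fun hsy => ntx hsy.symm) npj (fun hsy => B11 hsy.symm) nzj (fun hsy => ntz hsy.symm) dxz dxj (dtx.symm) dpj (dtp.symm) dzj (dtz.symm)
  have atp : G.Adj t p := by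
    by_contra Hc
    exact absP32 h1 axp (azp.symm) (atj.symm) nxz nxj (fun hsy => ntx hsy.symm) npj (fun hsy => Hc hsy.symm) nzj (fun hsy => ntz hsy.symm) dxz dxj (dtx.symm) dpj (dtp.symm) dzj (dtz.symm)
  have atq : G.Adj t q := by
    by_contra Hc
    exact absP32 h1 axq (azq.symm) (atj.symm) nxz nxj (fun hsy => ntx hsy.symm) nqj (fun hsy => Hc hsy.symm) nzj (fun hsy => ntz hsy.symm) dxz dxj (dtx.symm) dqj (dtq.symm) dzj (dtz.symm)
  have htH : t ∉ H := fun hh => ((HH t).mp hh).2.2.2.2 atj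
  have CL : ∀ h, h ∈ H → h ≠ x → h ≠ y → h ≠ z →
      (G.Adj h x ∧ G.Adj h y ∧ ¬G.Adj h z ∧ ¬G.Adj h t) ∨
      (¬G.Adj h x ∧ ¬G.Adj h y ∧ G.Adj h z ∧ ¬G.Adj h t) ∨
      (¬G.Adj h x ∧ ¬G.Adj h y ∧ ¬G.Adj h z ∧ ¬G.Adj h t) := by
    intro h hH dhx dhy dhz
    obtain ⟨⟨dhp, dhq, dhk, dhj⟩, ahp, ahq, ahk, nhj⟩ := (HH h).mp hH
    have dht : h ≠ t := fun e => htH (e ▸ hH)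
    by_cases C1 : G.Adj h x
    · by_cases C2 : G.Adj h y
      · by_cases C3 : G.Adj h z
        · by_cases C4 : G.Adj h t
          · exact (absHouse h2 atp atj (C4.symm) akj (ahk.symm) (ahp.symm) ntk (fun hsy => npk hsy.symm) npj (fun hsy => nhj hsy.symm) dtk (dpk.symm) dpj (dhj.symm)).elim
          · exact (absP32 h1 (C1.symm) C3 (atj.symm) nxz nxj (fun hsy => ntx hsy.symm) nhj C4 nzj (fun hsy => ntz hsy.symm) dxz dxj (dtx.symm) dhj dht dzj (dtz.symm)).elim
        · by_cases C5 : G.Adj h t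
          · exact (absHouse h2 atp atj (C5.symm) akj (ahk.symm) (ahp.symm) ntk (fun hsy => npk hsy.symm) npj (fun hsy => nhj hsy.symm) dtk (dpk.symm) dpj (dhj.symm)).elim
          · exact Or.inl ⟨C1, C2, C3, C5⟩
      · by_cases C6 : G.Adj h z
        · by_cases C7 : G.Adj h t
          · exact (absHouse h2 atp atj (C7.symm) akj (ahk.symm) (ahp.symm) ntk (fun hsy => npk hsy.symm) npj (fun hsy => nhj hsy.symm) dtk (dpk.symm) dpj (dhj.symm)).elim
          · exact (absP32 h1 (axy.symm) (C1.symm) (atj.symm) (fun hsy => C2 hsy.symm) nyj (fun hsy => nty hsy.symm) nxj (fun hsy => ntx hsy.symm) nhj C7 (dhy.symm) dyj (dty.symm) dxj (dtx.symm) dhj dht).elim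
        · by_cases C8 : G.Adj h t
          · exact (absHouse h2 atp atj (C8.symm) akj (ahk.symm) (ahp.symm) ntk (fun hsy => npk hsy.symm) npj (fun hsy => nhj hsy.symm) dtk (dpk.symm) dpj (dhj.symm)).elim
          · exact (absP32 h1 (axy.symm) (C1.symm) (atj.symm) (fun hsy => C2 hsy.symm) nyj (fun hsy => nty hsy.symm) nxj (fun hsy => ntx hsy.symm) nhj C8 (dhy.symm) dyj (dty.symm) dxj (dtx.symm) dhj dht).elim
    · by_cases C9 : G.Adj h y
      · by_cases C10 : G.Adj h z
        · by_cases C11 : G.Adj h t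
          · exact (absHouse h2 atp atj (C11.symm) akj (ahk.symm) (ahp.symm) ntk (fun hsy => npk hsy.symm) npj (fun hsy => nhj hsy.symm) dtk (dpk.symm) dpj (dhj.symm)).elim
          · exact (absP32 h1 axy (C9.symm) (atj.symm) (fun hsy => C1 hsy.symm) nxj (fun hsy => ntx hsy.symm) nyj (fun hsy => nty hsy.symm) nhj C11 (dhx.symm) dxj (dtx.symm) dyj (dty.symm) dhj dht).elim
        · by_cases C12 : G.Adj h t
          · exact (absHouse h2 atp atj (C12.symm) akj (ahk.symm) (ahp.symm) ntk (fun hsy => npk hsy.symm) npj (fun hsy => nhj hsy.symm) dtk (dpk.symm) dpj (dhj.symm)).elim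
          · exact (absP32 h1 axy (C9.symm) (atj.symm) (fun hsy => C1 hsy.symm) nxj (fun hsy => ntx hsy.symm) nyj (fun hsy => nty hsy.symm) nhj C12 (dhx.symm) dxj (dtx.symm) dyj (dty.symm) dhj dht).elim
      · by_cases C13 : G.Adj h z
        · by_cases C14 : G.Adj h t
          · exact (absHouse h2 atp atj (C14.symm) akj (ahk.symm) (ahp.symm) ntk (fun hsy => npk hsy.symm) npj (fun hsy => nhj hsy.symm) dtk (dpk.symm) dpj (dhj.symm)).elim
          · exact Or.inr (Or.inl ⟨C1, C9, C13, C14⟩)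
        · by_cases C15 : G.Adj h t
          · exact (absHouse h2 atp atj (C15.symm) akj (ahk.symm) (ahp.symm) ntk (fun hsy => npk hsy.symm) npj (fun hsy => nhj hsy.symm) dtk (dpk.symm) dpj (dhj.symm)).elim
          · exact Or.inr (Or.inr ⟨C1, C9, C13, C15⟩)
  have tNoH : ∀ h, h ∈ H → ¬G.Adj t h := by
    intro h hh hth
    by_cases ex : h = x
    · exact ntx (by rw [← ex]; exact hth)
    by_cases ey : h = y
    · exact nty (by rw [← ey]; exact hth)
    by_cases ez : h = z
    · exact ntz (by rw [← ez]; exact hth)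
    rcases CL h hh ex ey ez with ⟨-,-,-,c4⟩|⟨-,-,-,c4⟩|⟨-,-,-,c4⟩ <;> exact c4 hth.symm
  have E1 : ∀ a b : V, a ∈ H → b ∈ H →
      G.Adj a x → G.Adj a y → ¬G.Adj a z → G.Adj b x → G.Adj b y → ¬G.Adj b z →
      a ≠ x → a ≠ y → a ≠ z → b ≠ x → b ≠ y → b ≠ z →
      a ≠ b → ¬G.Adj a b → False := by
    intro a b haH hbH pax pay paz pbx pby pbz dax day daz dbx dby dbz dab Hc
    obtain ⟨⟨dap2, daq2, dak2, daj⟩, aap, aaq, aak, naj⟩ := (HH a).mp haH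
    obtain ⟨⟨dbp2, dbq2, dbk2, dbj⟩, abp, abq, abk, nbj⟩ := (HH b).mp hbH
    have dat : a ≠ t := fun e => htH (e ▸ haH)
    have dbt : b ≠ t := fun e => htH (e ▸ hbH)
    have pat : ¬G.Adj a t := fun e => tNoH a haH e.symm
    have pbt : ¬G.Adj b t := fun e => tNoH b hbH e.symm
    exact absP32 h1 pax (pbx.symm) (atj.symm) Hc naj pat nxj (fun hsy => ntx hsy.symm) nbj pbt dab daj dat dxj (dtx.symm) dbj dbt
  have E2 : ∀ a b : V, a ∈ H → b ∈ H →
      ¬G.Adj a x → ¬G.Adj a y → G.Adj a z → ¬G.Adj b x → ¬G.Adj b y → G.Adj b z →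
      a ≠ x → a ≠ y → a ≠ z → b ≠ x → b ≠ y → b ≠ z →
      a ≠ b → ¬G.Adj a b → False := by
    intro a b haH hbH pax pay paz pbx pby pbz dax day daz dbx dby dbz dab Hc
    obtain ⟨⟨dap2, daq2, dak2, daj⟩, aap, aaq, aak, naj⟩ := (HH a).mp haH
    obtain ⟨⟨dbp2, dbq2, dbk2, dbj⟩, abp, abq, abk, nbj⟩ := (HH b).mp hbH
    have dat : a ≠ t := fun e => htH (e ▸ haH)
    have dbt : b ≠ t := fun e => htH (e ▸ hbH)
    have pat : ¬G.Adj a t := fun e => tNoH a haH e.symm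
    have pbt : ¬G.Adj b t := fun e => tNoH b hbH e.symm
    exact absP32 h1 paz (pbz.symm) (atj.symm) Hc naj pat nzj (fun hsy => ntz hsy.symm) nbj pbt dab daj dat dzj (dtz.symm) dbj dbt
  have E3 : ∀ a b : V, a ∈ H → b ∈ H →
      G.Adj a x → G.Adj a y → ¬G.Adj a z → ¬G.Adj b x → ¬G.Adj b y → G.Adj b z →
      a ≠ x → a ≠ y → a ≠ z → b ≠ x → b ≠ y → b ≠ z →
      G.Adj a b → False := by
    intro a b haH hbH pax pay paz pbx pby pbz dax day daz dbx dby dbz Hc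
    obtain ⟨⟨dap2, daq2, dak2, daj⟩, aap, aaq, aak, naj⟩ := (HH a).mp haH
    obtain ⟨⟨dbp2, dbq2, dbk2, dbj⟩, abp, abq, abk, nbj⟩ := (HH b).mp hbH
    have dat : a ≠ t := fun e => htH (e ▸ haH)
    have dbt : b ≠ t := fun e => htH (e ▸ hbH)
    have pat : ¬G.Adj a t := fun e => tNoH a haH e.symm
    have pbt : ¬G.Adj b t := fun e => tNoH b hbH e.symm
    exact absP32 h1 (pax.symm) Hc (atj.symm) (fun hsy => pbx hsy.symm) nxj (fun hsy => ntx hsy.symm) naj pat nbj pbt (dbx.symm) dxj (dtx.symm) daj dat dbj dbt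
  have E4 : ∀ a b : V, a ∈ H → b ∈ H →
      G.Adj a x → G.Adj a y → ¬G.Adj a z → ¬G.Adj b x → ¬G.Adj b y → ¬G.Adj b z →
      a ≠ x → a ≠ y → a ≠ z → b ≠ x → b ≠ y → b ≠ z →
      G.Adj a b → False := by
    intro a b haH hbH pax pay paz pbx pby pbz dax day daz dbx dby dbz Hc
    obtain ⟨⟨dap2, daq2, dak2, daj⟩, aap, aaq, aak, naj⟩ := (HH a).mp haH
    obtain ⟨⟨dbp2, dbq2, dbk2, dbj⟩, abp, abq, abk, nbj⟩ := (HH b).mp hbH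
    have dat : a ≠ t := fun e => htH (e ▸ haH)
    have dbt : b ≠ t := fun e => htH (e ▸ hbH)
    have pat : ¬G.Adj a t := fun e => tNoH a haH e.symm
    have pbt : ¬G.Adj b t := fun e => tNoH b hbH e.symm
    exact absP32 h1 (pax.symm) Hc (atj.symm) (fun hsy => pbx hsy.symm) nxj (fun hsy => ntx hsy.symm) naj pat nbj pbt (dbx.symm) dxj (dtx.symm) daj dat dbj dbt
  have E5 : ∀ a b : V, a ∈ H → b ∈ H →
      ¬G.Adj a x → ¬G.Adj a y → G.Adj a z → ¬G.Adj b x → ¬G.Adj b y → ¬G.Adj b z →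
      a ≠ x → a ≠ y → a ≠ z → b ≠ x → b ≠ y → b ≠ z →
      G.Adj a b → False := by
    intro a b haH hbH pax pay paz pbx pby pbz dax day daz dbx dby dbz Hc
    obtain ⟨⟨dap2, daq2, dak2, daj⟩, aap, aaq, aak, naj⟩ := (HH a).mp haH
    obtain ⟨⟨dbp2, dbq2, dbk2, dbj⟩, abp, abq, abk, nbj⟩ := (HH b).mp hbH
    have dat : a ≠ t := fun e => htH (e ▸ haH)
    have dbt : b ≠ t := fun e => htH (e ▸ hbH)
    have pat : ¬G.Adj a t := fun e => tNoH a haH e.symm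
    have pbt : ¬G.Adj b t := fun e => tNoH b hbH e.symm
    exact absP32 h1 (paz.symm) Hc (atj.symm) (fun hsy => pbz hsy.symm) nzj (fun hsy => ntz hsy.symm) naj pat nbj pbt (dbz.symm) dzj (dtz.symm) daj dat dbj dbt
  have K0 : ∀ a b c2 : V, a ∈ H → b ∈ H → c2 ∈ H →
      ¬G.Adj a x → ¬G.Adj a y → ¬G.Adj a z → ¬G.Adj b x → ¬G.Adj b y → ¬G.Adj b z →
      ¬G.Adj c2 x → ¬G.Adj c2 y → ¬G.Adj c2 z →
      a ≠ x → a ≠ y → a ≠ z → b ≠ x → b ≠ y → b ≠ z → c2 ≠ x → c2 ≠ y → c2 ≠ z →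
      G.Adj a b → G.Adj b c2 → a ≠ c2 → ¬G.Adj a c2 → False := by
    intro a b c2 haH hbH hcH pax pay paz pbx pby pbz pc2x pc2y pc2z
      dax day daz dbx dby dbz dc2x dc2y dc2z hab hbc dac Hc
    obtain ⟨⟨dap2, daq2, dak2, daj⟩, aap, aaq, aak, naj⟩ := (HH a).mp haH
    obtain ⟨⟨dbp2, dbq2, dbk2, dbj⟩, abp, abq, abk, nbj⟩ := (HH b).mp hbH
    obtain ⟨⟨dc2p, dc2q, dc2k, dc2j⟩, ac2p, ac2q, ac2k, nc2j⟩ := (HH c2).mp hcH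
    have dat : a ≠ t := fun e => htH (e ▸ haH)
    have dbt : b ≠ t := fun e => htH (e ▸ hbH)
    have dc2t : c2 ≠ t := fun e => htH (e ▸ hcH)
    have pat : ¬G.Adj a t := fun e => tNoH a haH e.symm
    have pbt : ¬G.Adj b t := fun e => tNoH b hbH e.symm
    have pc2t : ¬G.Adj c2 t := fun e => tNoH c2 hcH e.symm
    exact absP32 h1 hab hbc (atj.symm) Hc naj pat nbj pbt nc2j pc2t dac daj dat dbj dbt dc2j dc2t

  have IEDGE : ∀ u w : V, u ∉ H → w ∉ H →
      ¬G.Adj u x → ¬G.Adj u y → ¬G.Adj u z → ¬G.Adj w x → ¬G.Adj w y → ¬G.Adj w z →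
      u ≠ j → w ≠ j → G.Adj u w → False := by
    intro u w huH hwH nux nuy nuz nwx nwy nwz duj dwj auw
    have dup : u ≠ p := fun e => nux (by rw [e]; exact axp.symm)
    have duq : u ≠ q := fun e => nux (by rw [e]; exact axq.symm)
    have duk : u ≠ k := fun e => nux (by rw [e]; exact axk.symm)
    have dux : u ≠ x := fun e => huH (e ▸ hxH)
    have duy : u ≠ y := fun e => huH (e ▸ hyH)
    have duz : u ≠ z := fun e => huH (e ▸ hzH)
    have dwp : w ≠ p := fun e => nwx (by rw [e]; exact axp.symm)
    have dwq : w ≠ q := fun e => nwx (by rw [e]; exact axq.symm)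
    have dwk : w ≠ k := fun e => nwx (by rw [e]; exact axk.symm)
    have dwx : w ≠ x := fun e => hwH (e ▸ hxH)
    have dwy : w ≠ y := fun e => hwH (e ▸ hyH)
    have dwz : w ≠ z := fun e => hwH (e ▸ hzH)
    by_cases B12 : G.Adj u p
    · by_cases B13 : G.Adj u q
      · by_cases B14 : G.Adj u k
        · by_cases B15 : G.Adj u j
          · exact absHouse h2 akj (axk.symm) (B14.symm) (axp.symm) (B12.symm) (B15.symm) (fun hsy => npk hsy.symm) npj (fun hsy => nxj hsy.symm) (fun hsy => nux hsy.symm) (dpk.symm) dpj (dxj.symm) (dux.symm)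
          · exact huH ((HH u).mpr ⟨⟨dup, duq, duk, duj⟩, B12, B13, B14, B15⟩)
        · by_cases B16 : G.Adj u j
          · by_cases B17 : G.Adj w p
            · by_cases B18 : G.Adj w q
              · by_cases B19 : G.Adj w k
                · exact absHouse h2 (B12.symm) (axp.symm) (B17.symm) (axk.symm) (B19.symm) auw npk (fun hsy => B14 hsy.symm) nux (fun hsy => nwx hsy.symm) dpk (duk.symm) dux (dwx.symm)
                · exact absP32 h1 axk (azk.symm) auw nxz (fun hsy => nux hsy.symm) (fun hsy => nwx hsy.symm) (fun hsy => B14 hsy.symm) (fun hsy => B19 hsy.symm) (fun hsy => nuz hsy.symm) (fun hsy => nwz hsy.symm) dxz (dux.symm) (dwx.symm) (duk.symm) (dwk.symm) (duz.symm) (dwz.symm)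
              · by_cases B20 : G.Adj w k
                · exact absHouse h2 apq (B17.symm) (axp.symm) (B20.symm) (axk.symm) (axq.symm) npk (fun hsy => nqk hsy.symm) (fun hsy => B18 hsy.symm) nwx dpk (dqk.symm) (dwq.symm) dwx
                · exact absP32 h1 axk (azk.symm) auw nxz (fun hsy => nux hsy.symm) (fun hsy => nwx hsy.symm) (fun hsy => B14 hsy.symm) (fun hsy => B20 hsy.symm) (fun hsy => nuz hsy.symm) (fun hsy => nwz hsy.symm) dxz (dux.symm) (dwx.symm) (duk.symm) (dwk.symm) (duz.symm) (dwz.symm)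
            · by_cases B21 : G.Adj w q
              · by_cases B22 : G.Adj w k
                · exact absHouse h2 (apq.symm) (B21.symm) (axq.symm) (B22.symm) (axk.symm) (axp.symm) nqk (fun hsy => npk hsy.symm) (fun hsy => B17 hsy.symm) nwx dqk (dpk.symm) (dwp.symm) dwx
                · exact absP32 h1 axk (azk.symm) auw nxz (fun hsy => nux hsy.symm) (fun hsy => nwx hsy.symm) (fun hsy => B14 hsy.symm) (fun hsy => B22 hsy.symm) (fun hsy => nuz hsy.symm) (fun hsy => nwz hsy.symm) dxz (dux.symm) (dwx.symm) (duk.symm) (dwk.symm) (duz.symm) (dwz.symm)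
              · by_cases B23 : G.Adj w k
                · by_cases B24 : G.Adj w j
                  · exact absP32 h1 axp (azp.symm) (B24.symm) nxz nxj (fun hsy => nwx hsy.symm) npj (fun hsy => B17 hsy.symm) nzj (fun hsy => nwz hsy.symm) dxz dxj (dwx.symm) dpj (dwp.symm) dzj (dwz.symm)
                  · exact absP32 h1 (akj.symm) (B23.symm) apq (fun hsy => B24 hsy.symm) (fun hsy => npj hsy.symm) (fun hsy => nqj hsy.symm) (fun hsy => npk hsy.symm) (fun hsy => nqk hsy.symm) B17 B21 (dwj.symm) (dpj.symm) (dqj.symm) (dpk.symm) (dqk.symm) dwp dwq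
                · exact absP32 h1 axk (azk.symm) auw nxz (fun hsy => nux hsy.symm) (fun hsy => nwx hsy.symm) (fun hsy => B14 hsy.symm) (fun hsy => B23 hsy.symm) (fun hsy => nuz hsy.symm) (fun hsy => nwz hsy.symm) dxz (dux.symm) (dwx.symm) (duk.symm) (dwk.symm) (duz.symm) (dwz.symm)
          · by_cases B25 : G.Adj w p
            · by_cases B26 : G.Adj w q
              · by_cases B27 : G.Adj w k
                · exact absHouse h2 (B12.symm) (axp.symm) (B25.symm) (axk.symm) (B27.symm) auw npk (fun hsy => B14 hsy.symm) nux (fun hsy => nwx hsy.symm) dpk (duk.symm) dux (dwx.symm)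
                · exact absP32 h1 axk (azk.symm) auw nxz (fun hsy => nux hsy.symm) (fun hsy => nwx hsy.symm) (fun hsy => B14 hsy.symm) (fun hsy => B27 hsy.symm) (fun hsy => nuz hsy.symm) (fun hsy => nwz hsy.symm) dxz (dux.symm) (dwx.symm) (duk.symm) (dwk.symm) (duz.symm) (dwz.symm)
              · by_cases B28 : G.Adj w k
                · exact absHouse h2 apq (B25.symm) (axp.symm) (B28.symm) (axk.symm) (axq.symm) npk (fun hsy => nqk hsy.symm) (fun hsy => B26 hsy.symm) nwx dpk (dqk.symm) (dwq.symm) dwx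
                · exact absP32 h1 axk (azk.symm) auw nxz (fun hsy => nux hsy.symm) (fun hsy => nwx hsy.symm) (fun hsy => B14 hsy.symm) (fun hsy => B28 hsy.symm) (fun hsy => nuz hsy.symm) (fun hsy => nwz hsy.symm) dxz (dux.symm) (dwx.symm) (duk.symm) (dwk.symm) (duz.symm) (dwz.symm)
            · by_cases B29 : G.Adj w q
              · by_cases B30 : G.Adj w k
                · exact absHouse h2 (apq.symm) (B29.symm) (axq.symm) (B30.symm) (axk.symm) (axp.symm) nqk (fun hsy => npk hsy.symm) (fun hsy => B25 hsy.symm) nwx dqk (dpk.symm) (dwp.symm) dwx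
                · exact absP32 h1 axk (azk.symm) auw nxz (fun hsy => nux hsy.symm) (fun hsy => nwx hsy.symm) (fun hsy => B14 hsy.symm) (fun hsy => B30 hsy.symm) (fun hsy => nuz hsy.symm) (fun hsy => nwz hsy.symm) dxz (dux.symm) (dwx.symm) (duk.symm) (dwk.symm) (duz.symm) (dwz.symm)
              · by_cases B31 : G.Adj w k
                · by_cases B32 : G.Adj w j
                  · exact absP32 h1 axp (azp.symm) (B32.symm) nxz nxj (fun hsy => nwx hsy.symm) npj (fun hsy => B25 hsy.symm) nzj (fun hsy => nwz hsy.symm) dxz dxj (dwx.symm) dpj (dwp.symm) dzj (dwz.symm)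
                  · exact absP32 h1 (akj.symm) (B31.symm) apq (fun hsy => B32 hsy.symm) (fun hsy => npj hsy.symm) (fun hsy => nqj hsy.symm) (fun hsy => npk hsy.symm) (fun hsy => nqk hsy.symm) B25 B29 (dwj.symm) (dpj.symm) (dqj.symm) (dpk.symm) (dqk.symm) dwp dwq
                · exact absP32 h1 axk (azk.symm) auw nxz (fun hsy => nux hsy.symm) (fun hsy => nwx hsy.symm) (fun hsy => B14 hsy.symm) (fun hsy => B31 hsy.symm) (fun hsy => nuz hsy.symm) (fun hsy => nwz hsy.symm) dxz (dux.symm) (dwx.symm) (duk.symm) (dwk.symm) (duz.symm) (dwz.symm)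
      · by_cases B33 : G.Adj u k
        · exact absHouse h2 apq (B12.symm) (axp.symm) (B33.symm) (axk.symm) (axq.symm) npk (fun hsy => nqk hsy.symm) (fun hsy => B13 hsy.symm) nux dpk (dqk.symm) (duq.symm) dux
        · by_cases B34 : G.Adj u j
          · exact absP32 h1 axq (azq.symm) (B34.symm) nxz nxj (fun hsy => nux hsy.symm) nqj (fun hsy => B13 hsy.symm) nzj (fun hsy => nuz hsy.symm) dxz dxj (dux.symm) dqj (duq.symm) dzj (duz.symm)
          · exact absP32 h1 (apq.symm) (B12.symm) akj (fun hsy => B13 hsy.symm) nqk nqj npk npj B33 B34 (duq.symm) dqk dqj dpk dpj duk duj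
    · by_cases B35 : G.Adj u q
      · by_cases B36 : G.Adj u k
        · exact absHouse h2 (apq.symm) (B35.symm) (axq.symm) (B36.symm) (axk.symm) (axp.symm) nqk (fun hsy => npk hsy.symm) (fun hsy => B12 hsy.symm) nux dqk (dpk.symm) (dup.symm) dux
        · by_cases B37 : G.Adj u j
          · exact absP32 h1 axp (azp.symm) (B37.symm) nxz nxj (fun hsy => nux hsy.symm) npj (fun hsy => B12 hsy.symm) nzj (fun hsy => nuz hsy.symm) dxz dxj (dux.symm) dpj (dup.symm) dzj (duz.symm)
          · exact absP32 h1 apq (B35.symm) akj (fun hsy => B12 hsy.symm) npk npj nqk nqj B36 B37 (dup.symm) dpk dpj dqk dqj duk duj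
      · by_cases B38 : G.Adj u k
        · by_cases B39 : G.Adj u j
          · exact absP32 h1 axp (azp.symm) (B39.symm) nxz nxj (fun hsy => nux hsy.symm) npj (fun hsy => B12 hsy.symm) nzj (fun hsy => nuz hsy.symm) dxz dxj (dux.symm) dpj (dup.symm) dzj (duz.symm)
          · exact absP32 h1 (akj.symm) (B38.symm) apq (fun hsy => B39 hsy.symm) (fun hsy => npj hsy.symm) (fun hsy => nqj hsy.symm) (fun hsy => npk hsy.symm) (fun hsy => nqk hsy.symm) B12 B35 (duj.symm) (dpj.symm) (dqj.symm) (dpk.symm) (dqk.symm) dup duq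
        · by_cases B40 : G.Adj u j
          · exact absP32 h1 akj (B40.symm) apq (fun hsy => B38 hsy.symm) (fun hsy => npk hsy.symm) (fun hsy => nqk hsy.symm) (fun hsy => npj hsy.symm) (fun hsy => nqj hsy.symm) B12 B35 (duk.symm) (dpk.symm) (dqk.symm) (dpj.symm) (dqj.symm) dup duq
          · by_cases B41 : G.Adj w p
            · by_cases B42 : G.Adj w q
              · by_cases B43 : G.Adj w k
                · by_cases B44 : G.Adj w j
                  · exact absHouse h2 akj (axk.symm) (B43.symm) (axp.symm) (B41.symm) (B44.symm) (fun hsy => npk hsy.symm) npj (fun hsy => nxj hsy.symm) (fun hsy => nwx hsy.symm) (dpk.symm) dpj (dxj.symm) (dwx.symm)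
                  · exact hwH ((HH w).mpr ⟨⟨dwp, dwq, dwk, dwj⟩, B41, B42, B43, B44⟩)
                · exact absP32 h1 axk (azk.symm) auw nxz (fun hsy => nux hsy.symm) (fun hsy => nwx hsy.symm) (fun hsy => B38 hsy.symm) (fun hsy => B43 hsy.symm) (fun hsy => nuz hsy.symm) (fun hsy => nwz hsy.symm) dxz (dux.symm) (dwx.symm) (duk.symm) (dwk.symm) (duz.symm) (dwz.symm)
              · exact absP32 h1 axq (azq.symm) auw nxz (fun hsy => nux hsy.symm) (fun hsy => nwx hsy.symm) (fun hsy => B35 hsy.symm) (fun hsy => B42 hsy.symm) (fun hsy => nuz hsy.symm) (fun hsy => nwz hsy.symm) dxz (dux.symm) (dwx.symm) (duq.symm) (dwq.symm) (duz.symm) (dwz.symm)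
            · exact absP32 h1 axp (azp.symm) auw nxz (fun hsy => nux hsy.symm) (fun hsy => nwx hsy.symm) (fun hsy => B12 hsy.symm) (fun hsy => B41 hsy.symm) (fun hsy => nuz hsy.symm) (fun hsy => nwz hsy.symm) dxz (dux.symm) (dwx.symm) (dup.symm) (dwp.symm) (duz.symm) (dwz.symm)
  have TP : ∀ u : V, u ∉ H → (∃ n ∈ H, G.Adj u n) → (∃ m ∈ H, ¬G.Adj u m) →
      (¬G.Adj u p ∧ ¬G.Adj u q ∧ ¬G.Adj u k ∧ ¬G.Adj u j ∧ ¬G.Adj u x ∧ ¬G.Adj u y ∧ ¬G.Adj u z ∧ ¬G.Adj u t) ∨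
      (¬G.Adj u p ∧ ¬G.Adj u q ∧ ¬G.Adj u k ∧ ¬G.Adj u j ∧ G.Adj u x ∧ G.Adj u y ∧ ¬G.Adj u z ∧ ¬G.Adj u t) ∨
      (¬G.Adj u p ∧ ¬G.Adj u q ∧ ¬G.Adj u k ∧ ¬G.Adj u j ∧ G.Adj u x ∧ G.Adj u y ∧ ¬G.Adj u z ∧ G.Adj u t) ∨
      (¬G.Adj u p ∧ ¬G.Adj u q ∧ ¬G.Adj u k ∧ ¬G.Adj u j ∧ ¬G.Adj u x ∧ ¬G.Adj u y ∧ G.Adj u z ∧ ¬G.Adj u t) ∨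
      (¬G.Adj u p ∧ ¬G.Adj u q ∧ ¬G.Adj u k ∧ ¬G.Adj u j ∧ G.Adj u x ∧ G.Adj u y ∧ G.Adj u z ∧ G.Adj u t) ∨
      (G.Adj u p ∧ G.Adj u q ∧ ¬G.Adj u k ∧ ¬G.Adj u j ∧ ¬G.Adj u x ∧ ¬G.Adj u y ∧ ¬G.Adj u z ∧ ¬G.Adj u t) ∨
      (G.Adj u p ∧ G.Adj u q ∧ ¬G.Adj u k ∧ ¬G.Adj u j ∧ G.Adj u x ∧ G.Adj u y ∧ G.Adj u z ∧ G.Adj u t) ∨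
      (¬G.Adj u p ∧ ¬G.Adj u q ∧ G.Adj u k ∧ G.Adj u j ∧ G.Adj u x ∧ G.Adj u y ∧ G.Adj u z ∧ ¬G.Adj u t) := by
    intro u huH hn hm
    obtain ⟨n, hnH, hun⟩ := hn
    obtain ⟨m, hmH, hum⟩ := hm
    obtain ⟨⟨dnp, dnq, dnk, dnj⟩, anp, anq, ank, nnj⟩ := (HH n).mp hnH
    obtain ⟨⟨dmp2, dmq2, dmk2, dmj2⟩, amp2, amq2, amk2, nmj2⟩ := (HH m).mp hmH
    have dup : u ≠ p := fun e => hum (by rw [e]; exact amp2.symm)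
    have duq : u ≠ q := fun e => hum (by rw [e]; exact amq2.symm)
    have duk : u ≠ k := fun e => hum (by rw [e]; exact amk2.symm)
    have duj : u ≠ j := fun e => nnj ((by rw [← e]; exact hun : G.Adj j n).symm)
    have dux : u ≠ x := fun e => huH (e ▸ hxH)
    have duy : u ≠ y := fun e => huH (e ▸ hyH)
    have duz : u ≠ z := fun e => huH (e ▸ hzH)
    have dut : u ≠ t := fun e => tNoH n hnH (by rw [← e]; exact hun)
    have dmt : m ≠ t := fun e => htH (e ▸ hmH)
    have dum : u ≠ m := fun e => huH (e ▸ hmH)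
    by_cases T1 : G.Adj u p
    · by_cases T2 : G.Adj u q
      · by_cases T3 : G.Adj u k
        · by_cases T4 : G.Adj u j
          · by_cases T5 : G.Adj u x
            · by_cases T6 : G.Adj u y
              · by_cases T7 : G.Adj u z
                · by_cases T8 : G.Adj u t
                  · have dmx : m ≠ x := fun e => hum (by rw [e]; exact T5)
                    have dmy : m ≠ y := fun e => hum (by rw [e]; exact T6)
                    have dmz : m ≠ z := fun e => hum (by rw [e]; exact T7)
                    rcases CL m hmH dmx dmy dmz with ⟨c1,c2,c3,c4⟩|⟨c1,c2,c3,c4⟩|⟨c1,c2,c3,c4⟩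
                    · exact (absHouse h2 akj (amk2.symm) (T3.symm) (amp2.symm) (T1.symm) (T4.symm) (fun hsy => npk hsy.symm) npj (fun hsy => nmj2 hsy.symm) (fun hsy => hum hsy.symm) (dpk.symm) dpj (dmj2.symm) (dum.symm)).elim
                    · exact (absHouse h2 akj (amk2.symm) (T3.symm) (amp2.symm) (T1.symm) (T4.symm) (fun hsy => npk hsy.symm) npj (fun hsy => nmj2 hsy.symm) (fun hsy => hum hsy.symm) (dpk.symm) dpj (dmj2.symm) (dum.symm)).elim
                    · exact (absHouse h2 akj (amk2.symm) (T3.symm) (amp2.symm) (T1.symm) (T4.symm) (fun hsy => npk hsy.symm) npj (fun hsy => nmj2 hsy.symm) (fun hsy => hum hsy.symm) (dpk.symm) dpj (dmj2.symm) (dum.symm)).elim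
                  · exact (absHouse h2 (akj.symm) (atj.symm) (T4.symm) (atp.symm) (T1.symm) (T3.symm) (fun hsy => npj hsy.symm) npk (fun hsy => ntk hsy.symm) (fun hsy => T8 hsy.symm) (dpj.symm) dpk (dtk.symm) (dut.symm)).elim
                · exact (absHouse h2 akj (azk.symm) (T3.symm) (azp.symm) (T1.symm) (T4.symm) (fun hsy => npk hsy.symm) npj (fun hsy => nzj hsy.symm) (fun hsy => T7 hsy.symm) (dpk.symm) dpj (dzj.symm) (duz.symm)).elim
              · exact (absHouse h2 akj (ayk.symm) (T3.symm) (ayp.symm) (T1.symm) (T4.symm) (fun hsy => npk hsy.symm) npj (fun hsy => nyj hsy.symm) (fun hsy => T6 hsy.symm) (dpk.symm) dpj (dyj.symm) (duy.symm)).elim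
            · exact (absHouse h2 akj (axk.symm) (T3.symm) (axp.symm) (T1.symm) (T4.symm) (fun hsy => npk hsy.symm) npj (fun hsy => nxj hsy.symm) (fun hsy => T5 hsy.symm) (dpk.symm) dpj (dxj.symm) (dux.symm)).elim
          · exact absurd ((HH u).mpr ⟨⟨dup, duq, duk, duj⟩, T1, T2, T3, T4⟩) huH
        · by_cases T9 : G.Adj u j
          · by_cases T10 : G.Adj u x
            · exact (absHouse h2 axp axk (T10.symm) (akj.symm) (T9.symm) (T1.symm) nxj (fun hsy => npj hsy.symm) npk (fun hsy => T3 hsy.symm) dxj (dpj.symm) dpk (duk.symm)).elim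
            · by_cases T11 : G.Adj u y
              · exact (absHouse h2 ayp ayk (T11.symm) (akj.symm) (T9.symm) (T1.symm) nyj (fun hsy => npj hsy.symm) npk (fun hsy => T3 hsy.symm) dyj (dpj.symm) dpk (duk.symm)).elim
              · by_cases T12 : G.Adj u z
                · exact (absHouse h2 azp azk (T12.symm) (akj.symm) (T9.symm) (T1.symm) nzj (fun hsy => npj hsy.symm) npk (fun hsy => T3 hsy.symm) dzj (dpj.symm) dpk (duk.symm)).elim
                · by_cases T13 : G.Adj u t
                  · exact (absP32 h1 axk (azk.symm) (T13.symm) nxz (fun hsy => ntx hsy.symm) (fun hsy => T10 hsy.symm) (fun hsy => ntk hsy.symm) (fun hsy => T3 hsy.symm) (fun hsy => ntz hsy.symm) (fun hsy => T12 hsy.symm) dxz (dtx.symm) (dux.symm) (dtk.symm) (duk.symm) (dtz.symm) (duz.symm)).elim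
                  · exact (absP32 h1 atj (T9.symm) axy (fun hsy => T13 hsy.symm) ntx nty (fun hsy => nxj hsy.symm) (fun hsy => nyj hsy.symm) T10 T11 (dut.symm) dtx dty (dxj.symm) (dyj.symm) dux duy).elim
          · by_cases T14 : G.Adj u x
            · by_cases T15 : G.Adj u y
              · by_cases T16 : G.Adj u z
                · by_cases T17 : G.Adj u t
                  · exact Or.inr (Or.inr (Or.inr (Or.inr (Or.inr (Or.inr (Or.inl ⟨T1, T2, T3, T9, T14, T15, T16, T17⟩))))))
                  · exact (absP32 h1 (T14.symm) T16 (atj.symm) nxz nxj (fun hsy => ntx hsy.symm) T9 T17 nzj (fun hsy => ntz hsy.symm) dxz dxj (dtx.symm) duj dut dzj (dtz.symm)).elim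
                · exact (absHouse h2 (T1.symm) (azp.symm) (axp.symm) (azk.symm) (axk.symm) T14 npk (fun hsy => T3 hsy.symm) T16 (fun hsy => nxz hsy.symm) dpk (duk.symm) duz (dxz.symm)).elim
              · by_cases T18 : G.Adj u z
                · exact (absHouse h2 (T1.symm) (ayp.symm) (azp.symm) (ayk.symm) (azk.symm) T18 npk (fun hsy => T3 hsy.symm) T15 nyz dpk (duk.symm) duy dyz).elim
                · exact (absHouse h2 (T1.symm) (azp.symm) (axp.symm) (azk.symm) (axk.symm) T14 npk (fun hsy => T3 hsy.symm) T18 (fun hsy => nxz hsy.symm) dpk (duk.symm) duz (dxz.symm)).elim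
            · by_cases T19 : G.Adj u y
              · by_cases T20 : G.Adj u z
                · exact (absHouse h2 (T1.symm) (axp.symm) (azp.symm) (axk.symm) (azk.symm) T20 npk (fun hsy => T3 hsy.symm) T14 nxz dpk (duk.symm) dux dxz).elim
                · exact (absHouse h2 (T1.symm) (azp.symm) (ayp.symm) (azk.symm) (ayk.symm) T19 npk (fun hsy => T3 hsy.symm) T20 (fun hsy => nyz hsy.symm) dpk (duk.symm) duz (dyz.symm)).elim
              · by_cases T21 : G.Adj u z
                · exact (absHouse h2 (T1.symm) (axp.symm) (azp.symm) (axk.symm) (azk.symm) T21 npk (fun hsy => T3 hsy.symm) T14 nxz dpk (duk.symm) dux dxz).elim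
                · by_cases T22 : G.Adj u t
                  · exact (absP32 h1 axk (azk.symm) (T22.symm) nxz (fun hsy => ntx hsy.symm) (fun hsy => T14 hsy.symm) (fun hsy => ntk hsy.symm) (fun hsy => T3 hsy.symm) (fun hsy => ntz hsy.symm) (fun hsy => T21 hsy.symm) dxz (dtx.symm) (dux.symm) (dtk.symm) (duk.symm) (dtz.symm) (duz.symm)).elim
                  · exact Or.inr (Or.inr (Or.inr (Or.inr (Or.inr (Or.inl ⟨T1, T2, T3, T9, T14, T19, T21, T22⟩)))))
      · by_cases T23 : G.Adj u k
        · by_cases T24 : G.Adj u j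
          · by_cases T25 : G.Adj u x
            · by_cases T26 : G.Adj u y
              · by_cases T27 : G.Adj u z
                · by_cases T28 : G.Adj u t
                  · exact (absHouse h2 axk axq (T25.symm) atq (T28.symm) (T23.symm) (fun hsy => ntx hsy.symm) ntk (fun hsy => nqk hsy.symm) (fun hsy => T2 hsy.symm) (dtx.symm) dtk (dqk.symm) (duq.symm)).elim
                  · exact (absHouse h2 apq (T1.symm) (atp.symm) (T24.symm) (atj.symm) (atq.symm) npj (fun hsy => nqj hsy.symm) (fun hsy => T2 hsy.symm) T28 dpj (dqj.symm) (duq.symm) dut).elim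
                · exact (absHouse h2 apq (T1.symm) (azp.symm) (T23.symm) (azk.symm) (azq.symm) npk (fun hsy => nqk hsy.symm) (fun hsy => T2 hsy.symm) T27 dpk (dqk.symm) (duq.symm) duz).elim
              · exact (absHouse h2 apq (T1.symm) (ayp.symm) (T23.symm) (ayk.symm) (ayq.symm) npk (fun hsy => nqk hsy.symm) (fun hsy => T2 hsy.symm) T26 dpk (dqk.symm) (duq.symm) duy).elim
            · exact (absHouse h2 apq (T1.symm) (axp.symm) (T23.symm) (axk.symm) (axq.symm) npk (fun hsy => nqk hsy.symm) (fun hsy => T2 hsy.symm) T25 dpk (dqk.symm) (duq.symm) dux).elim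
          · by_cases T29 : G.Adj u x
            · by_cases T30 : G.Adj u y
              · by_cases T31 : G.Adj u z
                · by_cases T32 : G.Adj u t
                  · exact (absHouse h2 atp atj (T32.symm) akj (T23.symm) (T1.symm) ntk (fun hsy => npk hsy.symm) npj (fun hsy => T24 hsy.symm) dtk (dpk.symm) dpj (duj.symm)).elim
                  · exact (absP32 h1 (T29.symm) T31 (atj.symm) nxz nxj (fun hsy => ntx hsy.symm) T24 T32 nzj (fun hsy => ntz hsy.symm) dxz dxj (dtx.symm) duj dut dzj (dtz.symm)).elim
                · exact (absHouse h2 apq (T1.symm) (azp.symm) (T23.symm) (azk.symm) (azq.symm) npk (fun hsy => nqk hsy.symm) (fun hsy => T2 hsy.symm) T31 dpk (dqk.symm) (duq.symm) duz).elim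
              · exact (absHouse h2 apq (T1.symm) (ayp.symm) (T23.symm) (ayk.symm) (ayq.symm) npk (fun hsy => nqk hsy.symm) (fun hsy => T2 hsy.symm) T30 dpk (dqk.symm) (duq.symm) duy).elim
            · exact (absHouse h2 apq (T1.symm) (axp.symm) (T23.symm) (axk.symm) (axq.symm) npk (fun hsy => nqk hsy.symm) (fun hsy => T2 hsy.symm) T29 dpk (dqk.symm) (duq.symm) dux).elim
        · by_cases T33 : G.Adj u j
          · by_cases T34 : G.Adj u x
            · exact (absHouse h2 axp axk (T34.symm) (akj.symm) (T33.symm) (T1.symm) nxj (fun hsy => npj hsy.symm) npk (fun hsy => T23 hsy.symm) dxj (dpj.symm) dpk (duk.symm)).elim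
            · by_cases T35 : G.Adj u y
              · exact (absHouse h2 ayp ayk (T35.symm) (akj.symm) (T33.symm) (T1.symm) nyj (fun hsy => npj hsy.symm) npk (fun hsy => T23 hsy.symm) dyj (dpj.symm) dpk (duk.symm)).elim
              · by_cases T36 : G.Adj u z
                · exact (absHouse h2 azp azk (T36.symm) (akj.symm) (T33.symm) (T1.symm) nzj (fun hsy => npj hsy.symm) npk (fun hsy => T23 hsy.symm) dzj (dpj.symm) dpk (duk.symm)).elim
                · exact (absP32 h1 axq (azq.symm) (T33.symm) nxz nxj (fun hsy => T34 hsy.symm) nqj (fun hsy => T2 hsy.symm) nzj (fun hsy => T36 hsy.symm) dxz dxj (dux.symm) dqj (duq.symm) dzj (duz.symm)).elim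
          · exact (absP32 h1 (apq.symm) (T1.symm) akj (fun hsy => T2 hsy.symm) nqk nqj npk npj T23 T33 (duq.symm) dqk dqj dpk dpj duk duj).elim
    · by_cases T37 : G.Adj u q
      · by_cases T38 : G.Adj u k
        · by_cases T39 : G.Adj u j
          · by_cases T40 : G.Adj u x
            · by_cases T41 : G.Adj u y
              · by_cases T42 : G.Adj u z
                · by_cases T43 : G.Adj u t
                  · exact (absHouse h2 axk axp (T40.symm) atp (T43.symm) (T38.symm) (fun hsy => ntx hsy.symm) ntk (fun hsy => npk hsy.symm) (fun hsy => T1 hsy.symm) (dtx.symm) dtk (dpk.symm) (dup.symm)).elim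
                  · exact (absHouse h2 (apq.symm) (T37.symm) (atq.symm) (T39.symm) (atj.symm) (atp.symm) nqj (fun hsy => npj hsy.symm) (fun hsy => T1 hsy.symm) T43 dqj (dpj.symm) (dup.symm) dut).elim
                · exact (absHouse h2 (apq.symm) (T37.symm) (azq.symm) (T38.symm) (azk.symm) (azp.symm) nqk (fun hsy => npk hsy.symm) (fun hsy => T1 hsy.symm) T42 dqk (dpk.symm) (dup.symm) duz).elim
              · exact (absHouse h2 (apq.symm) (T37.symm) (ayq.symm) (T38.symm) (ayk.symm) (ayp.symm) nqk (fun hsy => npk hsy.symm) (fun hsy => T1 hsy.symm) T41 dqk (dpk.symm) (dup.symm) duy).elim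
            · exact (absHouse h2 (apq.symm) (T37.symm) (axq.symm) (T38.symm) (axk.symm) (axp.symm) nqk (fun hsy => npk hsy.symm) (fun hsy => T1 hsy.symm) T40 dqk (dpk.symm) (dup.symm) dux).elim
          · by_cases T44 : G.Adj u x
            · by_cases T45 : G.Adj u y
              · by_cases T46 : G.Adj u z
                · by_cases T47 : G.Adj u t
                  · exact (absHouse h2 axk axp (T44.symm) atp (T47.symm) (T38.symm) (fun hsy => ntx hsy.symm) ntk (fun hsy => npk hsy.symm) (fun hsy => T1 hsy.symm) (dtx.symm) dtk (dpk.symm) (dup.symm)).elim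
                  · exact (absP32 h1 (T44.symm) T46 (atj.symm) nxz nxj (fun hsy => ntx hsy.symm) T39 T47 nzj (fun hsy => ntz hsy.symm) dxz dxj (dtx.symm) duj dut dzj (dtz.symm)).elim
                · exact (absHouse h2 (apq.symm) (T37.symm) (azq.symm) (T38.symm) (azk.symm) (azp.symm) nqk (fun hsy => npk hsy.symm) (fun hsy => T1 hsy.symm) T46 dqk (dpk.symm) (dup.symm) duz).elim
              · exact (absHouse h2 (apq.symm) (T37.symm) (ayq.symm) (T38.symm) (ayk.symm) (ayp.symm) nqk (fun hsy => npk hsy.symm) (fun hsy => T1 hsy.symm) T45 dqk (dpk.symm) (dup.symm) duy).elim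
            · exact (absHouse h2 (apq.symm) (T37.symm) (axq.symm) (T38.symm) (axk.symm) (axp.symm) nqk (fun hsy => npk hsy.symm) (fun hsy => T1 hsy.symm) T44 dqk (dpk.symm) (dup.symm) dux).elim
        · by_cases T48 : G.Adj u j
          · by_cases T49 : G.Adj u x
            · exact (absHouse h2 axq axk (T49.symm) (akj.symm) (T48.symm) (T37.symm) nxj (fun hsy => nqj hsy.symm) nqk (fun hsy => T38 hsy.symm) dxj (dqj.symm) dqk (duk.symm)).elim
            · by_cases T50 : G.Adj u y
              · exact (absHouse h2 ayq ayk (T50.symm) (akj.symm) (T48.symm) (T37.symm) nyj (fun hsy => nqj hsy.symm) nqk (fun hsy => T38 hsy.symm) dyj (dqj.symm) dqk (duk.symm)).elim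
              · by_cases T51 : G.Adj u z
                · exact (absHouse h2 azq azk (T51.symm) (akj.symm) (T48.symm) (T37.symm) nzj (fun hsy => nqj hsy.symm) nqk (fun hsy => T38 hsy.symm) dzj (dqj.symm) dqk (duk.symm)).elim
                · exact (absP32 h1 axp (azp.symm) (T48.symm) nxz nxj (fun hsy => T49 hsy.symm) npj (fun hsy => T1 hsy.symm) nzj (fun hsy => T51 hsy.symm) dxz dxj (dux.symm) dpj (dup.symm) dzj (duz.symm)).elim
          · exact (absP32 h1 apq (T37.symm) akj (fun hsy => T1 hsy.symm) npk npj nqk nqj T38 T48 (dup.symm) dpk dpj dqk dqj duk duj).elim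
      · by_cases T52 : G.Adj u k
        · by_cases T53 : G.Adj u j
          · by_cases T54 : G.Adj u x
            · by_cases T55 : G.Adj u y
              · by_cases T56 : G.Adj u z
                · by_cases T57 : G.Adj u t
                  · exact (absHouse h2 axk axp (T54.symm) atp (T57.symm) (T52.symm) (fun hsy => ntx hsy.symm) ntk (fun hsy => npk hsy.symm) (fun hsy => T1 hsy.symm) (dtx.symm) dtk (dpk.symm) (dup.symm)).elim
                  · exact Or.inr (Or.inr (Or.inr (Or.inr (Or.inr (Or.inr (Or.inr (⟨T1, T37, T52, T53, T54, T55, T56, T57⟩)))))))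
                · exact (absHouse h2 (T52.symm) (azk.symm) (axk.symm) (azp.symm) (axp.symm) T54 (fun hsy => npk hsy.symm) (fun hsy => T1 hsy.symm) T56 (fun hsy => nxz hsy.symm) (dpk.symm) (dup.symm) duz (dxz.symm)).elim
              · by_cases T58 : G.Adj u z
                · exact (absHouse h2 (T52.symm) (ayk.symm) (azk.symm) (ayp.symm) (azp.symm) T58 (fun hsy => npk hsy.symm) (fun hsy => T1 hsy.symm) T55 nyz (dpk.symm) (dup.symm) duy dyz).elim
                · exact (absHouse h2 (T52.symm) (azk.symm) (axk.symm) (azp.symm) (axp.symm) T54 (fun hsy => npk hsy.symm) (fun hsy => T1 hsy.symm) T58 (fun hsy => nxz hsy.symm) (dpk.symm) (dup.symm) duz (dxz.symm)).elim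
            · by_cases T59 : G.Adj u y
              · by_cases T60 : G.Adj u z
                · exact (absHouse h2 (T52.symm) (axk.symm) (azk.symm) (axp.symm) (azp.symm) T60 (fun hsy => npk hsy.symm) (fun hsy => T1 hsy.symm) T54 nxz (dpk.symm) (dup.symm) dux dxz).elim
                · exact (absHouse h2 (T52.symm) (azk.symm) (ayk.symm) (azp.symm) (ayp.symm) T59 (fun hsy => npk hsy.symm) (fun hsy => T1 hsy.symm) T60 (fun hsy => nyz hsy.symm) (dpk.symm) (dup.symm) duz (dyz.symm)).elim
              · by_cases T61 : G.Adj u z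
                · exact (absHouse h2 (T52.symm) (axk.symm) (azk.symm) (axp.symm) (azp.symm) T61 (fun hsy => npk hsy.symm) (fun hsy => T1 hsy.symm) T54 nxz (dpk.symm) (dup.symm) dux dxz).elim
                · exact (absP32 h1 axp (azp.symm) (T53.symm) nxz nxj (fun hsy => T54 hsy.symm) npj (fun hsy => T1 hsy.symm) nzj (fun hsy => T61 hsy.symm) dxz dxj (dux.symm) dpj (dup.symm) dzj (duz.symm)).elim
          · exact (absP32 h1 (akj.symm) (T52.symm) apq (fun hsy => T53 hsy.symm) (fun hsy => npj hsy.symm) (fun hsy => nqj hsy.symm) (fun hsy => npk hsy.symm) (fun hsy => nqk hsy.symm) T1 T37 (duj.symm) (dpj.symm) (dqj.symm) (dpk.symm) (dqk.symm) dup duq).elim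
        · by_cases T62 : G.Adj u j
          · exact (absP32 h1 akj (T62.symm) apq (fun hsy => T52 hsy.symm) (fun hsy => npk hsy.symm) (fun hsy => nqk hsy.symm) (fun hsy => npj hsy.symm) (fun hsy => nqj hsy.symm) T1 T37 (duk.symm) (dpk.symm) (dqk.symm) (dpj.symm) (dqj.symm) dup duq).elim
          · by_cases T63 : G.Adj u x
            · by_cases T64 : G.Adj u y
              · by_cases T65 : G.Adj u z
                · by_cases T66 : G.Adj u t
                  · exact Or.inr (Or.inr (Or.inr (Or.inr (Or.inl ⟨T1, T37, T52, T62, T63, T64, T65, T66⟩))))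
                  · exact (absP32 h1 (T63.symm) T65 (atj.symm) nxz nxj (fun hsy => ntx hsy.symm) T62 T66 nzj (fun hsy => ntz hsy.symm) dxz dxj (dtx.symm) duj dut dzj (dtz.symm)).elim
                · by_cases T67 : G.Adj u t
                  · exact Or.inr (Or.inr (Or.inl ⟨T1, T37, T52, T62, T63, T64, T65, T67⟩))
                  · exact Or.inr (Or.inl ⟨T1, T37, T52, T62, T63, T64, T65, T67⟩)
              · by_cases T68 : G.Adj u z
                · exact (absHouse h2 (ayp.symm) (azp.symm) (axp.symm) T68 T63 (axy.symm) (fun hsy => T1 hsy.symm) T64 nyz (fun hsy => nxz hsy.symm) (dup.symm) duy dyz (dxz.symm)).elim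
                · by_cases T69 : G.Adj u t
                  · exact (absHouse h2 (ayp.symm) (atp.symm) (axp.symm) T69 T63 (axy.symm) (fun hsy => T1 hsy.symm) T64 (fun hsy => nty hsy.symm) ntx (dup.symm) duy (dty.symm) dtx).elim
                  · exact (absP32 h1 (axy.symm) (T63.symm) (atj.symm) (fun hsy => T64 hsy.symm) nyj (fun hsy => nty hsy.symm) nxj (fun hsy => ntx hsy.symm) T62 T69 (duy.symm) dyj (dty.symm) dxj (dtx.symm) duj dut).elim
            · by_cases T70 : G.Adj u y
              · by_cases T71 : G.Adj u z
                · exact (absHouse h2 (axp.symm) (azp.symm) (ayp.symm) T71 T70 axy (fun hsy => T1 hsy.symm) T63 nxz (fun hsy => nyz hsy.symm) (dup.symm) dux dxz (dyz.symm)).elim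
                · by_cases T72 : G.Adj u t
                  · exact (absHouse h2 (axp.symm) (atp.symm) (ayp.symm) T72 T70 axy (fun hsy => T1 hsy.symm) T63 (fun hsy => ntx hsy.symm) nty (dup.symm) dux (dtx.symm) dty).elim
                  · exact (absP32 h1 axy (T70.symm) (atj.symm) (fun hsy => T63 hsy.symm) nxj (fun hsy => ntx hsy.symm) nyj (fun hsy => nty hsy.symm) T62 T72 (dux.symm) dxj (dtx.symm) dyj (dty.symm) duj dut).elim
              · by_cases T73 : G.Adj u z
                · by_cases T74 : G.Adj u t
                  · exact (absP32 h1 (atj.symm) (T74.symm) axy (fun hsy => T62 hsy.symm) (fun hsy => nxj hsy.symm) (fun hsy => nyj hsy.symm) ntx nty T63 T70 (duj.symm) (dxj.symm) (dyj.symm) dtx dty dux duy).elim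
                  · exact Or.inr (Or.inr (Or.inr (Or.inl ⟨T1, T37, T52, T62, T63, T70, T73, T74⟩)))
                · by_cases T75 : G.Adj u t
                  · exact (absP32 h1 axk (azk.symm) (T75.symm) nxz (fun hsy => ntx hsy.symm) (fun hsy => T63 hsy.symm) (fun hsy => ntk hsy.symm) (fun hsy => T52 hsy.symm) (fun hsy => ntz hsy.symm) (fun hsy => T73 hsy.symm) dxz (dtx.symm) (dux.symm) (dtk.symm) (duk.symm) (dtz.symm) (duz.symm)).elim
                  · exact Or.inl ⟨T1, T37, T52, T62, T63, T70, T73, T75⟩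
  have TK : ∀ u v w : V, u ∉ H → v ∉ H → w ∉ H →
      (∃ n ∈ H, G.Adj u n) → (∃ n ∈ H, G.Adj v n) → (∃ n ∈ H, G.Adj w n) →
      (∃ m ∈ H, ¬G.Adj u m) → (∃ m ∈ H, ¬G.Adj v m) → (∃ m ∈ H, ¬G.Adj w m) →
      G.Adj u v → G.Adj u w → v ≠ w → False := by
    intro u v w huH hvH hwH hnu hnv hnw hmu hmv hmw auv auw dvw
    have hmu2 := hmu
    obtain ⟨mu, hmuH, humu⟩ := hmu2
    obtain ⟨⟨-, -, -, -⟩, amup, amuq, amuk, -⟩ := (HH mu).mp hmuH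
    have hnu2 := hnu
    obtain ⟨nu, hnuH, hunu⟩ := hnu2
    have dup : u ≠ p := fun e => humu (by rw [e]; exact amup.symm)
    have duq : u ≠ q := fun e => humu (by rw [e]; exact amuq.symm)
    have duk : u ≠ k := fun e => humu (by rw [e]; exact amuk.symm)
    have duj : u ≠ j := fun e => ((HH nu).mp hnuH).2.2.2.2 ((by rw [← e]; exact hunu : G.Adj j nu).symm)
    have dut : u ≠ t := fun e => tNoH nu hnuH (by rw [← e]; exact hunu)
    have dux : u ≠ x := fun e => huH (e ▸ hxH)
    have duy : u ≠ y := fun e => huH (e ▸ hyH)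
    have duz : u ≠ z := fun e => huH (e ▸ hzH)
    have hmv2 := hmv
    obtain ⟨mv, hmvH, hvmv⟩ := hmv2
    obtain ⟨⟨-, -, -, -⟩, amvp, amvq, amvk, -⟩ := (HH mv).mp hmvH
    have hnv2 := hnv
    obtain ⟨nv, hnvH, hvnv⟩ := hnv2
    have dvp : v ≠ p := fun e => hvmv (by rw [e]; exact amvp.symm)
    have dvq : v ≠ q := fun e => hvmv (by rw [e]; exact amvq.symm)
    have dvk : v ≠ k := fun e => hvmv (by rw [e]; exact amvk.symm)
    have dvj : v ≠ j := fun e => ((HH nv).mp hnvH).2.2.2.2 ((by rw [← e]; exact hvnv : G.Adj j nv).symm)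
    have dvt : v ≠ t := fun e => tNoH nv hnvH (by rw [← e]; exact hvnv)
    have dvx : v ≠ x := fun e => hvH (e ▸ hxH)
    have dvy : v ≠ y := fun e => hvH (e ▸ hyH)
    have dvz : v ≠ z := fun e => hvH (e ▸ hzH)
    have hmw2 := hmw
    obtain ⟨mw, hmwH, hwmw⟩ := hmw2
    obtain ⟨⟨-, -, -, -⟩, amwp, amwq, amwk, -⟩ := (HH mw).mp hmwH
    have hnw2 := hnw
    obtain ⟨nw, hnwH, hwnw⟩ := hnw2
    have dwp : w ≠ p := fun e => hwmw (by rw [e]; exact amwp.symm)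
    have dwq : w ≠ q := fun e => hwmw (by rw [e]; exact amwq.symm)
    have dwk : w ≠ k := fun e => hwmw (by rw [e]; exact amwk.symm)
    have dwj : w ≠ j := fun e => ((HH nw).mp hnwH).2.2.2.2 ((by rw [← e]; exact hwnw : G.Adj j nw).symm)
    have dwt : w ≠ t := fun e => tNoH nw hnwH (by rw [← e]; exact hwnw)
    have dwx : w ≠ x := fun e => hwH (e ▸ hxH)
    have dwy : w ≠ y := fun e => hwH (e ▸ hyH)
    have dwz : w ≠ z := fun e => hwH (e ▸ hzH)
    rcases TP u huH hnu hmu with ⟨U1,U2,U3,U4,U5,U6,U7,U8⟩|⟨U1,U2,U3,U4,U5,U6,U7,U8⟩|⟨U1,U2,U3,U4,U5,U6,U7,U8⟩|⟨U1,U2,U3,U4,U5,U6,U7,U8⟩|⟨U1,U2,U3,U4,U5,U6,U7,U8⟩|⟨U1,U2,U3,U4,U5,U6,U7,U8⟩|⟨U1,U2,U3,U4,U5,U6,U7,U8⟩|⟨U1,U2,U3,U4,U5,U6,U7,U8⟩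
    · rcases TP v hvH hnv hmv with ⟨V1,V2,V3,V4,V5,V6,V7,V8⟩|⟨V1,V2,V3,V4,V5,V6,V7,V8⟩|⟨V1,V2,V3,V4,V5,V6,V7,V8⟩|⟨V1,V2,V3,V4,V5,V6,V7,V8⟩|⟨V1,V2,V3,V4,V5,V6,V7,V8⟩|⟨V1,V2,V3,V4,V5,V6,V7,V8⟩|⟨V1,V2,V3,V4,V5,V6,V7,V8⟩|⟨V1,V2,V3,V4,V5,V6,V7,V8⟩
      · exact absP32 h1 (axp.symm) axk auv npk (fun hsy => U1 hsy.symm) (fun hsy => V1 hsy.symm) (fun hsy => U5 hsy.symm) (fun hsy => V5 hsy.symm) (fun hsy => U3 hsy.symm) (fun hsy => V3 hsy.symm) dpk (dup.symm) (dvp.symm) (dux.symm) (dvx.symm) (duk.symm) (dvk.symm)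
      · exact absP32 h1 (azp.symm) azk auv npk (fun hsy => U1 hsy.symm) (fun hsy => V1 hsy.symm) (fun hsy => U7 hsy.symm) (fun hsy => V7 hsy.symm) (fun hsy => U3 hsy.symm) (fun hsy => V3 hsy.symm) dpk (dup.symm) (dvp.symm) (duz.symm) (dvz.symm) (duk.symm) (dvk.symm)
      · exact absP32 h1 (azp.symm) azk auv npk (fun hsy => U1 hsy.symm) (fun hsy => V1 hsy.symm) (fun hsy => U7 hsy.symm) (fun hsy => V7 hsy.symm) (fun hsy => U3 hsy.symm) (fun hsy => V3 hsy.symm) dpk (dup.symm) (dvp.symm) (duz.symm) (dvz.symm) (duk.symm) (dvk.symm)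
      · exact absP32 h1 (axp.symm) axk auv npk (fun hsy => U1 hsy.symm) (fun hsy => V1 hsy.symm) (fun hsy => U5 hsy.symm) (fun hsy => V5 hsy.symm) (fun hsy => U3 hsy.symm) (fun hsy => V3 hsy.symm) dpk (dup.symm) (dvp.symm) (dux.symm) (dvx.symm) (duk.symm) (dvk.symm)
      · rcases TP w hwH hnw hmw with ⟨W1,W2,W3,W4,W5,W6,W7,W8⟩|⟨W1,W2,W3,W4,W5,W6,W7,W8⟩|⟨W1,W2,W3,W4,W5,W6,W7,W8⟩|⟨W1,W2,W3,W4,W5,W6,W7,W8⟩|⟨W1,W2,W3,W4,W5,W6,W7,W8⟩|⟨W1,W2,W3,W4,W5,W6,W7,W8⟩|⟨W1,W2,W3,W4,W5,W6,W7,W8⟩|⟨W1,W2,W3,W4,W5,W6,W7,W8⟩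
        · exact absP32 h1 (axp.symm) axk auw npk (fun hsy => U1 hsy.symm) (fun hsy => W1 hsy.symm) (fun hsy => U5 hsy.symm) (fun hsy => W5 hsy.symm) (fun hsy => U3 hsy.symm) (fun hsy => W3 hsy.symm) dpk (dup.symm) (dwp.symm) (dux.symm) (dwx.symm) (duk.symm) (dwk.symm)
        · exact absP32 h1 (azp.symm) azk auw npk (fun hsy => U1 hsy.symm) (fun hsy => W1 hsy.symm) (fun hsy => U7 hsy.symm) (fun hsy => W7 hsy.symm) (fun hsy => U3 hsy.symm) (fun hsy => W3 hsy.symm) dpk (dup.symm) (dwp.symm) (duz.symm) (dwz.symm) (duk.symm) (dwk.symm)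
        · exact absP32 h1 (azp.symm) azk auw npk (fun hsy => U1 hsy.symm) (fun hsy => W1 hsy.symm) (fun hsy => U7 hsy.symm) (fun hsy => W7 hsy.symm) (fun hsy => U3 hsy.symm) (fun hsy => W3 hsy.symm) dpk (dup.symm) (dwp.symm) (duz.symm) (dwz.symm) (duk.symm) (dwk.symm)
        · exact absP32 h1 (axp.symm) axk auw npk (fun hsy => U1 hsy.symm) (fun hsy => W1 hsy.symm) (fun hsy => U5 hsy.symm) (fun hsy => W5 hsy.symm) (fun hsy => U3 hsy.symm) (fun hsy => W3 hsy.symm) dpk (dup.symm) (dwp.symm) (dux.symm) (dwx.symm) (duk.symm) (dwk.symm)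
        · by_cases Bvw : G.Adj v w
          · obtain ⟨m, hmH, hdm⟩ := hmv
            have dmx : m ≠ x := fun e => hdm (by rw [e]; exact V5)
            have dmy : m ≠ y := fun e => hdm (by rw [e]; exact V6)
            have dmz : m ≠ z := fun e => hdm (by rw [e]; exact V7)
            have dmt : m ≠ t := fun e => htH (e ▸ hmH)
            have dum : u ≠ m := fun e => huH (e ▸ hmH)
            have dvm : v ≠ m := fun e => hvH (e ▸ hmH)
            have dwm : w ≠ m := fun e => hwH (e ▸ hmH)
            obtain ⟨⟨dmp, dmq, dmk, dmj⟩, amp2, amq2, amk2, nmj2⟩ := (HH m).mp hmH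
            rcases CL m hmH dmx dmy dmz with ⟨c1,c2,c3,c4⟩|⟨c1,c2,c3,c4⟩|⟨c1,c2,c3,c4⟩
            · exact absHouse h2 (amp2.symm) (azp.symm) (axp.symm) V7 V5 c1 (fun hsy => V1 hsy.symm) hdm c3 (fun hsy => nxz hsy.symm) (dvp.symm) dvm dmz (dxz.symm)
            · exact absHouse h2 (amp2.symm) (axp.symm) (azp.symm) V5 V7 c3 (fun hsy => V1 hsy.symm) hdm c1 nxz (dvp.symm) dvm dmx dxz
            · by_cases B45 : G.Adj m u
              · by_cases B46 : G.Adj m w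
                · exact absHouse h2 (auw.symm) W5 (B46.symm) (axp.symm) (amp2.symm) (B45.symm) W1 (fun hsy => U1 hsy.symm) U5 (fun hsy => c1 hsy.symm) dwp (dup.symm) dux (dmx.symm)
                · exact absP32 h1 (amp2.symm) amk2 Bvw npk (fun hsy => V1 hsy.symm) (fun hsy => W1 hsy.symm) (fun hsy => hdm hsy.symm) B46 (fun hsy => V3 hsy.symm) (fun hsy => W3 hsy.symm) dpk (dvp.symm) (dwp.symm) (dvm.symm) (dwm.symm) (dvk.symm) (dwk.symm)
              · exact absP32 h1 (amp2.symm) amk2 auv npk (fun hsy => U1 hsy.symm) (fun hsy => V1 hsy.symm) B45 (fun hsy => hdm hsy.symm) (fun hsy => U3 hsy.symm) (fun hsy => V3 hsy.symm) dpk (dup.symm) (dvp.symm) (dum.symm) (dvm.symm) (duk.symm) (dvk.symm)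
          · exact absP32 h1 (auv.symm) auw apq Bvw V1 V2 U1 U2 W1 W2 dvw dvp dvq dup duq dwp dwq
        · exact absP32 h1 (W1.symm) (auw.symm) akj (fun hsy => U1 hsy.symm) npk npj W3 W4 U3 U4 (dup.symm) dpk dpj dwk dwj duk duj
        · exact absP32 h1 (W1.symm) (auw.symm) akj (fun hsy => U1 hsy.symm) npk npj W3 W4 U3 U4 (dup.symm) dpk dpj dwk dwj duk duj
        · exact absP32 h1 (W3.symm) (auw.symm) apq (fun hsy => U3 hsy.symm) (fun hsy => npk hsy.symm) (fun hsy => nqk hsy.symm) W1 W2 U1 U2 (duk.symm) (dpk.symm) (dqk.symm) dwp dwq dup duq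
      · exact absP32 h1 (V1.symm) (auv.symm) akj (fun hsy => U1 hsy.symm) npk npj V3 V4 U3 U4 (dup.symm) dpk dpj dvk dvj duk duj
      · exact absP32 h1 (V1.symm) (auv.symm) akj (fun hsy => U1 hsy.symm) npk npj V3 V4 U3 U4 (dup.symm) dpk dpj dvk dvj duk duj
      · exact absP32 h1 (V3.symm) (auv.symm) apq (fun hsy => U3 hsy.symm) (fun hsy => npk hsy.symm) (fun hsy => nqk hsy.symm) V1 V2 U1 U2 (duk.symm) (dpk.symm) (dqk.symm) dvp dvq dup duq
    · rcases TP v hvH hnv hmv with ⟨V1,V2,V3,V4,V5,V6,V7,V8⟩|⟨V1,V2,V3,V4,V5,V6,V7,V8⟩|⟨V1,V2,V3,V4,V5,V6,V7,V8⟩|⟨V1,V2,V3,V4,V5,V6,V7,V8⟩|⟨V1,V2,V3,V4,V5,V6,V7,V8⟩|⟨V1,V2,V3,V4,V5,V6,V7,V8⟩|⟨V1,V2,V3,V4,V5,V6,V7,V8⟩|⟨V1,V2,V3,V4,V5,V6,V7,V8⟩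
      · exact absP32 h1 (azp.symm) azk auv npk (fun hsy => U1 hsy.symm) (fun hsy => V1 hsy.symm) (fun hsy => U7 hsy.symm) (fun hsy => V7 hsy.symm) (fun hsy => U3 hsy.symm) (fun hsy => V3 hsy.symm) dpk (dup.symm) (dvp.symm) (duz.symm) (dvz.symm) (duk.symm) (dvk.symm)
      · exact absP32 h1 (azp.symm) azk auv npk (fun hsy => U1 hsy.symm) (fun hsy => V1 hsy.symm) (fun hsy => U7 hsy.symm) (fun hsy => V7 hsy.symm) (fun hsy => U3 hsy.symm) (fun hsy => V3 hsy.symm) dpk (dup.symm) (dvp.symm) (duz.symm) (dvz.symm) (duk.symm) (dvk.symm)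
      · exact absP32 h1 (azp.symm) azk auv npk (fun hsy => U1 hsy.symm) (fun hsy => V1 hsy.symm) (fun hsy => U7 hsy.symm) (fun hsy => V7 hsy.symm) (fun hsy => U3 hsy.symm) (fun hsy => V3 hsy.symm) dpk (dup.symm) (dvp.symm) (duz.symm) (dvz.symm) (duk.symm) (dvk.symm)
      · exact absP32 h1 (atp.symm) atj auv npj (fun hsy => U1 hsy.symm) (fun hsy => V1 hsy.symm) (fun hsy => U8 hsy.symm) (fun hsy => V8 hsy.symm) (fun hsy => U4 hsy.symm) (fun hsy => V4 hsy.symm) dpj (dup.symm) (dvp.symm) (dut.symm) (dvt.symm) (duj.symm) (dvj.symm)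
      · exact absHouse h2 (U5.symm) axp (V5.symm) azp (V7.symm) auv nxz (fun hsy => U7 hsy.symm) U1 (fun hsy => V1 hsy.symm) dxz (duz.symm) dup (dvp.symm)
      · exact absP32 h1 (V1.symm) (auv.symm) akj (fun hsy => U1 hsy.symm) npk npj V3 V4 U3 U4 (dup.symm) dpk dpj dvk dvj duk duj
      · exact absP32 h1 (V1.symm) (auv.symm) akj (fun hsy => U1 hsy.symm) npk npj V3 V4 U3 U4 (dup.symm) dpk dpj dvk dvj duk duj
      · exact absP32 h1 (V3.symm) (auv.symm) apq (fun hsy => U3 hsy.symm) (fun hsy => npk hsy.symm) (fun hsy => nqk hsy.symm) V1 V2 U1 U2 (duk.symm) (dpk.symm) (dqk.symm) dvp dvq dup duq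
    · rcases TP v hvH hnv hmv with ⟨V1,V2,V3,V4,V5,V6,V7,V8⟩|⟨V1,V2,V3,V4,V5,V6,V7,V8⟩|⟨V1,V2,V3,V4,V5,V6,V7,V8⟩|⟨V1,V2,V3,V4,V5,V6,V7,V8⟩|⟨V1,V2,V3,V4,V5,V6,V7,V8⟩|⟨V1,V2,V3,V4,V5,V6,V7,V8⟩|⟨V1,V2,V3,V4,V5,V6,V7,V8⟩|⟨V1,V2,V3,V4,V5,V6,V7,V8⟩
      · exact absP32 h1 (azp.symm) azk auv npk (fun hsy => U1 hsy.symm) (fun hsy => V1 hsy.symm) (fun hsy => U7 hsy.symm) (fun hsy => V7 hsy.symm) (fun hsy => U3 hsy.symm) (fun hsy => V3 hsy.symm) dpk (dup.symm) (dvp.symm) (duz.symm) (dvz.symm) (duk.symm) (dvk.symm)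
      · exact absP32 h1 (azp.symm) azk auv npk (fun hsy => U1 hsy.symm) (fun hsy => V1 hsy.symm) (fun hsy => U7 hsy.symm) (fun hsy => V7 hsy.symm) (fun hsy => U3 hsy.symm) (fun hsy => V3 hsy.symm) dpk (dup.symm) (dvp.symm) (duz.symm) (dvz.symm) (duk.symm) (dvk.symm)
      · exact absP32 h1 (azp.symm) azk auv npk (fun hsy => U1 hsy.symm) (fun hsy => V1 hsy.symm) (fun hsy => U7 hsy.symm) (fun hsy => V7 hsy.symm) (fun hsy => U3 hsy.symm) (fun hsy => V3 hsy.symm) dpk (dup.symm) (dvp.symm) (duz.symm) (dvz.symm) (duk.symm) (dvk.symm)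
      · rcases TP w hwH hnw hmw with ⟨W1,W2,W3,W4,W5,W6,W7,W8⟩|⟨W1,W2,W3,W4,W5,W6,W7,W8⟩|⟨W1,W2,W3,W4,W5,W6,W7,W8⟩|⟨W1,W2,W3,W4,W5,W6,W7,W8⟩|⟨W1,W2,W3,W4,W5,W6,W7,W8⟩|⟨W1,W2,W3,W4,W5,W6,W7,W8⟩|⟨W1,W2,W3,W4,W5,W6,W7,W8⟩|⟨W1,W2,W3,W4,W5,W6,W7,W8⟩
        · exact absP32 h1 (azp.symm) azk auw npk (fun hsy => U1 hsy.symm) (fun hsy => W1 hsy.symm) (fun hsy => U7 hsy.symm) (fun hsy => W7 hsy.symm) (fun hsy => U3 hsy.symm) (fun hsy => W3 hsy.symm) dpk (dup.symm) (dwp.symm) (duz.symm) (dwz.symm) (duk.symm) (dwk.symm)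
        · exact absP32 h1 (azp.symm) azk auw npk (fun hsy => U1 hsy.symm) (fun hsy => W1 hsy.symm) (fun hsy => U7 hsy.symm) (fun hsy => W7 hsy.symm) (fun hsy => U3 hsy.symm) (fun hsy => W3 hsy.symm) dpk (dup.symm) (dwp.symm) (duz.symm) (dwz.symm) (duk.symm) (dwk.symm)
        · exact absP32 h1 (azp.symm) azk auw npk (fun hsy => U1 hsy.symm) (fun hsy => W1 hsy.symm) (fun hsy => U7 hsy.symm) (fun hsy => W7 hsy.symm) (fun hsy => U3 hsy.symm) (fun hsy => W3 hsy.symm) dpk (dup.symm) (dwp.symm) (duz.symm) (dwz.symm) (duk.symm) (dwk.symm)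
        · by_cases Bvw : G.Adj v w
          · exact absP32 h1 (axp.symm) axk Bvw npk (fun hsy => V1 hsy.symm) (fun hsy => W1 hsy.symm) (fun hsy => V5 hsy.symm) (fun hsy => W5 hsy.symm) (fun hsy => V3 hsy.symm) (fun hsy => W3 hsy.symm) dpk (dvp.symm) (dwp.symm) (dvx.symm) (dwx.symm) (dvk.symm) (dwk.symm)
          · exact absP32 h1 (auv.symm) auw apq Bvw V1 V2 U1 U2 W1 W2 dvw dvp dvq dup duq dwp dwq
        · exact absHouse h2 (U5.symm) axp (W5.symm) azp (W7.symm) auw nxz (fun hsy => U7 hsy.symm) U1 (fun hsy => W1 hsy.symm) dxz (duz.symm) dup (dwp.symm)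
        · exact absP32 h1 (W1.symm) (auw.symm) akj (fun hsy => U1 hsy.symm) npk npj W3 W4 U3 U4 (dup.symm) dpk dpj dwk dwj duk duj
        · exact absP32 h1 (W1.symm) (auw.symm) akj (fun hsy => U1 hsy.symm) npk npj W3 W4 U3 U4 (dup.symm) dpk dpj dwk dwj duk duj
        · exact absP32 h1 (W3.symm) (auw.symm) apq (fun hsy => U3 hsy.symm) (fun hsy => npk hsy.symm) (fun hsy => nqk hsy.symm) W1 W2 U1 U2 (duk.symm) (dpk.symm) (dqk.symm) dwp dwq dup duq
      · exact absHouse h2 (U5.symm) axp (V5.symm) azp (V7.symm) auv nxz (fun hsy => U7 hsy.symm) U1 (fun hsy => V1 hsy.symm) dxz (duz.symm) dup (dvp.symm)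
      · exact absP32 h1 (V1.symm) (auv.symm) akj (fun hsy => U1 hsy.symm) npk npj V3 V4 U3 U4 (dup.symm) dpk dpj dvk dvj duk duj
      · exact absP32 h1 (V1.symm) (auv.symm) akj (fun hsy => U1 hsy.symm) npk npj V3 V4 U3 U4 (dup.symm) dpk dpj dvk dvj duk duj
      · exact absP32 h1 (V3.symm) (auv.symm) apq (fun hsy => U3 hsy.symm) (fun hsy => npk hsy.symm) (fun hsy => nqk hsy.symm) V1 V2 U1 U2 (duk.symm) (dpk.symm) (dqk.symm) dvp dvq dup duq
    · rcases TP v hvH hnv hmv with ⟨V1,V2,V3,V4,V5,V6,V7,V8⟩|⟨V1,V2,V3,V4,V5,V6,V7,V8⟩|⟨V1,V2,V3,V4,V5,V6,V7,V8⟩|⟨V1,V2,V3,V4,V5,V6,V7,V8⟩|⟨V1,V2,V3,V4,V5,V6,V7,V8⟩|⟨V1,V2,V3,V4,V5,V6,V7,V8⟩|⟨V1,V2,V3,V4,V5,V6,V7,V8⟩|⟨V1,V2,V3,V4,V5,V6,V7,V8⟩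
      · exact absP32 h1 (axp.symm) axk auv npk (fun hsy => U1 hsy.symm) (fun hsy => V1 hsy.symm) (fun hsy => U5 hsy.symm) (fun hsy => V5 hsy.symm) (fun hsy => U3 hsy.symm) (fun hsy => V3 hsy.symm) dpk (dup.symm) (dvp.symm) (dux.symm) (dvx.symm) (duk.symm) (dvk.symm)
      · exact absP32 h1 (atp.symm) atj auv npj (fun hsy => U1 hsy.symm) (fun hsy => V1 hsy.symm) (fun hsy => U8 hsy.symm) (fun hsy => V8 hsy.symm) (fun hsy => U4 hsy.symm) (fun hsy => V4 hsy.symm) dpj (dup.symm) (dvp.symm) (dut.symm) (dvt.symm) (duj.symm) (dvj.symm)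
      · rcases TP w hwH hnw hmw with ⟨W1,W2,W3,W4,W5,W6,W7,W8⟩|⟨W1,W2,W3,W4,W5,W6,W7,W8⟩|⟨W1,W2,W3,W4,W5,W6,W7,W8⟩|⟨W1,W2,W3,W4,W5,W6,W7,W8⟩|⟨W1,W2,W3,W4,W5,W6,W7,W8⟩|⟨W1,W2,W3,W4,W5,W6,W7,W8⟩|⟨W1,W2,W3,W4,W5,W6,W7,W8⟩|⟨W1,W2,W3,W4,W5,W6,W7,W8⟩
        · exact absP32 h1 (axp.symm) axk auw npk (fun hsy => U1 hsy.symm) (fun hsy => W1 hsy.symm) (fun hsy => U5 hsy.symm) (fun hsy => W5 hsy.symm) (fun hsy => U3 hsy.symm) (fun hsy => W3 hsy.symm) dpk (dup.symm) (dwp.symm) (dux.symm) (dwx.symm) (duk.symm) (dwk.symm)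
        · exact absP32 h1 (atp.symm) atj auw npj (fun hsy => U1 hsy.symm) (fun hsy => W1 hsy.symm) (fun hsy => U8 hsy.symm) (fun hsy => W8 hsy.symm) (fun hsy => U4 hsy.symm) (fun hsy => W4 hsy.symm) dpj (dup.symm) (dwp.symm) (dut.symm) (dwt.symm) (duj.symm) (dwj.symm)
        · by_cases Bvw : G.Adj v w
          · exact absP32 h1 (azp.symm) azk Bvw npk (fun hsy => V1 hsy.symm) (fun hsy => W1 hsy.symm) (fun hsy => V7 hsy.symm) (fun hsy => W7 hsy.symm) (fun hsy => V3 hsy.symm) (fun hsy => W3 hsy.symm) dpk (dvp.symm) (dwp.symm) (dvz.symm) (dwz.symm) (dvk.symm) (dwk.symm)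
          · exact absP32 h1 (auv.symm) auw apq Bvw V1 V2 U1 U2 W1 W2 dvw dvp dvq dup duq dwp dwq
        · exact absP32 h1 (axp.symm) axk auw npk (fun hsy => U1 hsy.symm) (fun hsy => W1 hsy.symm) (fun hsy => U5 hsy.symm) (fun hsy => W5 hsy.symm) (fun hsy => U3 hsy.symm) (fun hsy => W3 hsy.symm) dpk (dup.symm) (dwp.symm) (dux.symm) (dwx.symm) (duk.symm) (dwk.symm)
        · exact absHouse h2 (U7.symm) azp (W7.symm) axp (W5.symm) auw (fun hsy => nxz hsy.symm) (fun hsy => U5 hsy.symm) U1 (fun hsy => W1 hsy.symm) (dxz.symm) (dux.symm) dup (dwp.symm)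
        · exact absP32 h1 (W1.symm) (auw.symm) akj (fun hsy => U1 hsy.symm) npk npj W3 W4 U3 U4 (dup.symm) dpk dpj dwk dwj duk duj
        · exact absP32 h1 (W1.symm) (auw.symm) akj (fun hsy => U1 hsy.symm) npk npj W3 W4 U3 U4 (dup.symm) dpk dpj dwk dwj duk duj
        · exact absP32 h1 (W3.symm) (auw.symm) apq (fun hsy => U3 hsy.symm) (fun hsy => npk hsy.symm) (fun hsy => nqk hsy.symm) W1 W2 U1 U2 (duk.symm) (dpk.symm) (dqk.symm) dwp dwq dup duq
      · exact absP32 h1 (axp.symm) axk auv npk (fun hsy => U1 hsy.symm) (fun hsy => V1 hsy.symm) (fun hsy => U5 hsy.symm) (fun hsy => V5 hsy.symm) (fun hsy => U3 hsy.symm) (fun hsy => V3 hsy.symm) dpk (dup.symm) (dvp.symm) (dux.symm) (dvx.symm) (duk.symm) (dvk.symm)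
      · exact absHouse h2 (U7.symm) azp (V7.symm) axp (V5.symm) auv (fun hsy => nxz hsy.symm) (fun hsy => U5 hsy.symm) U1 (fun hsy => V1 hsy.symm) (dxz.symm) (dux.symm) dup (dvp.symm)
      · exact absP32 h1 (V1.symm) (auv.symm) akj (fun hsy => U1 hsy.symm) npk npj V3 V4 U3 U4 (dup.symm) dpk dpj dvk dvj duk duj
      · exact absP32 h1 (V1.symm) (auv.symm) akj (fun hsy => U1 hsy.symm) npk npj V3 V4 U3 U4 (dup.symm) dpk dpj dvk dvj duk duj
      · exact absP32 h1 (V3.symm) (auv.symm) apq (fun hsy => U3 hsy.symm) (fun hsy => npk hsy.symm) (fun hsy => nqk hsy.symm) V1 V2 U1 U2 (duk.symm) (dpk.symm) (dqk.symm) dvp dvq dup duq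
    · rcases TP v hvH hnv hmv with ⟨V1,V2,V3,V4,V5,V6,V7,V8⟩|⟨V1,V2,V3,V4,V5,V6,V7,V8⟩|⟨V1,V2,V3,V4,V5,V6,V7,V8⟩|⟨V1,V2,V3,V4,V5,V6,V7,V8⟩|⟨V1,V2,V3,V4,V5,V6,V7,V8⟩|⟨V1,V2,V3,V4,V5,V6,V7,V8⟩|⟨V1,V2,V3,V4,V5,V6,V7,V8⟩|⟨V1,V2,V3,V4,V5,V6,V7,V8⟩
      · rcases TP w hwH hnw hmw with ⟨W1,W2,W3,W4,W5,W6,W7,W8⟩|⟨W1,W2,W3,W4,W5,W6,W7,W8⟩|⟨W1,W2,W3,W4,W5,W6,W7,W8⟩|⟨W1,W2,W3,W4,W5,W6,W7,W8⟩|⟨W1,W2,W3,W4,W5,W6,W7,W8⟩|⟨W1,W2,W3,W4,W5,W6,W7,W8⟩|⟨W1,W2,W3,W4,W5,W6,W7,W8⟩|⟨W1,W2,W3,W4,W5,W6,W7,W8⟩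
        · by_cases Bvw : G.Adj v w
          · exact absP32 h1 (axp.symm) axk Bvw npk (fun hsy => V1 hsy.symm) (fun hsy => W1 hsy.symm) (fun hsy => V5 hsy.symm) (fun hsy => W5 hsy.symm) (fun hsy => V3 hsy.symm) (fun hsy => W3 hsy.symm) dpk (dvp.symm) (dwp.symm) (dvx.symm) (dwx.symm) (dvk.symm) (dwk.symm)
          · exact absP32 h1 (auv.symm) auw apq Bvw V1 V2 U1 U2 W1 W2 dvw dvp dvq dup duq dwp dwq
        · exact absHouse h2 (W5.symm) axp (U5.symm) azp (U7.symm) (auw.symm) nxz (fun hsy => W7 hsy.symm) W1 (fun hsy => U1 hsy.symm) dxz (dwz.symm) dwp (dup.symm)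
        · exact absHouse h2 (W5.symm) axp (U5.symm) azp (U7.symm) (auw.symm) nxz (fun hsy => W7 hsy.symm) W1 (fun hsy => U1 hsy.symm) dxz (dwz.symm) dwp (dup.symm)
        · exact absHouse h2 (W7.symm) azp (U7.symm) axp (U5.symm) (auw.symm) (fun hsy => nxz hsy.symm) (fun hsy => W5 hsy.symm) W1 (fun hsy => U1 hsy.symm) (dxz.symm) (dwx.symm) dwp (dup.symm)
        · by_cases Bvw : G.Adj v w
          · obtain ⟨m, hmH, hdm⟩ := hmu
            have dmx : m ≠ x := fun e => hdm (by rw [e]; exact U5)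
            have dmy : m ≠ y := fun e => hdm (by rw [e]; exact U6)
            have dmz : m ≠ z := fun e => hdm (by rw [e]; exact U7)
            have dmt : m ≠ t := fun e => htH (e ▸ hmH)
            have dum : u ≠ m := fun e => huH (e ▸ hmH)
            have dvm : v ≠ m := fun e => hvH (e ▸ hmH)
            have dwm : w ≠ m := fun e => hwH (e ▸ hmH)
            obtain ⟨⟨dmp, dmq, dmk, dmj⟩, amp2, amq2, amk2, nmj2⟩ := (HH m).mp hmH
            rcases CL m hmH dmx dmy dmz with ⟨c1,c2,c3,c4⟩|⟨c1,c2,c3,c4⟩|⟨c1,c2,c3,c4⟩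
            · exact absHouse h2 (amp2.symm) (azp.symm) (axp.symm) U7 U5 c1 (fun hsy => U1 hsy.symm) hdm c3 (fun hsy => nxz hsy.symm) (dup.symm) dum dmz (dxz.symm)
            · exact absHouse h2 (amp2.symm) (axp.symm) (azp.symm) U5 U7 c3 (fun hsy => U1 hsy.symm) hdm c1 nxz (dup.symm) dum dmx dxz
            · by_cases B47 : G.Adj m v
              · by_cases B48 : G.Adj m w
                · exact absHouse h2 (U5.symm) axp (W5.symm) amp2 B48 auw (fun hsy => c1 hsy.symm) (fun hsy => hdm hsy.symm) U1 (fun hsy => W1 hsy.symm) (dmx.symm) (dum.symm) dup (dwp.symm)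
                · exact absP32 h1 (amp2.symm) amk2 auw npk (fun hsy => U1 hsy.symm) (fun hsy => W1 hsy.symm) (fun hsy => hdm hsy.symm) B48 (fun hsy => U3 hsy.symm) (fun hsy => W3 hsy.symm) dpk (dup.symm) (dwp.symm) (dum.symm) (dwm.symm) (duk.symm) (dwk.symm)
              · exact absP32 h1 (amp2.symm) amk2 auv npk (fun hsy => U1 hsy.symm) (fun hsy => V1 hsy.symm) (fun hsy => hdm hsy.symm) B47 (fun hsy => U3 hsy.symm) (fun hsy => V3 hsy.symm) dpk (dup.symm) (dvp.symm) (dum.symm) (dvm.symm) (duk.symm) (dvk.symm)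
          · exact absP32 h1 (auv.symm) auw apq Bvw V1 V2 U1 U2 W1 W2 dvw dvp dvq dup duq dwp dwq
        · exact absP32 h1 (W1.symm) (auw.symm) akj (fun hsy => U1 hsy.symm) npk npj W3 W4 U3 U4 (dup.symm) dpk dpj dwk dwj duk duj
        · exact absP32 h1 (W1.symm) (auw.symm) akj (fun hsy => U1 hsy.symm) npk npj W3 W4 U3 U4 (dup.symm) dpk dpj dwk dwj duk duj
        · exact absP32 h1 (W3.symm) (auw.symm) apq (fun hsy => U3 hsy.symm) (fun hsy => npk hsy.symm) (fun hsy => nqk hsy.symm) W1 W2 U1 U2 (duk.symm) (dpk.symm) (dqk.symm) dwp dwq dup duq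
      · exact absHouse h2 (V5.symm) axp (U5.symm) azp (U7.symm) (auv.symm) nxz (fun hsy => V7 hsy.symm) V1 (fun hsy => U1 hsy.symm) dxz (dvz.symm) dvp (dup.symm)
      · exact absHouse h2 (V5.symm) axp (U5.symm) azp (U7.symm) (auv.symm) nxz (fun hsy => V7 hsy.symm) V1 (fun hsy => U1 hsy.symm) dxz (dvz.symm) dvp (dup.symm)
      · exact absHouse h2 (V7.symm) azp (U7.symm) axp (U5.symm) (auv.symm) (fun hsy => nxz hsy.symm) (fun hsy => V5 hsy.symm) V1 (fun hsy => U1 hsy.symm) (dxz.symm) (dvx.symm) dvp (dup.symm)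
      · rcases TP w hwH hnw hmw with ⟨W1,W2,W3,W4,W5,W6,W7,W8⟩|⟨W1,W2,W3,W4,W5,W6,W7,W8⟩|⟨W1,W2,W3,W4,W5,W6,W7,W8⟩|⟨W1,W2,W3,W4,W5,W6,W7,W8⟩|⟨W1,W2,W3,W4,W5,W6,W7,W8⟩|⟨W1,W2,W3,W4,W5,W6,W7,W8⟩|⟨W1,W2,W3,W4,W5,W6,W7,W8⟩|⟨W1,W2,W3,W4,W5,W6,W7,W8⟩
        · by_cases Bvw : G.Adj v w
          · obtain ⟨m, hmH, hdm⟩ := hmu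
            have dmx : m ≠ x := fun e => hdm (by rw [e]; exact U5)
            have dmy : m ≠ y := fun e => hdm (by rw [e]; exact U6)
            have dmz : m ≠ z := fun e => hdm (by rw [e]; exact U7)
            have dmt : m ≠ t := fun e => htH (e ▸ hmH)
            have dum : u ≠ m := fun e => huH (e ▸ hmH)
            have dvm : v ≠ m := fun e => hvH (e ▸ hmH)
            have dwm : w ≠ m := fun e => hwH (e ▸ hmH)
            obtain ⟨⟨dmp, dmq, dmk, dmj⟩, amp2, amq2, amk2, nmj2⟩ := (HH m).mp hmH
            rcases CL m hmH dmx dmy dmz with ⟨c1,c2,c3,c4⟩|⟨c1,c2,c3,c4⟩|⟨c1,c2,c3,c4⟩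
            · exact absHouse h2 (amp2.symm) (azp.symm) (axp.symm) U7 U5 c1 (fun hsy => U1 hsy.symm) hdm c3 (fun hsy => nxz hsy.symm) (dup.symm) dum dmz (dxz.symm)
            · exact absHouse h2 (amp2.symm) (axp.symm) (azp.symm) U5 U7 c3 (fun hsy => U1 hsy.symm) hdm c1 nxz (dup.symm) dum dmx dxz
            · by_cases B49 : G.Adj m v
              · exact absHouse h2 (U5.symm) axp (V5.symm) amp2 B49 auv (fun hsy => c1 hsy.symm) (fun hsy => hdm hsy.symm) U1 (fun hsy => V1 hsy.symm) (dmx.symm) (dum.symm) dup (dvp.symm)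
              · exact absP32 h1 (amp2.symm) amk2 auv npk (fun hsy => U1 hsy.symm) (fun hsy => V1 hsy.symm) (fun hsy => hdm hsy.symm) B49 (fun hsy => U3 hsy.symm) (fun hsy => V3 hsy.symm) dpk (dup.symm) (dvp.symm) (dum.symm) (dvm.symm) (duk.symm) (dvk.symm)
          · exact absP32 h1 (auv.symm) auw apq Bvw V1 V2 U1 U2 W1 W2 dvw dvp dvq dup duq dwp dwq
        · exact absHouse h2 (W5.symm) axp (U5.symm) azp (U7.symm) (auw.symm) nxz (fun hsy => W7 hsy.symm) W1 (fun hsy => U1 hsy.symm) dxz (dwz.symm) dwp (dup.symm)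
        · exact absHouse h2 (W5.symm) axp (U5.symm) azp (U7.symm) (auw.symm) nxz (fun hsy => W7 hsy.symm) W1 (fun hsy => U1 hsy.symm) dxz (dwz.symm) dwp (dup.symm)
        · exact absHouse h2 (W7.symm) azp (U7.symm) axp (U5.symm) (auw.symm) (fun hsy => nxz hsy.symm) (fun hsy => W5 hsy.symm) W1 (fun hsy => U1 hsy.symm) (dxz.symm) (dwx.symm) dwp (dup.symm)
        · by_cases Bvw : G.Adj v w
          · obtain ⟨m, hmH, hdm⟩ := hmu
            have dmx : m ≠ x := fun e => hdm (by rw [e]; exact U5)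
            have dmy : m ≠ y := fun e => hdm (by rw [e]; exact U6)
            have dmz : m ≠ z := fun e => hdm (by rw [e]; exact U7)
            have dmt : m ≠ t := fun e => htH (e ▸ hmH)
            have dum : u ≠ m := fun e => huH (e ▸ hmH)
            have dvm : v ≠ m := fun e => hvH (e ▸ hmH)
            have dwm : w ≠ m := fun e => hwH (e ▸ hmH)
            obtain ⟨⟨dmp, dmq, dmk, dmj⟩, amp2, amq2, amk2, nmj2⟩ := (HH m).mp hmH
            rcases CL m hmH dmx dmy dmz with ⟨c1,c2,c3,c4⟩|⟨c1,c2,c3,c4⟩|⟨c1,c2,c3,c4⟩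
            · exact absHouse h2 (amp2.symm) (azp.symm) (axp.symm) U7 U5 c1 (fun hsy => U1 hsy.symm) hdm c3 (fun hsy => nxz hsy.symm) (dup.symm) dum dmz (dxz.symm)
            · exact absHouse h2 (amp2.symm) (axp.symm) (azp.symm) U5 U7 c3 (fun hsy => U1 hsy.symm) hdm c1 nxz (dup.symm) dum dmx dxz
            · by_cases B50 : G.Adj m v
              · exact absHouse h2 (U5.symm) axp (V5.symm) amp2 B50 auv (fun hsy => c1 hsy.symm) (fun hsy => hdm hsy.symm) U1 (fun hsy => V1 hsy.symm) (dmx.symm) (dum.symm) dup (dvp.symm)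
              · exact absP32 h1 (amp2.symm) amk2 auv npk (fun hsy => U1 hsy.symm) (fun hsy => V1 hsy.symm) (fun hsy => hdm hsy.symm) B50 (fun hsy => U3 hsy.symm) (fun hsy => V3 hsy.symm) dpk (dup.symm) (dvp.symm) (dum.symm) (dvm.symm) (duk.symm) (dvk.symm)
          · exact absP32 h1 (auv.symm) auw apq Bvw V1 V2 U1 U2 W1 W2 dvw dvp dvq dup duq dwp dwq
        · exact absP32 h1 (W1.symm) (auw.symm) akj (fun hsy => U1 hsy.symm) npk npj W3 W4 U3 U4 (dup.symm) dpk dpj dwk dwj duk duj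
        · exact absP32 h1 (W1.symm) (auw.symm) akj (fun hsy => U1 hsy.symm) npk npj W3 W4 U3 U4 (dup.symm) dpk dpj dwk dwj duk duj
        · exact absP32 h1 (W3.symm) (auw.symm) apq (fun hsy => U3 hsy.symm) (fun hsy => npk hsy.symm) (fun hsy => nqk hsy.symm) W1 W2 U1 U2 (duk.symm) (dpk.symm) (dqk.symm) dwp dwq dup duq
      · exact absP32 h1 (V1.symm) (auv.symm) akj (fun hsy => U1 hsy.symm) npk npj V3 V4 U3 U4 (dup.symm) dpk dpj dvk dvj duk duj
      · exact absP32 h1 (V1.symm) (auv.symm) akj (fun hsy => U1 hsy.symm) npk npj V3 V4 U3 U4 (dup.symm) dpk dpj dvk dvj duk duj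
      · exact absP32 h1 (V3.symm) (auv.symm) apq (fun hsy => U3 hsy.symm) (fun hsy => npk hsy.symm) (fun hsy => nqk hsy.symm) V1 V2 U1 U2 (duk.symm) (dpk.symm) (dqk.symm) dvp dvq dup duq
    · rcases TP v hvH hnv hmv with ⟨V1,V2,V3,V4,V5,V6,V7,V8⟩|⟨V1,V2,V3,V4,V5,V6,V7,V8⟩|⟨V1,V2,V3,V4,V5,V6,V7,V8⟩|⟨V1,V2,V3,V4,V5,V6,V7,V8⟩|⟨V1,V2,V3,V4,V5,V6,V7,V8⟩|⟨V1,V2,V3,V4,V5,V6,V7,V8⟩|⟨V1,V2,V3,V4,V5,V6,V7,V8⟩|⟨V1,V2,V3,V4,V5,V6,V7,V8⟩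
      · exact absP32 h1 (U1.symm) auv akj (fun hsy => V1 hsy.symm) npk npj U3 U4 V3 V4 (dvp.symm) dpk dpj duk duj dvk dvj
      · exact absP32 h1 (U1.symm) auv akj (fun hsy => V1 hsy.symm) npk npj U3 U4 V3 V4 (dvp.symm) dpk dpj duk duj dvk dvj
      · exact absP32 h1 (U1.symm) auv akj (fun hsy => V1 hsy.symm) npk npj U3 U4 V3 V4 (dvp.symm) dpk dpj duk duj dvk dvj
      · exact absP32 h1 (U1.symm) auv akj (fun hsy => V1 hsy.symm) npk npj U3 U4 V3 V4 (dvp.symm) dpk dpj duk duj dvk dvj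
      · exact absP32 h1 (U1.symm) auv akj (fun hsy => V1 hsy.symm) npk npj U3 U4 V3 V4 (dvp.symm) dpk dpj duk duj dvk dvj
      · exact absP32 h1 (akj.symm) (axk.symm) auv (fun hsy => nxj hsy.symm) (fun hsy => U4 hsy.symm) (fun hsy => V4 hsy.symm) (fun hsy => U3 hsy.symm) (fun hsy => V3 hsy.symm) (fun hsy => U5 hsy.symm) (fun hsy => V5 hsy.symm) (dxj.symm) (duj.symm) (dvj.symm) (duk.symm) (dvk.symm) (dux.symm) (dvx.symm)
      · rcases TP w hwH hnw hmw with ⟨W1,W2,W3,W4,W5,W6,W7,W8⟩|⟨W1,W2,W3,W4,W5,W6,W7,W8⟩|⟨W1,W2,W3,W4,W5,W6,W7,W8⟩|⟨W1,W2,W3,W4,W5,W6,W7,W8⟩|⟨W1,W2,W3,W4,W5,W6,W7,W8⟩|⟨W1,W2,W3,W4,W5,W6,W7,W8⟩|⟨W1,W2,W3,W4,W5,W6,W7,W8⟩|⟨W1,W2,W3,W4,W5,W6,W7,W8⟩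
        · exact absP32 h1 (U1.symm) auw akj (fun hsy => W1 hsy.symm) npk npj U3 U4 W3 W4 (dwp.symm) dpk dpj duk duj dwk dwj
        · exact absP32 h1 (U1.symm) auw akj (fun hsy => W1 hsy.symm) npk npj U3 U4 W3 W4 (dwp.symm) dpk dpj duk duj dwk dwj
        · exact absP32 h1 (U1.symm) auw akj (fun hsy => W1 hsy.symm) npk npj U3 U4 W3 W4 (dwp.symm) dpk dpj duk duj dwk dwj
        · exact absP32 h1 (U1.symm) auw akj (fun hsy => W1 hsy.symm) npk npj U3 U4 W3 W4 (dwp.symm) dpk dpj duk duj dwk dwj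
        · exact absP32 h1 (U1.symm) auw akj (fun hsy => W1 hsy.symm) npk npj U3 U4 W3 W4 (dwp.symm) dpk dpj duk duj dwk dwj
        · exact absP32 h1 (akj.symm) (axk.symm) auw (fun hsy => nxj hsy.symm) (fun hsy => U4 hsy.symm) (fun hsy => W4 hsy.symm) (fun hsy => U3 hsy.symm) (fun hsy => W3 hsy.symm) (fun hsy => U5 hsy.symm) (fun hsy => W5 hsy.symm) (dxj.symm) (duj.symm) (dwj.symm) (duk.symm) (dwk.symm) (dux.symm) (dwx.symm)
        · by_cases Bvw : G.Adj v w
          · obtain ⟨m, hmH, hdm⟩ := hmv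
            have dmx : m ≠ x := fun e => hdm (by rw [e]; exact V5)
            have dmy : m ≠ y := fun e => hdm (by rw [e]; exact V6)
            have dmz : m ≠ z := fun e => hdm (by rw [e]; exact V7)
            have dmt : m ≠ t := fun e => htH (e ▸ hmH)
            have dum : u ≠ m := fun e => huH (e ▸ hmH)
            have dvm : v ≠ m := fun e => hvH (e ▸ hmH)
            have dwm : w ≠ m := fun e => hwH (e ▸ hmH)
            obtain ⟨⟨dmp, dmq, dmk, dmj⟩, amp2, amq2, amk2, nmj2⟩ := (HH m).mp hmH
            rcases CL m hmH dmx dmy dmz with ⟨c1,c2,c3,c4⟩|⟨c1,c2,c3,c4⟩|⟨c1,c2,c3,c4⟩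
            · exact absHouse h2 (V1.symm) (amp2.symm) (azp.symm) (amk2.symm) (azk.symm) V7 npk (fun hsy => V3 hsy.symm) hdm c3 dpk (dvk.symm) dvm dmz
            · exact absHouse h2 (V1.symm) (amp2.symm) (axp.symm) (amk2.symm) (axk.symm) V5 npk (fun hsy => V3 hsy.symm) hdm c1 dpk (dvk.symm) dvm dmx
            · exact absHouse h2 (V1.symm) (amp2.symm) (axp.symm) (amk2.symm) (axk.symm) V5 npk (fun hsy => V3 hsy.symm) hdm c1 dpk (dvk.symm) dvm dmx
          · exact absP32 h1 V1 (W1.symm) akj Bvw V3 V4 npk npj W3 W4 dvw dvk dvj dpk dpj dwk dwj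
        · exact absHouse h2 axk axp (W5.symm) U1 auw (W3.symm) (fun hsy => U5 hsy.symm) U3 (fun hsy => npk hsy.symm) (fun hsy => W1 hsy.symm) (dux.symm) duk (dpk.symm) (dwp.symm)
      · exact absHouse h2 axk axp (V5.symm) U1 auv (V3.symm) (fun hsy => U5 hsy.symm) U3 (fun hsy => npk hsy.symm) (fun hsy => V1 hsy.symm) (dux.symm) duk (dpk.symm) (dvp.symm)
    · rcases TP v hvH hnv hmv with ⟨V1,V2,V3,V4,V5,V6,V7,V8⟩|⟨V1,V2,V3,V4,V5,V6,V7,V8⟩|⟨V1,V2,V3,V4,V5,V6,V7,V8⟩|⟨V1,V2,V3,V4,V5,V6,V7,V8⟩|⟨V1,V2,V3,V4,V5,V6,V7,V8⟩|⟨V1,V2,V3,V4,V5,V6,V7,V8⟩|⟨V1,V2,V3,V4,V5,V6,V7,V8⟩|⟨V1,V2,V3,V4,V5,V6,V7,V8⟩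
      · exact absP32 h1 (U1.symm) auv akj (fun hsy => V1 hsy.symm) npk npj U3 U4 V3 V4 (dvp.symm) dpk dpj duk duj dvk dvj
      · exact absP32 h1 (U1.symm) auv akj (fun hsy => V1 hsy.symm) npk npj U3 U4 V3 V4 (dvp.symm) dpk dpj duk duj dvk dvj
      · exact absP32 h1 (U1.symm) auv akj (fun hsy => V1 hsy.symm) npk npj U3 U4 V3 V4 (dvp.symm) dpk dpj duk duj dvk dvj
      · exact absP32 h1 (U1.symm) auv akj (fun hsy => V1 hsy.symm) npk npj U3 U4 V3 V4 (dvp.symm) dpk dpj duk duj dvk dvj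
      · exact absP32 h1 (U1.symm) auv akj (fun hsy => V1 hsy.symm) npk npj U3 U4 V3 V4 (dvp.symm) dpk dpj duk duj dvk dvj
      · rcases TP w hwH hnw hmw with ⟨W1,W2,W3,W4,W5,W6,W7,W8⟩|⟨W1,W2,W3,W4,W5,W6,W7,W8⟩|⟨W1,W2,W3,W4,W5,W6,W7,W8⟩|⟨W1,W2,W3,W4,W5,W6,W7,W8⟩|⟨W1,W2,W3,W4,W5,W6,W7,W8⟩|⟨W1,W2,W3,W4,W5,W6,W7,W8⟩|⟨W1,W2,W3,W4,W5,W6,W7,W8⟩|⟨W1,W2,W3,W4,W5,W6,W7,W8⟩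
        · exact absP32 h1 (U1.symm) auw akj (fun hsy => W1 hsy.symm) npk npj U3 U4 W3 W4 (dwp.symm) dpk dpj duk duj dwk dwj
        · exact absP32 h1 (U1.symm) auw akj (fun hsy => W1 hsy.symm) npk npj U3 U4 W3 W4 (dwp.symm) dpk dpj duk duj dwk dwj
        · exact absP32 h1 (U1.symm) auw akj (fun hsy => W1 hsy.symm) npk npj U3 U4 W3 W4 (dwp.symm) dpk dpj duk duj dwk dwj
        · exact absP32 h1 (U1.symm) auw akj (fun hsy => W1 hsy.symm) npk npj U3 U4 W3 W4 (dwp.symm) dpk dpj duk duj dwk dwj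
        · exact absP32 h1 (U1.symm) auw akj (fun hsy => W1 hsy.symm) npk npj U3 U4 W3 W4 (dwp.symm) dpk dpj duk duj dwk dwj
        · by_cases Bvw : G.Adj v w
          · exact absP32 h1 (akj.symm) (axk.symm) Bvw (fun hsy => nxj hsy.symm) (fun hsy => V4 hsy.symm) (fun hsy => W4 hsy.symm) (fun hsy => V3 hsy.symm) (fun hsy => W3 hsy.symm) (fun hsy => V5 hsy.symm) (fun hsy => W5 hsy.symm) (dxj.symm) (dvj.symm) (dwj.symm) (dvk.symm) (dwk.symm) (dvx.symm) (dwx.symm)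
          · exact absP32 h1 V1 (W1.symm) akj Bvw V3 V4 npk npj W3 W4 dvw dvk dvj dpk dpj dwk dwj
        · by_cases Bvw : G.Adj v w
          · obtain ⟨m, hmH, hdm⟩ := hmu
            have dmx : m ≠ x := fun e => hdm (by rw [e]; exact U5)
            have dmy : m ≠ y := fun e => hdm (by rw [e]; exact U6)
            have dmz : m ≠ z := fun e => hdm (by rw [e]; exact U7)
            have dmt : m ≠ t := fun e => htH (e ▸ hmH)
            have dum : u ≠ m := fun e => huH (e ▸ hmH)
            have dvm : v ≠ m := fun e => hvH (e ▸ hmH)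
            have dwm : w ≠ m := fun e => hwH (e ▸ hmH)
            obtain ⟨⟨dmp, dmq, dmk, dmj⟩, amp2, amq2, amk2, nmj2⟩ := (HH m).mp hmH
            rcases CL m hmH dmx dmy dmz with ⟨c1,c2,c3,c4⟩|⟨c1,c2,c3,c4⟩|⟨c1,c2,c3,c4⟩
            · exact absHouse h2 (U1.symm) (amp2.symm) (azp.symm) (amk2.symm) (azk.symm) U7 npk (fun hsy => U3 hsy.symm) hdm c3 dpk (duk.symm) dum dmz
            · exact absHouse h2 (U1.symm) (amp2.symm) (axp.symm) (amk2.symm) (axk.symm) U5 npk (fun hsy => U3 hsy.symm) hdm c1 dpk (duk.symm) dum dmx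
            · exact absHouse h2 (U1.symm) (amp2.symm) (axp.symm) (amk2.symm) (axk.symm) U5 npk (fun hsy => U3 hsy.symm) hdm c1 dpk (duk.symm) dum dmx
          · exact absP32 h1 V1 (W1.symm) akj Bvw V3 V4 npk npj W3 W4 dvw dvk dvj dpk dpj dwk dwj
        · exact absHouse h2 atp atj (U8.symm) W4 (auw.symm) (U1.symm) (fun hsy => W8 hsy.symm) W1 npj (fun hsy => U4 hsy.symm) (dwt.symm) dwp dpj (duj.symm)
      · rcases TP w hwH hnw hmw with ⟨W1,W2,W3,W4,W5,W6,W7,W8⟩|⟨W1,W2,W3,W4,W5,W6,W7,W8⟩|⟨W1,W2,W3,W4,W5,W6,W7,W8⟩|⟨W1,W2,W3,W4,W5,W6,W7,W8⟩|⟨W1,W2,W3,W4,W5,W6,W7,W8⟩|⟨W1,W2,W3,W4,W5,W6,W7,W8⟩|⟨W1,W2,W3,W4,W5,W6,W7,W8⟩|⟨W1,W2,W3,W4,W5,W6,W7,W8⟩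
        · exact absP32 h1 (U1.symm) auw akj (fun hsy => W1 hsy.symm) npk npj U3 U4 W3 W4 (dwp.symm) dpk dpj duk duj dwk dwj
        · exact absP32 h1 (U1.symm) auw akj (fun hsy => W1 hsy.symm) npk npj U3 U4 W3 W4 (dwp.symm) dpk dpj duk duj dwk dwj
        · exact absP32 h1 (U1.symm) auw akj (fun hsy => W1 hsy.symm) npk npj U3 U4 W3 W4 (dwp.symm) dpk dpj duk duj dwk dwj
        · exact absP32 h1 (U1.symm) auw akj (fun hsy => W1 hsy.symm) npk npj U3 U4 W3 W4 (dwp.symm) dpk dpj duk duj dwk dwj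
        · exact absP32 h1 (U1.symm) auw akj (fun hsy => W1 hsy.symm) npk npj U3 U4 W3 W4 (dwp.symm) dpk dpj duk duj dwk dwj
        · by_cases Bvw : G.Adj v w
          · obtain ⟨m, hmH, hdm⟩ := hmu
            have dmx : m ≠ x := fun e => hdm (by rw [e]; exact U5)
            have dmy : m ≠ y := fun e => hdm (by rw [e]; exact U6)
            have dmz : m ≠ z := fun e => hdm (by rw [e]; exact U7)
            have dmt : m ≠ t := fun e => htH (e ▸ hmH)
            have dum : u ≠ m := fun e => huH (e ▸ hmH)
            have dvm : v ≠ m := fun e => hvH (e ▸ hmH)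
            have dwm : w ≠ m := fun e => hwH (e ▸ hmH)
            obtain ⟨⟨dmp, dmq, dmk, dmj⟩, amp2, amq2, amk2, nmj2⟩ := (HH m).mp hmH
            rcases CL m hmH dmx dmy dmz with ⟨c1,c2,c3,c4⟩|⟨c1,c2,c3,c4⟩|⟨c1,c2,c3,c4⟩
            · exact absHouse h2 (U1.symm) (amp2.symm) (azp.symm) (amk2.symm) (azk.symm) U7 npk (fun hsy => U3 hsy.symm) hdm c3 dpk (duk.symm) dum dmz
            · exact absHouse h2 (U1.symm) (amp2.symm) (axp.symm) (amk2.symm) (axk.symm) U5 npk (fun hsy => U3 hsy.symm) hdm c1 dpk (duk.symm) dum dmx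
            · exact absHouse h2 (U1.symm) (amp2.symm) (axp.symm) (amk2.symm) (axk.symm) U5 npk (fun hsy => U3 hsy.symm) hdm c1 dpk (duk.symm) dum dmx
          · exact absP32 h1 V1 (W1.symm) akj Bvw V3 V4 npk npj W3 W4 dvw dvk dvj dpk dpj dwk dwj
        · by_cases Bvw : G.Adj v w
          · obtain ⟨m, hmH, hdm⟩ := hmu
            have dmx : m ≠ x := fun e => hdm (by rw [e]; exact U5)
            have dmy : m ≠ y := fun e => hdm (by rw [e]; exact U6)
            have dmz : m ≠ z := fun e => hdm (by rw [e]; exact U7)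
            have dmt : m ≠ t := fun e => htH (e ▸ hmH)
            have dum : u ≠ m := fun e => huH (e ▸ hmH)
            have dvm : v ≠ m := fun e => hvH (e ▸ hmH)
            have dwm : w ≠ m := fun e => hwH (e ▸ hmH)
            obtain ⟨⟨dmp, dmq, dmk, dmj⟩, amp2, amq2, amk2, nmj2⟩ := (HH m).mp hmH
            rcases CL m hmH dmx dmy dmz with ⟨c1,c2,c3,c4⟩|⟨c1,c2,c3,c4⟩|⟨c1,c2,c3,c4⟩
            · exact absHouse h2 (U1.symm) (amp2.symm) (azp.symm) (amk2.symm) (azk.symm) U7 npk (fun hsy => U3 hsy.symm) hdm c3 dpk (duk.symm) dum dmz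
            · exact absHouse h2 (U1.symm) (amp2.symm) (axp.symm) (amk2.symm) (axk.symm) U5 npk (fun hsy => U3 hsy.symm) hdm c1 dpk (duk.symm) dum dmx
            · exact absHouse h2 (U1.symm) (amp2.symm) (axp.symm) (amk2.symm) (axk.symm) U5 npk (fun hsy => U3 hsy.symm) hdm c1 dpk (duk.symm) dum dmx
          · exact absP32 h1 V1 (W1.symm) akj Bvw V3 V4 npk npj W3 W4 dvw dvk dvj dpk dpj dwk dwj
        · exact absHouse h2 atp atj (U8.symm) W4 (auw.symm) (U1.symm) (fun hsy => W8 hsy.symm) W1 npj (fun hsy => U4 hsy.symm) (dwt.symm) dwp dpj (duj.symm)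
      · exact absHouse h2 atp atj (U8.symm) V4 (auv.symm) (U1.symm) (fun hsy => V8 hsy.symm) V1 npj (fun hsy => U4 hsy.symm) (dvt.symm) dvp dpj (duj.symm)
    · rcases TP v hvH hnv hmv with ⟨V1,V2,V3,V4,V5,V6,V7,V8⟩|⟨V1,V2,V3,V4,V5,V6,V7,V8⟩|⟨V1,V2,V3,V4,V5,V6,V7,V8⟩|⟨V1,V2,V3,V4,V5,V6,V7,V8⟩|⟨V1,V2,V3,V4,V5,V6,V7,V8⟩|⟨V1,V2,V3,V4,V5,V6,V7,V8⟩|⟨V1,V2,V3,V4,V5,V6,V7,V8⟩|⟨V1,V2,V3,V4,V5,V6,V7,V8⟩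
      · exact absP32 h1 (U3.symm) auv apq (fun hsy => V3 hsy.symm) (fun hsy => npk hsy.symm) (fun hsy => nqk hsy.symm) U1 U2 V1 V2 (dvk.symm) (dpk.symm) (dqk.symm) dup duq dvp dvq
      · exact absP32 h1 (U3.symm) auv apq (fun hsy => V3 hsy.symm) (fun hsy => npk hsy.symm) (fun hsy => nqk hsy.symm) U1 U2 V1 V2 (dvk.symm) (dpk.symm) (dqk.symm) dup duq dvp dvq
      · exact absP32 h1 (U3.symm) auv apq (fun hsy => V3 hsy.symm) (fun hsy => npk hsy.symm) (fun hsy => nqk hsy.symm) U1 U2 V1 V2 (dvk.symm) (dpk.symm) (dqk.symm) dup duq dvp dvq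
      · exact absP32 h1 (U3.symm) auv apq (fun hsy => V3 hsy.symm) (fun hsy => npk hsy.symm) (fun hsy => nqk hsy.symm) U1 U2 V1 V2 (dvk.symm) (dpk.symm) (dqk.symm) dup duq dvp dvq
      · exact absP32 h1 (U3.symm) auv apq (fun hsy => V3 hsy.symm) (fun hsy => npk hsy.symm) (fun hsy => nqk hsy.symm) U1 U2 V1 V2 (dvk.symm) (dpk.symm) (dqk.symm) dup duq dvp dvq
      · exact absHouse h2 axk axp (U5.symm) V1 (auv.symm) (U3.symm) (fun hsy => V5 hsy.symm) V3 (fun hsy => npk hsy.symm) (fun hsy => U1 hsy.symm) (dvx.symm) dvk (dpk.symm) (dup.symm)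
      · exact absHouse h2 atp atj (V8.symm) U4 auv (V1.symm) (fun hsy => U8 hsy.symm) U1 npj (fun hsy => V4 hsy.symm) (dut.symm) dup dpj (dvj.symm)
      · rcases TP w hwH hnw hmw with ⟨W1,W2,W3,W4,W5,W6,W7,W8⟩|⟨W1,W2,W3,W4,W5,W6,W7,W8⟩|⟨W1,W2,W3,W4,W5,W6,W7,W8⟩|⟨W1,W2,W3,W4,W5,W6,W7,W8⟩|⟨W1,W2,W3,W4,W5,W6,W7,W8⟩|⟨W1,W2,W3,W4,W5,W6,W7,W8⟩|⟨W1,W2,W3,W4,W5,W6,W7,W8⟩|⟨W1,W2,W3,W4,W5,W6,W7,W8⟩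
        · exact absP32 h1 (U3.symm) auw apq (fun hsy => W3 hsy.symm) (fun hsy => npk hsy.symm) (fun hsy => nqk hsy.symm) U1 U2 W1 W2 (dwk.symm) (dpk.symm) (dqk.symm) dup duq dwp dwq
        · exact absP32 h1 (U3.symm) auw apq (fun hsy => W3 hsy.symm) (fun hsy => npk hsy.symm) (fun hsy => nqk hsy.symm) U1 U2 W1 W2 (dwk.symm) (dpk.symm) (dqk.symm) dup duq dwp dwq
        · exact absP32 h1 (U3.symm) auw apq (fun hsy => W3 hsy.symm) (fun hsy => npk hsy.symm) (fun hsy => nqk hsy.symm) U1 U2 W1 W2 (dwk.symm) (dpk.symm) (dqk.symm) dup duq dwp dwq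
        · exact absP32 h1 (U3.symm) auw apq (fun hsy => W3 hsy.symm) (fun hsy => npk hsy.symm) (fun hsy => nqk hsy.symm) U1 U2 W1 W2 (dwk.symm) (dpk.symm) (dqk.symm) dup duq dwp dwq
        · exact absP32 h1 (U3.symm) auw apq (fun hsy => W3 hsy.symm) (fun hsy => npk hsy.symm) (fun hsy => nqk hsy.symm) U1 U2 W1 W2 (dwk.symm) (dpk.symm) (dqk.symm) dup duq dwp dwq
        · exact absHouse h2 axk axp (U5.symm) W1 (auw.symm) (U3.symm) (fun hsy => W5 hsy.symm) W3 (fun hsy => npk hsy.symm) (fun hsy => U1 hsy.symm) (dwx.symm) dwk (dpk.symm) (dup.symm)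
        · exact absHouse h2 atp atj (W8.symm) U4 auw (W1.symm) (fun hsy => U8 hsy.symm) U1 npj (fun hsy => W4 hsy.symm) (dut.symm) dup dpj (dwj.symm)
        · by_cases Bvw : G.Adj v w
          · obtain ⟨m, hmH, hdm⟩ := hmu
            have dmx : m ≠ x := fun e => hdm (by rw [e]; exact U5)
            have dmy : m ≠ y := fun e => hdm (by rw [e]; exact U6)
            have dmz : m ≠ z := fun e => hdm (by rw [e]; exact U7)
            have dmt : m ≠ t := fun e => htH (e ▸ hmH)
            have dum : u ≠ m := fun e => huH (e ▸ hmH)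
            have dvm : v ≠ m := fun e => hvH (e ▸ hmH)
            have dwm : w ≠ m := fun e => hwH (e ▸ hmH)
            obtain ⟨⟨dmp, dmq, dmk, dmj⟩, amp2, amq2, amk2, nmj2⟩ := (HH m).mp hmH
            rcases CL m hmH dmx dmy dmz with ⟨c1,c2,c3,c4⟩|⟨c1,c2,c3,c4⟩|⟨c1,c2,c3,c4⟩
            · exact absHouse h2 (U3.symm) (amk2.symm) (azk.symm) (amp2.symm) (azp.symm) U7 (fun hsy => npk hsy.symm) (fun hsy => U1 hsy.symm) hdm c3 (dpk.symm) (dup.symm) dum dmz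
            · exact absHouse h2 (U3.symm) (amk2.symm) (axk.symm) (amp2.symm) (axp.symm) U5 (fun hsy => npk hsy.symm) (fun hsy => U1 hsy.symm) hdm c1 (dpk.symm) (dup.symm) dum dmx
            · exact absHouse h2 (U3.symm) (amk2.symm) (axk.symm) (amp2.symm) (axp.symm) U5 (fun hsy => npk hsy.symm) (fun hsy => U1 hsy.symm) hdm c1 (dpk.symm) (dup.symm) dum dmx
          · exact absP32 h1 V3 (W3.symm) apq Bvw V1 V2 (fun hsy => npk hsy.symm) (fun hsy => nqk hsy.symm) W1 W2 dvw dvp dvq (dpk.symm) (dqk.symm) dwp dwq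

  have HP3 : ∀ a, a ∈ H → ∀ b, b ∈ H → ∀ c, c ∈ H →
      G.Adj a b → G.Adj b c → a ≠ c → G.Adj a c := by
    have cls : ∀ h, h ∈ H →
        (h = x ∨ h = y ∨ (h ≠ x ∧ h ≠ y ∧ h ≠ z ∧ G.Adj h x ∧ G.Adj h y ∧ ¬G.Adj h z)) ∨
        (h = z ∨ (h ≠ x ∧ h ≠ y ∧ h ≠ z ∧ ¬G.Adj h x ∧ ¬G.Adj h y ∧ G.Adj h z)) ∨
        ((h ≠ x ∧ h ≠ y ∧ h ≠ z) ∧ (¬G.Adj h x ∧ ¬G.Adj h y ∧ ¬G.Adj h z)) := by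
      intro h hh
      by_cases ex : h = x
      · exact Or.inl (Or.inl ex)
      by_cases ey : h = y
      · exact Or.inl (Or.inr (Or.inl ey))
      by_cases ez : h = z
      · exact Or.inr (Or.inl (Or.inl ez))
      rcases CL h hh ex ey ez with ⟨c1, c2, c3, -⟩|⟨c1, c2, c3, -⟩|⟨c1, c2, c3, -⟩
      · exact Or.inl (Or.inr (Or.inr ⟨ex, ey, ez, c1, c2, c3⟩))
      · exact Or.inr (Or.inl (Or.inr ⟨ex, ey, ez, c1, c2, c3⟩))
      · exact Or.inr (Or.inr ⟨⟨ex, ey, ez⟩, c1, c2, c3⟩)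
    have edgeXZ : ∀ a b, a ∈ H → b ∈ H →
        (a = x ∨ a = y ∨ (a ≠ x ∧ a ≠ y ∧ a ≠ z ∧ G.Adj a x ∧ G.Adj a y ∧ ¬G.Adj a z)) →
        (b = z ∨ (b ≠ x ∧ b ≠ y ∧ b ≠ z ∧ ¬G.Adj b x ∧ ¬G.Adj b y ∧ G.Adj b z)) →
        ¬G.Adj a b := by
      intro a b ha hb ca cb
      rcases ca with rfl|rfl|⟨e1, e2, e3, c1, c2, c3⟩
      · rcases cb with rfl|⟨f1, f2, f3, g1, g2, g3⟩
        · exact nxz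
        · exact fun h => g1 h.symm
      · rcases cb with rfl|⟨f1, f2, f3, g1, g2, g3⟩
        · exact nyz
        · exact fun h => g2 h.symm
      · rcases cb with rfl|⟨f1, f2, f3, g1, g2, g3⟩
        · exact c3
        · exact fun h => E3 a b ha hb c1 c2 c3 g1 g2 g3 e1 e2 e3 f1 f2 f3 h
    have edgeXW : ∀ a b, a ∈ H → b ∈ H →
        (a = x ∨ a = y ∨ (a ≠ x ∧ a ≠ y ∧ a ≠ z ∧ G.Adj a x ∧ G.Adj a y ∧ ¬G.Adj a z)) →
        ((b ≠ x ∧ b ≠ y ∧ b ≠ z) ∧ (¬G.Adj b x ∧ ¬G.Adj b y ∧ ¬G.Adj b z)) →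
        ¬G.Adj a b := by
      intro a b ha hb ca ⟨⟨f1, f2, f3⟩, g1, g2, g3⟩
      rcases ca with rfl|rfl|⟨e1, e2, e3, c1, c2, c3⟩
      · exact fun h => g1 h.symm
      · exact fun h => g2 h.symm
      · exact fun h => E4 a b ha hb c1 c2 c3 g1 g2 g3 e1 e2 e3 f1 f2 f3 h
    have edgeZW : ∀ a b, a ∈ H → b ∈ H →
        (a = z ∨ (a ≠ x ∧ a ≠ y ∧ a ≠ z ∧ ¬G.Adj a x ∧ ¬G.Adj a y ∧ G.Adj a z)) →
        ((b ≠ x ∧ b ≠ y ∧ b ≠ z) ∧ (¬G.Adj b x ∧ ¬G.Adj b y ∧ ¬G.Adj b z)) →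
        ¬G.Adj a b := by
      intro a b ha hb ca ⟨⟨f1, f2, f3⟩, g1, g2, g3⟩
      rcases ca with rfl|⟨e1, e2, e3, c1, c2, c3⟩
      · exact fun h => g3 h.symm
      · exact fun h => E5 a b ha hb c1 c2 c3 g1 g2 g3 e1 e2 e3 f1 f2 f3 h
    have cliqueX : ∀ a b, a ∈ H → b ∈ H →
        (a = x ∨ a = y ∨ (a ≠ x ∧ a ≠ y ∧ a ≠ z ∧ G.Adj a x ∧ G.Adj a y ∧ ¬G.Adj a z)) →
        (b = x ∨ b = y ∨ (b ≠ x ∧ b ≠ y ∧ b ≠ z ∧ G.Adj b x ∧ G.Adj b y ∧ ¬G.Adj b z)) →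
        a ≠ b → G.Adj a b := by
      intro a b ha hb ca cb dab
      rcases ca with rfl|rfl|⟨e1, e2, e3, c1, c2, c3⟩
      · rcases cb with rfl|rfl|⟨f1, f2, f3, g1, g2, g3⟩
        · exact absurd rfl dab
        · exact axy
        · exact g1.symm
      · rcases cb with rfl|rfl|⟨f1, f2, f3, g1, g2, g3⟩
        · exact axy.symm
        · exact absurd rfl dab
        · exact g2.symm
      · rcases cb with rfl|rfl|⟨f1, f2, f3, g1, g2, g3⟩
        · exact c1
        · exact c2
        · exact Classical.byContradiction
            (fun hn => E1 a b ha hb c1 c2 c3 g1 g2 g3 e1 e2 e3 f1 f2 f3 dab hn)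
    have cliqueZ : ∀ a b, a ∈ H → b ∈ H →
        (a = z ∨ (a ≠ x ∧ a ≠ y ∧ a ≠ z ∧ ¬G.Adj a x ∧ ¬G.Adj a y ∧ G.Adj a z)) →
        (b = z ∨ (b ≠ x ∧ b ≠ y ∧ b ≠ z ∧ ¬G.Adj b x ∧ ¬G.Adj b y ∧ G.Adj b z)) →
        a ≠ b → G.Adj a b := by
      intro a b ha hb ca cb dab
      rcases ca with rfl|⟨e1, e2, e3, c1, c2, c3⟩
      · rcases cb with rfl|⟨f1, f2, f3, g1, g2, g3⟩
        · exact absurd rfl dab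
        · exact g3.symm
      · rcases cb with rfl|⟨f1, f2, f3, g1, g2, g3⟩
        · exact c3
        · exact Classical.byContradiction
            (fun hn => E2 a b ha hb c1 c2 c3 g1 g2 g3 e1 e2 e3 f1 f2 f3 dab hn)
    intro a haH b hbH c hcH hab hbc dac
    by_contra Hnac
    rcases cls a haH with CA|CA|CA
    · rcases cls b hbH with CB|CB|CB
      · rcases cls c hcH with CC|CC|CC
        · exact Hnac (cliqueX a c haH hcH CA CC dac)
        · exact (edgeXZ b c hbH hcH CB CC) hbc
        · exact (edgeXW b c hbH hcH CB CC) hbc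
      · exact (edgeXZ a b haH hbH CA CB) hab
      · exact (edgeXW a b haH hbH CA CB) hab
    · rcases cls b hbH with CB|CB|CB
      · exact (edgeXZ b a hbH haH CB CA) hab.symm
      · rcases cls c hcH with CC|CC|CC
        · exact (edgeXZ c b hcH hbH CC CB) hbc.symm
        · exact Hnac (cliqueZ a c haH hcH CA CC dac)
        · exact (edgeZW b c hbH hcH CB CC) hbc
      · exact (edgeZW a b haH hbH CA CB) hab
    · rcases cls b hbH with CB|CB|CB
      · exact (edgeXW b a hbH haH CB CA) hab.symm
      · exact (edgeZW b a hbH haH CB CA) hab.symm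
      · rcases cls c hcH with CC|CC|CC
        · exact (edgeXW c b hcH hbH CC CB) hbc.symm
        · exact (edgeZW c b hcH hbH CC CB) hbc.symm
        · exact K0 a b c haH hbH hcH CA.2.1 CA.2.2.1 CA.2.2.2 CB.2.1 CB.2.2.1 CB.2.2.2
            CC.2.1 CC.2.2.1 CC.2.2.2 CA.1.1 CA.1.2.1 CA.1.2.2 CB.1.1 CB.1.2.1 CB.1.2.2
            CC.1.1 CC.1.2.1 CC.1.2.2 hab hbc dac Hnac
  haveI : Fintype ↥H := Fintype.ofFinite _
  haveI : Fintype ↥{u | u ∉ H ∧ ∀ h ∈ H, ¬ G.Adj u h} := Fintype.ofFinite _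
  haveI : Fintype ↥{u | u ∉ H ∧ (∃ h ∈ H, G.Adj u h) ∧ ∃ h ∈ H, ¬ G.Adj u h} := Fintype.ofFinite _
  have hedge : (G.induce H).Adj ⟨x, hxH⟩ ⟨y, hyH⟩ := axy
  refine ⟨?_, ?_, ?_⟩
  · exact cluster_chrom (G.induce H) (fun a b c hab hbc hne =>
      HP3 a.1 a.2 b.1 b.2 c.1 c.2 hab hbc (fun e => hne (Subtype.ext e)))
  · have hIcol : (G.induce {u | u ∉ H ∧ ∀ h ∈ H, ¬ G.Adj u h}).Colorable 2 := by
      refine ⟨Coloring.mk (fun u => if (u : V) = j then (0 : Fin 2) else 1) ?_⟩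
      intro a b hab hcc
      have hadj : G.Adj (a : V) (b : V) := hab
      by_cases haj : (a : V) = j
      · by_cases hbj : (b : V) = j
        · rw [haj, hbj] at hadj; exact G.loopless.irrefl _ hadj
        · rw [if_pos haj, if_neg hbj] at hcc; exact absurd hcc (by decide)
      · by_cases hbj : (b : V) = j
        · rw [if_neg haj, if_pos hbj] at hcc; exact absurd hcc (by decide)
        · exact IEDGE (a : V) (b : V) a.2.1 b.2.1 (a.2.2 x hxH) (a.2.2 y hyH) (a.2.2 z hzH)
            (b.2.2 x hxH) (b.2.2 y hyH) (b.2.2 z hzH) haj hbj hadj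
    calc (G.induce {u | u ∉ H ∧ ∀ h ∈ H, ¬ G.Adj u h}).chromaticNumber
        ≤ ((2 : ℕ) : ℕ∞) := hIcol.chromaticNumber_le
      _ = (2 : ℕ∞) := by norm_cast
      _ ≤ (G.induce H).chromaticNumber := two_le_chrom _ hedge
  · have hTcol : (G.induce {u | u ∉ H ∧ (∃ h ∈ H, G.Adj u h) ∧ ∃ h ∈ H, ¬ G.Adj u h}).Colorable 2 := by
      apply matching_colorable
      intro a b c hab hac
      by_contra hbc
      exact TK (a : V) (b : V) (c : V) a.2.1 b.2.1 c.2.1 a.2.2.1 b.2.2.1 c.2.2.1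
        a.2.2.2 b.2.2.2 c.2.2.2 hab hac (fun e => hbc (Subtype.ext e))
    calc (G.induce {u | u ∉ H ∧ (∃ h ∈ H, G.Adj u h) ∧ ∃ h ∈ H, ¬ G.Adj u h}).chromaticNumber
        ≤ ((2 : ℕ) : ℕ∞) := hTcol.chromaticNumber_le
      _ = (2 : ℕ∞) := by norm_cast
      _ ≤ (G.induce H).chromaticNumber := two_le_chrom _ hedge

theorem F5_good_subgraph_of_P2uP1_in_NS_card_three
    {V : Type*} [Fintype V] (G : SimpleGraph V)
    (h1 : IsInducedFree G P3uP2) (h2 : IsInducedFree G house)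
    (hmin : ∀ s : Set V, s ≠ Set.univ →
      (G.induce s).chromaticNumber ≤ 2 * ((G.induce s).cliqueNum : ℕ∞))
    (hG : 2 * (G.cliqueNum : ℕ∞) < G.chromaticNumber)
    (v : Fin 4 → V) (h2k2 : Induces2K2 G v)
    (S : Finset (Fin 4)) (hS : S.card = 3)
    (hP2P1 : Nonempty (P2uP1 ↪g G.induce (NS G v S))) :
    IsGoodSubgraph G (NS G v S) := by
  classical
  obtain ⟨emb⟩ := hP2P1
  have adj01 : P2uP1.Adj 0 1 := by simp [P2uP1]
  have n02 : ¬P2uP1.Adj 0 2 := by simp [P2uP1]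
  have n12 : ¬P2uP1.Adj 1 2 := by simp [P2uP1]
  have hxy : (G.induce (NS G v S)).Adj (emb 0) (emb 1) := emb.map_rel_iff.mpr adj01
  have hxz : ¬(G.induce (NS G v S)).Adj (emb 0) (emb 2) := fun h => n02 (emb.map_rel_iff.mp h)
  have hyz : ¬(G.induce (NS G v S)).Adj (emb 1) (emb 2) := fun h => n12 (emb.map_rel_iff.mp h)
  have axy : G.Adj ((emb 0 : ↥(NS G v S)) : V) ((emb 1 : ↥(NS G v S)) : V) := hxy
  have nxz : ¬G.Adj ((emb 0 : ↥(NS G v S)) : V) ((emb 2 : ↥(NS G v S)) : V) := fun h => hxz h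
  have nyz : ¬G.Adj ((emb 1 : ↥(NS G v S)) : V) ((emb 2 : ↥(NS G v S)) : V) := fun h => hyz h
  have dxz : ((emb 0 : ↥(NS G v S)) : V) ≠ ((emb 2 : ↥(NS G v S)) : V) :=
    Subtype.coe_ne_coe.mpr (emb.injective.ne (by decide))
  have dyz : ((emb 1 : ↥(NS G v S)) : V) ≠ ((emb 2 : ↥(NS G v S)) : V) :=
    Subtype.coe_ne_coe.mpr (emb.injective.ne (by decide))
  have hcompl : Sᶜ.card = 1 := by
    rw [Finset.card_compl, hS]
    rfl
  obtain ⟨i0, hi0⟩ := Finset.card_eq_one.mp hcompl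
  have hmem : ∀ m : Fin 4, m ∈ S ↔ m ≠ i0 := by
    intro m
    constructor
    · intro hm he
      have : m ∈ Sᶜ := by rw [hi0]; exact Finset.mem_singleton.mpr he
      exact (Finset.mem_compl.mp this) hm
    · intro hne
      by_contra hm
      have : m ∈ Sᶜ := Finset.mem_compl.mpr hm
      rw [hi0] at this
      exact hne (Finset.mem_singleton.mp this)
  obtain ⟨hinj, a01, a23, n02', n03', n12', n13'⟩ := h2k2
  fin_cases i0
  · exact master G h1 h2 hmin hG (v 2) (v 3) (v 1) (v 0)
      a23 a01.symm (fun h => n12' h.symm) (fun h => n02' h.symm)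
      (fun h => n13' h.symm) (fun h => n03' h.symm)
      (hinj.ne (by decide)) (hinj.ne (by decide)) (hinj.ne (by decide)) (hinj.ne (by decide))
      (NS G v S)
      (NS_mem_char G v S 0 hmem 2 3 1 (by decide) (by decide) (by decide) (by decide))
      _ _ _ (emb 0).2 (emb 1).2 (emb 2).2 axy nxz nyz dxz dyz
  · exact master G h1 h2 hmin hG (v 2) (v 3) (v 0) (v 1)
      a23 a01 (fun h => n02' h.symm) (fun h => n12' h.symm)
      (fun h => n03' h.symm) (fun h => n13' h.symm)
      (hinj.ne (by decide)) (hinj.ne (by decide)) (hinj.ne (by decide)) (hinj.ne (by decide))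
      (NS G v S)
      (NS_mem_char G v S 1 hmem 2 3 0 (by decide) (by decide) (by decide) (by decide))
      _ _ _ (emb 0).2 (emb 1).2 (emb 2).2 axy nxz nyz dxz dyz
  · exact master G h1 h2 hmin hG (v 0) (v 1) (v 3) (v 2)
      a01 a23.symm n03' n02' n13' n12'
      (hinj.ne (by decide)) (hinj.ne (by decide)) (hinj.ne (by decide)) (hinj.ne (by decide))
      (NS G v S)
      (NS_mem_char G v S 2 hmem 0 1 3 (by decide) (by decide) (by decide) (by decide))
      _ _ _ (emb 0).2 (emb 1).2 (emb 2).2 axy nxz nyz dxz dyz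
  · exact master G h1 h2 hmin hG (v 0) (v 1) (v 2) (v 3)
      a01 a23 n02' n03' n12' n13'
      (hinj.ne (by decide)) (hinj.ne (by decide)) (hinj.ne (by decide)) (hinj.ne (by decide))
      (NS G v S)
      (NS_mem_char G v S 3 hmem 0 1 2 (by decide) (by decide) (by decide) (by decide))
      _ _ _ (emb 0).2 (emb 1).2 (emb 2).2 axy nxz nyz dxz dyz
end

section
/- Let G be a (P3 ∪ P2, house)-free graph such that every proper induced subgraph G' of G satisfies χ(G') ≤ 2ω(G'), while χ(G) > 2ω(G), and suppose v1, v2, v3, v4 induce a 2K2 in G with edges v1v2 and v3v4. Let A be the set of vertices outside {v1,v2,v3,v4} with no neighbor in {v1,v2,v3,v4}. If N_{{1,2,3,4}} is a clique and A ≠ ∅, then A is complete to N_{{1,2,3,4}}: every vertex of A is adjacent to every vertex of N_{{1,2,3,4}}. -/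
open SimpleGraph

lemma no_P3uP2 {V : Type*} {G : SimpleGraph V} (h1 : IsInducedFree G P3uP2) {x y z p q : V}
    (dxz : x ≠ z) (dxp : x ≠ p) (dxq : x ≠ q) (dyp : y ≠ p) (dyq : y ≠ q)
    (dzp : z ≠ p) (dzq : z ≠ q)
    (axy : G.Adj x y) (ayz : G.Adj y z) (apq : G.Adj p q)
    (nxz : ¬ G.Adj x z) (nxp : ¬ G.Adj x p) (nxq : ¬ G.Adj x q)
    (nyp : ¬ G.Adj y p) (nyq : ¬ G.Adj y q)
    (nzp : ¬ G.Adj z p) (nzq : ¬ G.Adj z q) : False := by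
  have dxy : x ≠ y := axy.ne
  have dyz : y ≠ z := ayz.ne
  have dpq : p ≠ q := apq.ne
  have nzx : ¬ G.Adj z x := fun h => nxz h.symm
  have npx : ¬ G.Adj p x := fun h => nxp h.symm
  have nqx : ¬ G.Adj q x := fun h => nxq h.symm
  have npy : ¬ G.Adj p y := fun h => nyp h.symm
  have nqy : ¬ G.Adj q y := fun h => nyq h.symm
  have npz : ¬ G.Adj p z := fun h => nzp h.symm
  have nqz : ¬ G.Adj q z := fun h => nzq h.symm
  refine h1.false (⟨⟨![x, y, z, p, q], ?_⟩, ?_⟩ : P3uP2 ↪g G)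
  · intro i j hij
    fin_cases i <;> fin_cases j <;>
      simp_all [dxy, dxz, dxp, dxq, dyz, dyp, dyq, dzp, dzq, dpq,
        dxy.symm, dxz.symm, dxp.symm, dxq.symm, dyz.symm, dyp.symm, dyq.symm,
        dzp.symm, dzq.symm, dpq.symm]
  · intro i j
    change G.Adj (![x, y, z, p, q] i) (![x, y, z, p, q] j) ↔ _
    fin_cases i <;> fin_cases j <;>
      simp [P3uP2, axy, ayz, apq, axy.symm, ayz.symm, apq.symm,
        nxz, nxp, nxq, nyp, nyq, nzp, nzq, nzx, npx, nqx, npy, nqy, npz, nqz,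
        G.irrefl]

lemma no_house {V : Type*} {G : SimpleGraph V} (h2 : IsInducedFree G house)
    {x1 y1 t b n : V}
    (dx1y1 : x1 ≠ y1) (dtb : t ≠ b)
    (ax1t : G.Adj x1 t) (ax1b : G.Adj x1 b) (ax1n : G.Adj x1 n)
    (ay1b : G.Adj y1 b) (ay1n : G.Adj y1 n) (atn : G.Adj t n)
    (nx1y1 : ¬ G.Adj x1 y1) (ny1t : ¬ G.Adj y1 t) (ntb : ¬ G.Adj t b)
    (nbn : ¬ G.Adj b n) : False := by
  have d02 : x1 ≠ t := ax1t.ne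
  have d03 : x1 ≠ b := ax1b.ne
  have d04 : x1 ≠ n := ax1n.ne
  have d12 : y1 ≠ t := by intro h; exact nx1y1 (by rw [h]; exact ax1t)
  have d13 : y1 ≠ b := ay1b.ne
  have d14 : y1 ≠ n := ay1n.ne
  have d24 : t ≠ n := atn.ne
  have d34 : b ≠ n := by intro h; exact ntb (by rw [h]; exact atn)
  have nty1 : ¬ G.Adj t y1 := fun h => ny1t h.symm
  have nbt : ¬ G.Adj b t := fun h => ntb h.symm
  have nnb : ¬ G.Adj n b := fun h => nbn h.symm
  have ny1x1 : ¬ G.Adj y1 x1 := fun h => nx1y1 h.symm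
  refine h2.false (⟨⟨![x1, y1, t, b, n], ?_⟩, ?_⟩ : house ↪g G)
  · intro i j hij
    fin_cases i <;> fin_cases j <;>
      simp_all [dx1y1, d02, d03, d04, d12, d13, d14, dtb, d24, d34,
        dx1y1.symm, d02.symm, d03.symm, d04.symm, d12.symm, d13.symm, d14.symm,
        dtb.symm, d24.symm, d34.symm]
  · intro i j
    change G.Adj (![x1, y1, t, b, n] i) (![x1, y1, t, b, n] j) ↔ _
    fin_cases i <;> fin_cases j <;>
      simp [house, pathGraph_adj, ax1t, ax1b, ax1n, ay1b, ay1n, atn,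
        ax1t.symm, ax1b.symm, ax1n.symm, ay1b.symm, ay1n.symm, atn.symm,
        nx1y1, ny1t, ntb, nbn, nty1, nbt, nnb, ny1x1, G.irrefl,
        dx1y1, d02, d03, d04, d12, d13, d14, dtb, d24, d34,
        dx1y1.symm, d02.symm, d03.symm, d04.symm, d12.symm, d13.symm, d14.symm,
        dtb.symm, d24.symm, d34.symm] <;> decide

/-- If `b` is adjacent to `x1` and `y1` (where `x1 x2` and `y1` come from a 2K₂-like
configuration with a common neighbour `n` not adjacent to `b`), then `b` is also adjacent
to `x2`, the partner of `x1`. -/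
lemma partner_adj {V : Type*} {G : SimpleGraph V} (h2 : IsInducedFree G house)
    {x1 x2 y1 b n : V}
    (dx1y1 : x1 ≠ y1) (dx2b : x2 ≠ b)
    (ax1x2 : G.Adj x1 x2) (ax1b : G.Adj x1 b) (ax1n : G.Adj x1 n)
    (ay1b : G.Adj y1 b) (ay1n : G.Adj y1 n) (ax2n : G.Adj x2 n)
    (nx1y1 : ¬ G.Adj x1 y1) (ny1x2 : ¬ G.Adj y1 x2) (nbn : ¬ G.Adj b n) :
    G.Adj x2 b := by
  by_contra hc
  exact no_house h2 dx1y1 dx2b ax1x2 ax1b ax1n ay1b ay1n ax2n nx1y1 ny1x2 hc nbn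

theorem A_complete_to_N1234
    {V : Type*} [Fintype V] (G : SimpleGraph V)
    (h1 : IsInducedFree G P3uP2) (h2 : IsInducedFree G house)
    (hmin : ∀ s : Set V, s ≠ Set.univ →
      (G.induce s).chromaticNumber ≤ 2 * ((G.induce s).cliqueNum : ℕ∞))
    (hG : 2 * (G.cliqueNum : ℕ∞) < G.chromaticNumber)
    (v : Fin 4 → V) (h2k2 : Induces2K2 G v)
    (hcl : G.IsClique (NS G v {0, 1, 2, 3}))
    (hA : (NS G v ∅).Nonempty) :
    CompleteTo G (NS G v ∅) (NS G v {0, 1, 2, 3}) := by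
  classical
  obtain ⟨hinj, e01, e23, n02, n03, n12, n13⟩ := h2k2
  have hmem4 : ∀ i : Fin 4, i ∈ ({0, 1, 2, 3} : Finset (Fin 4)) := by decide
  intro a ha n hn
  by_contra han
  have hav : ∀ i, ¬ G.Adj a (v i) := fun i h => by
    have := (ha.2 i).1 h; simp at this
  have hnv : ∀ i, G.Adj n (v i) := fun i => (hn.2 i).2 (hmem4 i)
  have hanne : a ≠ n := by
    intro h; exact hav 0 (h ▸ hnv 0)
  -- Step 1: every neighbour of a is a neighbour of n
  have hsub : ∀ b, G.Adj a b → G.Adj n b := by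
    intro b hb
    by_contra hbn
    have hnbn : ¬ G.Adj b n := fun h => hbn h.symm
    have hbv : ∀ i, b ≠ v i := fun i h => hav i (h ▸ hb)
    have hbnn : b ≠ n := by
      intro h; exact han (h ▸ hb)
    -- a is nonadjacent to everything in sight
    have nav : ∀ i, ¬ G.Adj (v i) a := fun i h => hav i h.symm
    have hnan : ¬ G.Adj n a := fun h => han h.symm
    -- case analysis on the neighbours of b among the vᵢ
    by_cases h01 : G.Adj b (v 0) ∨ G.Adj b (v 1)
    · by_cases h23 : G.Adj b (v 2) ∨ G.Adj b (v 3)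
      · -- b has a neighbour in each pair; we show b is adjacent to all four vᵢ
        have key : G.Adj b (v 0) ∧ G.Adj b (v 1) ∧ G.Adj b (v 2) ∧ G.Adj b (v 3) := by
          rcases h01 with p0 | p1 <;> rcases h23 with p2 | p3
          · have p1 := (partner_adj h2 (hinj.ne (by decide : (0:Fin 4) ≠ 2))
              ((hbv 1).symm) e01 p0.symm (hnv 0).symm p2.symm (hnv 2).symm (hnv 1).symm
              n02 (fun h => n12 h.symm) hnbn).symm
            have p3 := (partner_adj h2 (hinj.ne (by decide : (2:Fin 4) ≠ 0))
              ((hbv 3).symm) e23 p2.symm (hnv 2).symm p0.symm (hnv 0).symm (hnv 3).symm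
              (fun h => n02 h.symm) n03 hnbn).symm
            exact ⟨p0, p1, p2, p3⟩
          · have p1 := (partner_adj h2 (hinj.ne (by decide : (0:Fin 4) ≠ 3))
              ((hbv 1).symm) e01 p0.symm (hnv 0).symm p3.symm (hnv 3).symm (hnv 1).symm
              n03 (fun h => n13 h.symm) hnbn).symm
            have p2 := (partner_adj h2 (hinj.ne (by decide : (3:Fin 4) ≠ 0))
              ((hbv 2).symm) e23.symm p3.symm (hnv 3).symm p0.symm (hnv 0).symm (hnv 2).symm
              (fun h => n03 h.symm) n02 hnbn).symm
            exact ⟨p0, p1, p2, p3⟩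
          · have p0 := (partner_adj h2 (hinj.ne (by decide : (1:Fin 4) ≠ 2))
              ((hbv 0).symm) e01.symm p1.symm (hnv 1).symm p2.symm (hnv 2).symm (hnv 0).symm
              n12 (fun h => n02 h.symm) hnbn).symm
            have p3 := (partner_adj h2 (hinj.ne (by decide : (2:Fin 4) ≠ 1))
              ((hbv 3).symm) e23 p2.symm (hnv 2).symm p1.symm (hnv 1).symm (hnv 3).symm
              (fun h => n12 h.symm) n13 hnbn).symm
            exact ⟨p0, p1, p2, p3⟩
          · have p0 := (partner_adj h2 (hinj.ne (by decide : (1:Fin 4) ≠ 3))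
              ((hbv 0).symm) e01.symm p1.symm (hnv 1).symm p3.symm (hnv 3).symm (hnv 0).symm
              n13 (fun h => n03 h.symm) hnbn).symm
            have p2 := (partner_adj h2 (hinj.ne (by decide : (3:Fin 4) ≠ 1))
              ((hbv 2).symm) e23.symm p3.symm (hnv 3).symm p1.symm (hnv 1).symm (hnv 2).symm
              (fun h => n13 h.symm) n12 hnbn).symm
            exact ⟨p0, p1, p2, p3⟩
        -- then b ∈ N_{1,2,3,4}, a clique containing n, contradiction with ¬ Adj b n
        have hbmem : b ∈ NS G v {0, 1, 2, 3} := by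
          refine ⟨hbv, fun i => ⟨fun _ => hmem4 i, fun _ => ?_⟩⟩
          fin_cases i
          · exact key.1
          · exact key.2.1
          · exact key.2.2.1
          · exact key.2.2.2
        exact hnbn (hcl hbmem hn hbnn)
      · -- b has a neighbour in {v0, v1} but none in {v2, v3}
        push_neg at h23
        obtain ⟨nb2, nb3⟩ := h23
        rcases h01 with p0 | p1
        · exact no_P3uP2 h1 (ha.1 0) (ha.1 2) (ha.1 3) (hbv 2) (hbv 3)
            (hinj.ne (by decide : (0:Fin 4) ≠ 2)) (hinj.ne (by decide : (0:Fin 4) ≠ 3))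
            hb p0 e23 (hav 0) (hav 2) (hav 3) nb2 nb3 n02 n03
        · exact no_P3uP2 h1 (ha.1 1) (ha.1 2) (ha.1 3) (hbv 2) (hbv 3)
            (hinj.ne (by decide : (1:Fin 4) ≠ 2)) (hinj.ne (by decide : (1:Fin 4) ≠ 3))
            hb p1 e23 (hav 1) (hav 2) (hav 3) nb2 nb3 n12 n13
    · push_neg at h01
      obtain ⟨nb0, nb1⟩ := h01
      by_cases h23 : G.Adj b (v 2) ∨ G.Adj b (v 3)
      · rcases h23 with p2 | p3
        · exact no_P3uP2 h1 (ha.1 2) (ha.1 0) (ha.1 1) (hbv 0) (hbv 1)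
            (hinj.ne (by decide : (2:Fin 4) ≠ 0)) (hinj.ne (by decide : (2:Fin 4) ≠ 1))
            hb p2 e01 (hav 2) (hav 0) (hav 1) nb0 nb1
            (fun h => n02 h.symm) (fun h => n12 h.symm)
        · exact no_P3uP2 h1 (ha.1 3) (ha.1 0) (ha.1 1) (hbv 0) (hbv 1)
            (hinj.ne (by decide : (3:Fin 4) ≠ 0)) (hinj.ne (by decide : (3:Fin 4) ≠ 1))
            hb p3 e01 (hav 3) (hav 0) (hav 1) nb0 nb1
            (fun h => n03 h.symm) (fun h => n13 h.symm)
      · push_neg at h23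
        obtain ⟨nb2, nb3⟩ := h23
        -- b has no neighbour among the vᵢ: P3 = v0-n-v2, P2 = a-b
        exact no_P3uP2 h1 (hinj.ne (by decide : (0:Fin 4) ≠ 2))
          (Ne.symm (ha.1 0)) (Ne.symm (hbv 0)) (Ne.symm hanne) (Ne.symm hbnn)
          (Ne.symm (ha.1 2)) (Ne.symm (hbv 2))
          (hnv 0).symm (hnv 2) hb n02 (nav 0) (fun h => nb0 h.symm)
          hnan hbn (nav 2) (fun h => nb2 h.symm)
  -- Step 2: colour G - a and extend the colouring to a via the colour of n
  set s : Set V := {x | x ≠ a} with hs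
  have hsne : s ≠ Set.univ := by
    intro h
    have : a ∈ s := h ▸ Set.mem_univ a
    exact this rfl
  have hns : n ∈ s := hanne.symm
  -- clique number monotonicity
  have hω : (G.induce s).cliqueNum ≤ G.cliqueNum := by
    obtain ⟨t, ht⟩ := (G.induce s).exists_isNClique_cliqueNum
    have hc : G.IsClique ((t.map (Function.Embedding.subtype _)) : Finset V) := by
      intro x hx y hy hxy
      simp only [Finset.coe_map, Set.mem_image, Finset.mem_coe] at hx hy
      obtain ⟨x', hx', rfl⟩ := hx
      obtain ⟨y', hy', rfl⟩ := hy
      exact ht.1 hx' hy' (fun h => hxy (congrArg _ h))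
    calc (G.induce s).cliqueNum = (t.map (Function.Embedding.subtype _)).card := by
          rw [Finset.card_map, ht.2]
      _ ≤ G.cliqueNum := IsClique.card_le_cliqueNum (tc := hc)
  have hχs := hmin s hsne
  have hχs' : (G.induce s).chromaticNumber ≤ ((2 * G.cliqueNum : ℕ) : ℕ∞) := by
    refine le_trans hχs ?_
    push_cast
    exact mul_le_mul_right (by exact_mod_cast hω) 2
  have hcol : (G.induce s).Colorable (2 * G.cliqueNum) :=
    chromaticNumber_le_iff_colorable.mp hχs'
  obtain ⟨c⟩ := hcol
  have hGcol : G.Colorable (2 * G.cliqueNum) := by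
    refine ⟨Coloring.mk (fun x => if h : x = a then c ⟨n, hns⟩ else c ⟨x, h⟩) ?_⟩
    intro x y hxy
    by_cases hx : x = a
    · have hy : y ≠ a := by
        intro h
        rw [hx, h] at hxy
        exact G.loopless.irrefl a hxy
      simp only [dif_pos hx, dif_neg hy]
      have hny : G.Adj n y := hsub y (by rw [hx] at hxy; exact hxy)
      exact c.valid (show (G.induce s).Adj ⟨n, hns⟩ ⟨y, hy⟩ from hny)
    · by_cases hy : y = a
      · simp only [dif_neg hx, dif_pos hy]
        have hnx : G.Adj n x := hsub x (by rw [hy] at hxy; exact hxy.symm)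
        exact fun h => (c.valid (show (G.induce s).Adj ⟨n, hns⟩ ⟨x, hx⟩ from hnx)) h.symm
      · simp only [dif_neg hx, dif_neg hy]
        exact c.valid (show (G.induce s).Adj ⟨x, hx⟩ ⟨y, hy⟩ from hxy)
  have hfin : G.chromaticNumber ≤ ((2 * G.cliqueNum : ℕ) : ℕ∞) :=
    hGcol.chromaticNumber_le
  have : G.chromaticNumber ≤ 2 * (G.cliqueNum : ℕ∞) := by
    refine le_trans hfin ?_
    push_cast
    exact le_refl _
  exact absurd (lt_of_lt_of_le hG this) (lt_irrefl _)
end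

section
/- Let G be a (P3 ∪ P2, house)-free graph such that every proper induced subgraph G' of G satisfies χ(G') ≤ 2ω(G'), while χ(G) > 2ω(G), and suppose v1, v2, v3, v4 induce a 2K2 in G with edges v1v2 and v3v4. Let A be the set of vertices outside {v1,v2,v3,v4} with no neighbor in {v1,v2,v3,v4}. If N_{{1,2,3,4}} is a clique and A ≠ ∅, then N_{{1,2}} is almost complete to N_{{1,2,3,4}} and N_{{3,4}} is almost complete to N_{{1,2,3,4}}: in each of N_{{1,2}} and N_{{3,4}}, at most one vertex fails to be adjacent to all vertices of N_{{1,2,3,4}}. -/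
open SimpleGraph

lemma P3uP2_adj (i j : Fin 5) : P3uP2.Adj i j ↔
    ((i,j) = (0,1) ∨ (i,j) = (1,0) ∨ (i,j) = (1,2) ∨ (i,j) = (2,1) ∨ (i,j) = (3,4) ∨ (i,j) = (4,3)) := by
  simp only [P3uP2, fromEdgeSet_adj, Set.mem_insert_iff, Set.mem_singleton_iff, Sym2.eq, Sym2.rel_iff', Prod.mk.injEq, Prod.swap_prod_mk]
  fin_cases i <;> fin_cases j <;> decide

lemma house_adj (i j : Fin 5) : house.Adj i j ↔
    ¬(i = j ∨ (i,j) = (0,1) ∨ (i,j) = (1,0) ∨ (i,j) = (1,2) ∨ (i,j) = (2,1) ∨ (i,j) = (2,3) ∨ (i,j) = (3,2) ∨ (i,j) = (3,4) ∨ (i,j) = (4,3)) := by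
  simp only [house, compl_adj, pathGraph_adj]
  fin_cases i <;> fin_cases j <;> decide

lemma no_P3P2 {V : Type*} {G : SimpleGraph V} (h1 : IsInducedFree G P3uP2)
    (p1 p2 p3 p4 p5 : V)
    (e12 : G.Adj p1 p2) (e23 : G.Adj p2 p3) (e45 : G.Adj p4 p5)
    (n13 : ¬ G.Adj p1 p3) (n14 : ¬ G.Adj p1 p4) (n15 : ¬ G.Adj p1 p5)
    (n24 : ¬ G.Adj p2 p4) (n25 : ¬ G.Adj p2 p5)
    (n34 : ¬ G.Adj p3 p4) (n35 : ¬ G.Adj p3 p5)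
    (d13 : p1 ≠ p3) (d14 : p1 ≠ p4) (d15 : p1 ≠ p5)
    (d24 : p2 ≠ p4) (d25 : p2 ≠ p5) (d34 : p3 ≠ p4) (d35 : p3 ≠ p5) : False := by
  have d12 := e12.ne
  have d23 := e23.ne
  have d45 := e45.ne
  let f : Fin 5 → V := ![p1, p2, p3, p4, p5]
  have hinj : Function.Injective f := by
    intro i j hij
    fin_cases i <;> fin_cases j <;> simp_all [f]
  refine h1.elim ⟨⟨f, hinj⟩, @fun i j => ?_⟩
  rw [P3uP2_adj]
  have e21 := e12.symm; have e32 := e23.symm; have e54 := e45.symm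
  have n31 : ¬ G.Adj p3 p1 := fun h => n13 h.symm
  have n41 : ¬ G.Adj p4 p1 := fun h => n14 h.symm
  have n51 : ¬ G.Adj p5 p1 := fun h => n15 h.symm
  have n42 : ¬ G.Adj p4 p2 := fun h => n24 h.symm
  have n52 : ¬ G.Adj p5 p2 := fun h => n25 h.symm
  have n43 : ¬ G.Adj p4 p3 := fun h => n34 h.symm
  have n53 : ¬ G.Adj p5 p3 := fun h => n35 h.symm
  fin_cases i <;> fin_cases j <;> simp_all [f, G.irrefl] <;> decide

lemma no_house_s18 {V : Type*} {G : SimpleGraph V} (h2 : IsInducedFree G house)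
    (c1 c2 c3 c4 r : V)
    (e12 : G.Adj c1 c2) (e23 : G.Adj c2 c3) (e34 : G.Adj c3 c4) (e41 : G.Adj c4 c1)
    (er3 : G.Adj r c3) (er4 : G.Adj r c4)
    (n13 : ¬ G.Adj c1 c3) (n24 : ¬ G.Adj c2 c4)
    (nr1 : ¬ G.Adj r c1) (nr2 : ¬ G.Adj r c2)
    (d13 : c1 ≠ c3) (d24 : c2 ≠ c4) (dr1 : r ≠ c1) (dr2 : r ≠ c2) : False := by
  have d12 := e12.ne
  have d23 := e23.ne
  have d34 := e34.ne
  have d41 := e41.ne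
  have dr3 := er3.ne
  have dr4 := er4.ne
  let f : Fin 5 → V := ![c3, c1, r, c2, c4]
  have hinj : Function.Injective f := by
    intro i j hij
    fin_cases i <;> fin_cases j <;> simp_all [f]
  refine h2.elim ⟨⟨f, hinj⟩, @fun i j => ?_⟩
  rw [house_adj]
  have e21 := e12.symm; have e32 := e23.symm; have e43 := e34.symm; have e14 := e41.symm
  have e3r := er3.symm; have e4r := er4.symm
  have n31 : ¬ G.Adj c3 c1 := fun h => n13 h.symm
  have n42 : ¬ G.Adj c4 c2 := fun h => n24 h.symm
  have n1r : ¬ G.Adj c1 r := fun h => nr1 h.symm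
  have n2r : ¬ G.Adj c2 r := fun h => nr2 h.symm
  fin_cases i <;> fin_cases j <;> simp_all [f, G.irrefl] <;> decide

lemma dominated {V : Type*} [Fintype V] (G : SimpleGraph V)
    (hmin : ∀ s : Set V, s ≠ Set.univ →
      (G.induce s).chromaticNumber ≤ 2 * ((G.induce s).cliqueNum : ℕ∞))
    (hG : 2 * (G.cliqueNum : ℕ∞) < G.chromaticNumber)
    (a u : V) (hne : a ≠ u) (hnadj : ¬ G.Adj a u)
    (hdom : ∀ t, G.Adj a t → G.Adj u t) : False := by
  classical
  set s : Set V := {a}ᶜ with hs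
  have hsne : s ≠ Set.univ := by
    intro h
    have : a ∈ s := h ▸ Set.mem_univ a
    simp [hs] at this
  have hus : u ∈ s := by simp [hs, hne.symm]
  have hchrom : G.chromaticNumber ≤ (G.induce s).chromaticNumber := by
    apply chromaticNumber_le_of_forall_imp
    intro n ⟨C⟩
    refine ⟨Coloring.mk (fun w => if h : w = a then C ⟨u, hus⟩ else C ⟨w, by simp [hs, h]⟩) ?_⟩
    intro w w' hadj heq
    change (if h : w = a then C ⟨u, hus⟩ else C ⟨w, by simp [hs, h]⟩) = (if h : w' = a then C ⟨u, hus⟩ else C ⟨w', by simp [hs, h]⟩) at heq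
    by_cases hw : w = a <;> by_cases hw' : w' = a
    · exact G.irrefl (hw ▸ hw' ▸ hadj)
    · subst hw
      rw [dif_pos rfl, dif_neg hw'] at heq
      have hadj' : G.Adj u w' := hdom w' hadj
      have : (G.induce s).Adj ⟨u, hus⟩ ⟨w', by simp [hs, hw']⟩ := by
        simpa using hadj'
      exact C.valid this heq
    · subst hw'
      rw [dif_neg hw, dif_pos rfl] at heq
      have hadj' : G.Adj u w := hdom w hadj.symm
      have : (G.induce s).Adj ⟨w, by simp [hs, hw]⟩ ⟨u, hus⟩ := by
        simpa using hadj'.symm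
      exact C.valid this heq
    · rw [dif_neg hw, dif_neg hw'] at heq
      have : (G.induce s).Adj ⟨w, by simp [hs, hw]⟩ ⟨w', by simp [hs, hw']⟩ := by
        simpa using hadj
      exact C.valid this heq
  have hclq : (G.induce s).cliqueNum ≤ G.cliqueNum := by
    rw [cliqueNum, cliqueNum]
    apply csSup_le
    · exact ⟨0, ∅, by simp [isNClique_empty]⟩
    · rintro n ⟨t, ht⟩
      apply le_csSup
      · exact ⟨Fintype.card V, by
          rintro y ⟨s', hs'⟩
          rw [← hs'.2]
          exact Finset.card_le_univ s'⟩
      · refine ⟨t.map (Function.Embedding.subtype _), ?_, by simp [ht.2]⟩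
        intro x hx y hy hxy
        simp only [Finset.coe_map, Set.mem_image, Finset.mem_coe] at hx hy
        obtain ⟨x', hx', rfl⟩ := hx
        obtain ⟨y', hy', rfl⟩ := hy
        have := ht.1 hx' hy' (by simpa [Subtype.ext_iff] using hxy)
        simpa using this
  have := calc G.chromaticNumber ≤ (G.induce s).chromaticNumber := hchrom
    _ ≤ 2 * ((G.induce s).cliqueNum : ℕ∞) := hmin s hsne
    _ ≤ 2 * (G.cliqueNum : ℕ∞) := mul_le_mul_right (Nat.cast_le.mpr hclq) 2
  exact absurd hG (not_lt.mpr this)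

lemma aux_part {V : Type*} [Fintype V] (G : SimpleGraph V)
    (h1 : IsInducedFree G P3uP2) (h2 : IsInducedFree G house)
    (hmin : ∀ s : Set V, s ≠ Set.univ →
      (G.induce s).chromaticNumber ≤ 2 * ((G.induce s).cliqueNum : ℕ∞))
    (hG : 2 * (G.cliqueNum : ℕ∞) < G.chromaticNumber)
    (v : Fin 4 → V) (h2k2 : Induces2K2 G v)
    (hcl : G.IsClique (NS G v {0, 1, 2, 3}))
    (hA : (NS G v ∅).Nonempty) :
    {x ∈ NS G v {0, 1} | ¬ ∀ u ∈ NS G v {0, 1, 2, 3}, G.Adj x u}.Subsingleton := by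
  classical
  obtain ⟨hinj, e01, e23, n02, n03, n12, n13⟩ := h2k2
  obtain ⟨a, hav, haS⟩ := hA
  have haN : ∀ i, ¬ G.Adj a (v i) := fun i h => by simpa using (haS i).mp h
  have dv : ∀ i j : Fin 4, i ≠ j → v i ≠ v j := fun i j h e => h (hinj e)
  have n20 : ¬ G.Adj (v 2) (v 0) := fun h => n02 h.symm
  have n30 : ¬ G.Adj (v 3) (v 0) := fun h => n03 h.symm
  have n21 : ¬ G.Adj (v 2) (v 1) := fun h => n12 h.symm
  have n31 : ¬ G.Adj (v 3) (v 1) := fun h => n13 h.symm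
  -- membership unfolding for N12
  have mem12 : ∀ x, x ∈ NS G v {0,1} →
      G.Adj x (v 0) ∧ G.Adj x (v 1) ∧ ¬ G.Adj x (v 2) ∧ ¬ G.Adj x (v 3) ∧ ∀ i, x ≠ v i :=
    fun x hx => ⟨(hx.2 0).mpr (by decide), (hx.2 1).mpr (by decide),
      fun h => absurd ((hx.2 2).mp h) (by decide),
      fun h => absurd ((hx.2 3).mp h) (by decide), hx.1⟩
  have memU : ∀ u, u ∈ NS G v {0,1,2,3} → (∀ i, G.Adj u (v i)) ∧ ∀ i, u ≠ v i :=
    fun u hu => ⟨fun i => (hu.2 i).mpr (by fin_cases i <;> decide), hu.1⟩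
  -- N12 is a clique
  have hN12cl : ∀ x y, x ∈ NS G v {0,1} → y ∈ NS G v {0,1} → x ≠ y → G.Adj x y := by
    intro x y hx hy hne
    by_contra hnadj
    obtain ⟨hx0, hx1, hx2, hx3, hxv⟩ := mem12 x hx
    obtain ⟨hy0, hy1, hy2, hy3, hyv⟩ := mem12 y hy
    exact no_P3P2 h1 x (v 0) y (v 2) (v 3) hx0 hy0.symm e23
      hnadj hx2 hx3 n02 n03 hy2 hy3
      hne (hxv 2) (hxv 3) (dv 0 2 (by decide)) (dv 0 3 (by decide)) (hyv 2) (hyv 3)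
  -- A is anticomplete to N12
  have hAno12 : ∀ x, x ∈ NS G v {0,1} → ¬ G.Adj a x := by
    intro x hx hax
    obtain ⟨hx0, hx1, hx2, hx3, hxv⟩ := mem12 x hx
    exact no_P3P2 h1 a x (v 0) (v 2) (v 3) hax hx0 e23
      (haN 0) (haN 2) (haN 3) hx2 hx3 n02 n03
      (hav 0) (hav 2) (hav 3) (hxv 2) (hxv 3) (dv 0 2 (by decide)) (dv 0 3 (by decide))
  -- A is complete to N1234
  have hAcomp : ∀ u, u ∈ NS G v {0,1,2,3} → G.Adj a u := by
    intro u hu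
    by_contra hnadj
    obtain ⟨huadj, huv⟩ := memU u hu
    have hneau : a ≠ u := fun h => haN 0 (h ▸ huadj 0)
    apply dominated G hmin hG a u hneau hnadj
    intro t hat
    have htv : ∀ i, t ≠ v i := fun i h => haN i (h ▸ hat)
    have htu : t ≠ u := fun h => hnadj (h ▸ hat)
    by_contra hut
    have hut' : ¬ G.Adj t u := fun h => hut h.symm
    have side01 : (G.Adj t (v 0) ∨ G.Adj t (v 1)) → ¬ G.Adj t (v 2) → ¬ G.Adj t (v 3) → False := by
      rintro (hw | hw) hw2 hw3
      · exact no_P3P2 h1 a t (v 0) (v 2) (v 3) hat hw e23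
          (haN 0) (haN 2) (haN 3) hw2 hw3 n02 n03
          (hav 0) (hav 2) (hav 3) (htv 2) (htv 3) (dv 0 2 (by decide)) (dv 0 3 (by decide))
      · exact no_P3P2 h1 a t (v 1) (v 2) (v 3) hat hw e23
          (haN 1) (haN 2) (haN 3) hw2 hw3 n12 n13
          (hav 1) (hav 2) (hav 3) (htv 2) (htv 3) (dv 1 2 (by decide)) (dv 1 3 (by decide))
    have side23 : (G.Adj t (v 2) ∨ G.Adj t (v 3)) → ¬ G.Adj t (v 0) → ¬ G.Adj t (v 1) → False := by
      rintro (hw | hw) hw0 hw1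
      · exact no_P3P2 h1 a t (v 2) (v 0) (v 1) hat hw e01
          (haN 2) (haN 0) (haN 1) hw0 hw1 n20 n21
          (hav 2) (hav 0) (hav 1) (htv 0) (htv 1) (dv 2 0 (by decide)) (dv 2 1 (by decide))
      · exact no_P3P2 h1 a t (v 3) (v 0) (v 1) hat hw e01
          (haN 3) (haN 0) (haN 1) hw0 hw1 n30 n31
          (hav 3) (hav 0) (hav 1) (htv 0) (htv 1) (dv 3 0 (by decide)) (dv 3 1 (by decide))
    have mixed : ∀ i1 i2 i3 : Fin 4, G.Adj (v i2) (v i3) → ¬ G.Adj (v i1) (v i2) →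
        ¬ G.Adj (v i1) (v i3) → i1 ≠ i2 → i1 ≠ i3 →
        G.Adj t (v i1) → G.Adj t (v i2) → ¬ G.Adj t (v i3) → False := by
      intro i1 i2 i3 he hn2 hn3 hd2 hd3 ht1 ht2 hnt3
      exact no_house_s18 h2 (v i1) t (v i2) u (v i3)
        ht1.symm ht2 (huadj i2).symm (huadj i1) he.symm (huadj i3).symm
        hn2 hut'
        (fun h => hn3 h.symm) (fun h => hnt3 h.symm)
        (dv i1 i2 hd2) htu (dv i3 i1 (Ne.symm hd3)) (Ne.symm (htv i3))
    by_cases a0 : G.Adj t (v 0) <;> by_cases a1 : G.Adj t (v 1) <;>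
      by_cases a2 : G.Adj t (v 2) <;> by_cases a3 : G.Adj t (v 3)
    -- TTTT : t ∈ N1234
    · have htmem : t ∈ NS G v {0,1,2,3} :=
        ⟨htv, fun i => ⟨fun _ => by fin_cases i <;> decide, fun _ => by fin_cases i <;> assumption⟩⟩
      exact hut (hcl htmem hu htu).symm
    · exact mixed 0 2 3 e23 n02 n03 (by decide) (by decide) a0 a2 a3
    · exact mixed 0 3 2 e23.symm n03 n02 (by decide) (by decide) a0 a3 a2
    · exact side01 (Or.inl a0) a2 a3
    · exact mixed 2 0 1 e01 n20 n21 (by decide) (by decide) a2 a0 a1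
    · exact mixed 0 2 3 e23 n02 n03 (by decide) (by decide) a0 a2 a3
    · exact mixed 0 3 2 e23.symm n03 n02 (by decide) (by decide) a0 a3 a2
    · exact side01 (Or.inl a0) a2 a3
    · exact mixed 2 1 0 e01.symm n21 n20 (by decide) (by decide) a2 a1 a0
    · exact mixed 1 2 3 e23 n12 n13 (by decide) (by decide) a1 a2 a3
    · exact mixed 1 3 2 e23.symm n13 n12 (by decide) (by decide) a1 a3 a2
    · exact side01 (Or.inr a1) a2 a3
    · exact side23 (Or.inl a2) a0 a1
    · exact side23 (Or.inl a2) a0 a1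
    · exact side23 (Or.inr a3) a0 a1
    · -- t has no neighbour among the v i : P3 = v0 - u - v2, P2 = a - t
      exact no_P3P2 h1 (v 0) u (v 2) a t (huadj 0).symm (huadj 2) hat
        n02 (fun h => haN 0 h.symm) (fun h => a0 h.symm)
        (fun h => hnadj h.symm) hut
        (fun h => haN 2 h.symm) (fun h => a2 h.symm)
        (dv 0 2 (by decide)) (Ne.symm (hav 0)) (Ne.symm (htv 0))
        (Ne.symm hneau) (Ne.symm htu) (Ne.symm (hav 2)) (Ne.symm (htv 2))
  -- the common-non-neighbour configuration
  have common : ∀ x y w, x ∈ NS G v {0,1} → y ∈ NS G v {0,1} → G.Adj x y →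
      w ∈ NS G v {0,1,2,3} → ¬ G.Adj x w → ¬ G.Adj y w → False := by
    intro x y w hx hy hxy hw hxw hyw
    obtain ⟨hx0, hx1, hx2, hx3, hxv⟩ := mem12 x hx
    obtain ⟨hy0, hy1, hy2, hy3, hyv⟩ := mem12 y hy
    obtain ⟨hwadj, hwv⟩ := memU w hw
    have hax : a ≠ x := fun h => haN 0 (h ▸ hx0)
    have hay : a ≠ y := fun h => haN 0 (h ▸ hy0)
    have hwx : w ≠ x := fun h => hx2 (h ▸ hwadj 2)
    have hwy : w ≠ y := fun h => hy2 (h ▸ hwadj 2)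
    exact no_P3P2 h1 a w (v 2) x y (hAcomp w hw) (hwadj 2) hxy
      (haN 2) (hAno12 x hx) (hAno12 y hy)
      (fun h => hxw h.symm) (fun h => hyw h.symm)
      (fun h => hx2 h.symm) (fun h => hy2 h.symm)
      (hav 2) hax hay hwx hwy (Ne.symm (hxv 2)) (Ne.symm (hyv 2))
  -- conclusion
  intro x hx y hy
  by_contra hne
  obtain ⟨hxN, hxbad⟩ := hx
  obtain ⟨hyN, hybad⟩ := hy
  push_neg at hxbad hybad
  obtain ⟨u, huN, hxu⟩ := hxbad
  obtain ⟨u', huN', hyu'⟩ := hybad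
  have hxy : G.Adj x y := hN12cl x y hxN hyN hne
  obtain ⟨hx0, hx1, hx2, hx3, hxv⟩ := mem12 x hxN
  obtain ⟨hy0, hy1, hy2, hy3, hyv⟩ := mem12 y hyN
  obtain ⟨huadj, huv⟩ := memU u huN
  obtain ⟨huadj', huv'⟩ := memU u' huN'
  by_cases hyu : G.Adj y u
  · by_cases hxu' : G.Adj x u'
    · -- house on  y - x - u' - u  with roof v2
      have huu' : u ≠ u' := fun h => hyu' (h ▸ hyu)
      have hadjuu' : G.Adj u u' := hcl huN huN' huu'
      have hdyu' : y ≠ u' := fun h => hy2 (h ▸ huadj' 2)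
      have hdxu : x ≠ u := fun h => hx2 (h ▸ huadj 2)
      exact no_house_s18 h2 y x u' u (v 2)
        hxy.symm hxu' hadjuu'.symm hyu.symm (huadj' 2).symm (huadj 2).symm
        hyu' hxu
        (fun h => hy2 h.symm) (fun h => hx2 h.symm)
        hdyu' hdxu (Ne.symm (hyv 2)) (Ne.symm (hxv 2))
    · exact common x y u' hxN hyN hxy huN' hxu' hyu'
  · exact common x y u hxN hyN hxy huN hxu hyu

theorem N12_N34_almost_complete_to_N1234
    {V : Type*} [Fintype V] (G : SimpleGraph V)
    (h1 : IsInducedFree G P3uP2) (h2 : IsInducedFree G house)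
    (hmin : ∀ s : Set V, s ≠ Set.univ →
      (G.induce s).chromaticNumber ≤ 2 * ((G.induce s).cliqueNum : ℕ∞))
    (hG : 2 * (G.cliqueNum : ℕ∞) < G.chromaticNumber)
    (v : Fin 4 → V) (h2k2 : Induces2K2 G v)
    (hcl : G.IsClique (NS G v {0, 1, 2, 3}))
    (hA : (NS G v ∅).Nonempty) :
    {x ∈ NS G v {0, 1} | ¬ ∀ u ∈ NS G v {0, 1, 2, 3}, G.Adj x u}.Subsingleton ∧
    {x ∈ NS G v {2, 3} | ¬ ∀ u ∈ NS G v {0, 1, 2, 3}, G.Adj x u}.Subsingleton := by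
  obtain ⟨hinj, e01, e23, n02, n03, n12, n13⟩ := h2k2
  refine ⟨aux_part G h1 h2 hmin hG v ⟨hinj, e01, e23, n02, n03, n12, n13⟩ hcl hA, ?_⟩
  set v' : Fin 4 → V := fun i => v (![2,3,0,1] i) with hv'
  have hv'0 : v' 0 = v 2 := rfl
  have hv'1 : v' 1 = v 3 := rfl
  have hv'2 : v' 2 = v 0 := rfl
  have hv'3 : v' 3 = v 1 := rfl
  have hinj' : Function.Injective v' := by
    intro i j hij
    have := hinj hij
    fin_cases i <;> fin_cases j <;> simp_all <;> exact absurd this (by decide)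
  have h2k2' : Induces2K2 G v' := by
    refine ⟨hinj', e23, e01, fun h => n02 h.symm, fun h => n12 h.symm,
      fun h => n03 h.symm, fun h => n13 h.symm⟩
  have swapmem : ∀ (S S' : Finset (Fin 4)),
      ((2:Fin 4) ∈ S' ↔ (0:Fin 4) ∈ S) → ((3:Fin 4) ∈ S' ↔ (1:Fin 4) ∈ S) →
      ((0:Fin 4) ∈ S' ↔ (2:Fin 4) ∈ S) → ((1:Fin 4) ∈ S' ↔ (3:Fin 4) ∈ S) →
      NS G v' S' = NS G v S := by
    intro S S' c0 c1 c2 c3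
    ext u
    constructor <;> rintro ⟨h1', h2'⟩
    · refine ⟨fun i => ?_, fun i => ?_⟩ <;> fin_cases i
      · exact h1' 2
      · exact h1' 3
      · exact h1' 0
      · exact h1' 1
      · exact (h2' 2).trans c0
      · exact (h2' 3).trans c1
      · exact (h2' 0).trans c2
      · exact (h2' 1).trans c3
    · refine ⟨fun i => ?_, fun i => ?_⟩ <;> fin_cases i
      · exact h1' 2
      · exact h1' 3
      · exact h1' 0
      · exact h1' 1
      · exact (h2' 2).trans c2.symm
      · exact (h2' 3).trans c3.symm
      · exact (h2' 0).trans c0.symm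
      · exact (h2' 1).trans c1.symm
  have eA : NS G v' ∅ = NS G v ∅ :=
    swapmem ∅ ∅ (by decide) (by decide) (by decide) (by decide)
  have eU : NS G v' {0,1,2,3} = NS G v {0,1,2,3} :=
    swapmem {0,1,2,3} {0,1,2,3} (by decide) (by decide) (by decide) (by decide)
  have e12' : NS G v' {0,1} = NS G v {2,3} :=
    swapmem {2,3} {0,1} (by decide) (by decide) (by decide) (by decide)
  have := aux_part G h1 h2 hmin hG v' h2k2' (eU ▸ hcl) (eA ▸ hA)
  rw [e12', eU] at this
  exact this
end
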